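/- arXiv:2212.13081 — 8 statements merged into one kernel-verified Lean document; each statement's English description precedes it below -/
import Mathlib

section
/- In the free group F(x₁, x₂), let U_α = ⟨x₁, x₂x₁⁻¹x₂⁻¹⟩ and m_V = x₂x₁⁻¹x₂⁻¹x₁. For any a ∈ F(x₁,x₂), the intersection a⟨m_V⟩a⁻¹ ∩ U_α is nontrivial if and only if a ∈ U_α. -/
open FreeGroup

noncomputable def x₁ : FreeGroup (Fin 2) := FreeGroup.of 0
noncomputable def x₂ : FreeGroup (Fin 2) := FreeGroup.of 1

noncomputable def Uα : Subgroup (FreeGroup (Fin 2)) :=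
  Subgroup.closure {x₁, x₂ * x₁⁻¹ * x₂⁻¹}

noncomputable def mV : FreeGroup (Fin 2) := x₂ * x₁⁻¹ * x₂⁻¹ * x₁

namespace MVAux
variable {α : Type*} [DecidableEq α]

def IsRed (L : List (α × Bool)) : Prop :=
  List.Chain' (fun a b => ¬(a.1 = b.1 ∧ a.2 = !b.2)) L

theorem reduce_eq_self_of_isRed : ∀ {L : List (α × Bool)}, IsRed L → FreeGroup.reduce L = L := by
  intro L
  induction L with
  | nil => intro _; rfl
  | cons x t ih =>
    intro h
    have ht : IsRed t := h.tail
    rw [FreeGroup.reduce.cons, ih ht]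
    cases t with
    | nil => rfl
    | cons y ys =>
      have hxy : ¬(x.1 = y.1 ∧ x.2 = !y.2) := (List.isChain_cons_cons.mp h).1
      simp [hxy]

theorem isRed_reduce (L : List (α × Bool)) : IsRed (FreeGroup.reduce L) := by
  induction L with
  | nil => exact List.isChain_nil
  | cons x t ih =>
    rw [FreeGroup.reduce.cons]
    cases h : FreeGroup.reduce t with
    | nil => exact List.isChain_singleton x
    | cons y ys =>
      rw [h] at ih
      show IsRed (if x.1 = y.1 ∧ x.2 = !y.2 then ys else x :: y :: ys)
      by_cases hxy : x.1 = y.1 ∧ x.2 = !y.2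
      · rw [if_pos hxy]; exact ih.tail
      · rw [if_neg hxy]; exact List.isChain_cons_cons.mpr ⟨hxy, ih⟩

theorem isRed_toWord (x : FreeGroup α) : IsRed x.toWord := by
  rw [← FreeGroup.reduce_toWord]; exact isRed_reduce _

theorem toWord_mk_of_isRed {L : List (α × Bool)} (h : IsRed L) :
    (FreeGroup.mk L).toWord = L := by
  rw [FreeGroup.toWord_mk, reduce_eq_self_of_isRed h]

/-! The subgroup H = ⟨t₀, t₁⟩ in K = FreeGroup ℤ. -/

abbrev K := FreeGroup ℤ

def H : Subgroup K := Subgroup.closure {FreeGroup.of 0, FreeGroup.of 1}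

def Good (p : ℤ × Bool) : Prop := p.1 = 0 ∨ p.1 = 1

instance : DecidablePred Good := fun p => inferInstanceAs (Decidable (_ ∨ _))

theorem good_of_mem_H {g : K} (hg : g ∈ H) : ∀ p ∈ g.toWord, Good p := by
  induction hg using Subgroup.closure_induction with
  | mem x hx =>
    rcases hx with h | h <;> subst h <;>
      · intro p hp
        rw [FreeGroup.toWord_of] at hp
        simp at hp
        subst hp
        simp [Good]
  | one => intro p hp; rw [FreeGroup.toWord_one] at hp; cases hp
  | mul x y hx hy ihx ihy =>
    intro p hp
    have := (FreeGroup.toWord_mul_sublist x y).subset hp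
    rcases List.mem_append.mp this with h | h
    · exact ihx p h
    · exact ihy p h
  | inv x hx ihx =>
    intro p hp
    rw [FreeGroup.toWord_inv] at hp
    unfold FreeGroup.invRev at hp
    rw [List.mem_reverse] at hp
    rcases List.mem_map.mp hp with ⟨q, hq, rfl⟩
    exact ihx q hq

theorem mem_H_of_toWord : ∀ (L : List (ℤ × Bool)) (g : K), g.toWord = L →
    (∀ p ∈ L, Good p) → g ∈ H := by
  intro L
  induction L with
  | nil =>
    intro g hg _
    rw [FreeGroup.toWord_eq_nil_iff] at hg
    rw [hg]; exact one_mem _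
  | cons x t ih =>
    intro g hg hGood
    have hred : IsRed (x :: t) := hg ▸ isRed_toWord g
    have hsingle : FreeGroup.mk [x] ∈ H := by
      have hx : Good x := hGood x List.mem_cons_self
      obtain ⟨a, b⟩ := x
      have hofx : FreeGroup.of a ∈ H := by
        rcases hx with h | h <;> rw [show a = (a, b).1 from rfl, h] <;>
          exact Subgroup.subset_closure (by simp)
      cases b with
      | false =>
        have : FreeGroup.mk [(a, false)] = (FreeGroup.of a)⁻¹ := by
          rw [show FreeGroup.of a = FreeGroup.mk [(a, true)] from rfl, FreeGroup.inv_mk]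
          simp [FreeGroup.invRev]
        rw [this]; exact inv_mem hofx
      | true =>
        rw [show FreeGroup.mk [(a, true)] = FreeGroup.of a from rfl]; exact hofx
    have htail : FreeGroup.mk t ∈ H := by
      refine ih (FreeGroup.mk t) (toWord_mk_of_isRed hred.tail) ?_
      intro p hp; exact hGood p (List.mem_cons_of_mem x hp)
    have : g = FreeGroup.mk [x] * FreeGroup.mk t := by
      rw [FreeGroup.mul_mk, List.singleton_append, ← hg, FreeGroup.mk_toWord]
    rw [this]; exact mul_mem hsingle htail

theorem mem_H_iff {g : K} : g ∈ H ↔ ∀ p ∈ g.toWord, Good p :=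
  ⟨good_of_mem_H, fun h => mem_H_of_toWord g.toWord g rfl h⟩


/-! χ homomorphisms counting occurrences of a given letter. -/

def χ (r : ℤ) : K →* Multiplicative ℤ :=
  FreeGroup.lift (fun j => Multiplicative.ofAdd (if j = r then 1 else 0))

theorem χ_of (r j : ℤ) : χ r (FreeGroup.of j) = Multiplicative.ofAdd (if j = r then 1 else 0) :=
  FreeGroup.lift_apply_of

theorem χ_H {r : ℤ} (hr0 : r ≠ 0) (hr1 : r ≠ 1) {h : K} (hh : h ∈ H) : χ r h = 1 := by
  induction hh using Subgroup.closure_induction with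
  | mem x hx =>
    rcases hx with h | h <;> subst h <;> rw [χ_of] <;>
      · rw [if_neg (by omega)]; rfl
  | one => exact _root_.map_one _
  | mul x y hx hy ihx ihy => rw [_root_.map_mul, ihx, ihy, mul_one]
  | inv x hx ihx => rw [_root_.map_inv, ihx, inv_one]

theorem χ_conj (r : ℤ) (k x : K) : χ r (k⁻¹ * x * k) = χ r x := by
  rw [_root_.map_mul, _root_.map_mul, _root_.map_inv, mul_assoc, mul_comm (χ r x),
    ← mul_assoc, inv_mul_cancel, one_mul]

/-- The element `g m = t_{1-m}⁻¹ t_{-m}` in K. -/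
def gm (m : ℤ) : K := (FreeGroup.of (1 - m))⁻¹ * FreeGroup.of (-m)

theorem χ_gm_self (m : ℤ) : χ (-m) (gm m) = Multiplicative.ofAdd 1 := by
  rw [gm, _root_.map_mul, _root_.map_inv, χ_of, χ_of, if_pos rfl, if_neg (by omega)]
  simp

theorem χ_gm_other (m : ℤ) : χ (1 - m) (gm m) = Multiplicative.ofAdd (-1) := by
  rw [gm, _root_.map_mul, _root_.map_inv, χ_of, χ_of, if_pos rfl, if_neg (by omega)]
  simp [← ofAdd_neg]

theorem zpow_ofAdd_ne_one {a n : ℤ} (ha : a ≠ 0) (hn : n ≠ 0) :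
    (Multiplicative.ofAdd a) ^ n ≠ 1 := by
  intro hc
  rw [← ofAdd_zsmul, ofAdd_eq_one, smul_eq_mul] at hc
  exact hn (by rcases mul_eq_zero.mp hc with h | h; exact h; exact absurd h ha)

theorem m_eq_zero {n m : ℤ} {k : K} (hn : n ≠ 0) (h : k⁻¹ * (gm m) ^ n * k ∈ H) : m = 0 := by
  have key : ∀ r : ℤ, r ≠ 0 → r ≠ 1 → χ r (gm m) ^ n = 1 := by
    intro r h0 h1
    have := χ_H h0 h1 h
    rwa [χ_conj, map_zpow] at this
  have h1 : m = 0 ∨ m = -1 := by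
    by_contra hc
    push_neg at hc
    have := key (-m) (by omega) (by omega)
    rw [χ_gm_self] at this
    exact zpow_ofAdd_ne_one one_ne_zero hn this
  have h2 : m = 0 ∨ m = 1 := by
    by_contra hc
    push_neg at hc
    have := key (1 - m) (by omega) (by omega)
    rw [χ_gm_other] at this
    exact zpow_ofAdd_ne_one (by norm_num) hn this
  omega

theorem gm_zero_mem_H : gm 0 ∈ H := by
  rw [gm]
  exact mul_mem (inv_mem (Subgroup.subset_closure (by norm_num)))
    (Subgroup.subset_closure (by norm_num))

/-- Splitting off the first bad letter. -/
theorem split_first_bad : ∀ L : List (ℤ × Bool), (¬ ∀ p ∈ L, Good p) →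
    ∃ L₁ x L₂, L = L₁ ++ x :: L₂ ∧ (∀ p ∈ L₁, Good p) ∧ ¬ Good x := by
  intro L
  induction L with
  | nil => intro h; exact absurd (by intro p hp; cases hp) h
  | cons a t ih =>
    intro h
    by_cases ha : Good a
    · have ht : ¬ ∀ p ∈ t, Good p := by
        intro hth
        exact h (by
          intro p hp
          rcases List.mem_cons.mp hp with rfl | hp
          · exact ha
          · exact hth p hp)
      obtain ⟨L₁, x, L₂, rfl, hL₁, hx⟩ := ih ht
      refine ⟨a :: L₁, x, L₂, rfl, ?_, hx⟩
      intro p hp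
      rcases List.mem_cons.mp hp with rfl | hp
      · exact ha
      · exact hL₁ p hp
    · refine ⟨[], a, t, rfl, ?_, ha⟩
      intro p hp; cases hp

/-- Malnormality-type statement: conjugator into H lies in H. -/
theorem mem_H_of_conj {n : ℤ} (hn : n ≠ 0) {k : K} (h : k⁻¹ * (gm 0) ^ n * k ∈ H) : k ∈ H := by
  by_contra hk
  have hbad : ¬ ∀ p ∈ k.toWord, Good p := fun hc => hk (mem_H_iff.mpr hc)
  obtain ⟨L₁, x, L₂, hL, hL₁, hx⟩ := split_first_bad k.toWord hbad
  have hred : IsRed (L₁ ++ x :: L₂) := hL ▸ isRed_toWord k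
  obtain ⟨hredL₁, hredR, -⟩ := List.isChain_append.mp hred
  set u : K := FreeGroup.mk L₁ with hu
  set v : K := FreeGroup.mk (x :: L₂) with hv
  have hk_eq : k = u * v := by
    rw [hu, hv, FreeGroup.mul_mk, ← hL, FreeGroup.mk_toWord]
  have huH : u ∈ H := mem_H_of_toWord L₁ u (toWord_mk_of_isRed hredL₁) hL₁
  set h' : K := u⁻¹ * (gm 0) ^ n * u with hh'
  have hh'H : h' ∈ H := mul_mem (mul_mem (inv_mem huH) (zpow_mem gm_zero_mem_H n)) huH
  have hh'ne : h' ≠ 1 := by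
    intro hc
    have hχ : χ 0 h' = 1 := by rw [hc, _root_.map_one]
    rw [hh', χ_conj, map_zpow] at hχ
    have h00 : χ 0 (gm 0) = Multiplicative.ofAdd 1 := by
      have := χ_gm_self 0
      rwa [neg_zero] at this
    rw [h00] at hχ
    exact zpow_ofAdd_ne_one one_ne_zero hn hχ
  have hMne : h'.toWord ≠ [] := fun hc => hh'ne (FreeGroup.toWord_eq_nil_iff.mp hc)
  set M := h'.toWord with hM
  have hMred : IsRed M := isRed_toWord h'
  have hMgood : ∀ p ∈ M, Good p := good_of_mem_H hh'H
  have hvword : v.toWord = x :: L₂ := toWord_mk_of_isRed hredR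
  have hvinv : v⁻¹.toWord = FreeGroup.invRev (x :: L₂) := by
    rw [FreeGroup.toWord_inv, hvword]
  have hinvred : IsRed (FreeGroup.invRev (x :: L₂)) := hvinv ▸ isRed_toWord v⁻¹
  -- junction conditions
  have hlast_inv : (FreeGroup.invRev (x :: L₂)).getLast? = some (x.1, !x.2) := by
    unfold FreeGroup.invRev
    rw [List.getLast?_reverse]
    simp
  obtain ⟨hd, M', hMdecomp⟩ := List.exists_cons_of_ne_nil hMne
  have hhd_good : Good hd := hMgood hd (by rw [hMdecomp]; exact List.mem_cons_self)
  have hbig_red : IsRed (FreeGroup.invRev (x :: L₂) ++ (M ++ (x :: L₂))) := by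
    refine List.isChain_append.mpr ⟨hinvred, ?_, ?_⟩
    · refine List.isChain_append.mpr ⟨hMred, hredR, ?_⟩
      intro p hp q hq
      have hpM : p ∈ M := List.mem_of_mem_getLast? hp
      have hpg : Good p := hMgood p hpM
      rw [List.head?_cons, Option.mem_some_iff] at hq
      subst hq
      rintro ⟨h1, -⟩
      rcases hpg with h | h <;> exact hx (by rw [Good, ← h1, h]; simp)
    · intro p hp q hq
      rw [hlast_inv, Option.mem_some_iff] at hp
      subst hp
      rw [hMdecomp, List.cons_append, List.head?_cons, Option.mem_some_iff] at hq
      subst hq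
      rintro ⟨h1, -⟩
      rcases hhd_good with h | h <;> exact hx (by rw [Good, h1, h]; simp)
  -- assemble the word
  have hconj_eq : k⁻¹ * (gm 0) ^ n * k = v⁻¹ * h' * v := by
    rw [hk_eq, hh']; group
  have hword : (k⁻¹ * (gm 0) ^ n * k).toWord
      = FreeGroup.invRev (x :: L₂) ++ (M ++ (x :: L₂)) := by
    rw [hconj_eq]
    have h1 : v⁻¹ = FreeGroup.mk (FreeGroup.invRev (x :: L₂)) := by
      rw [hv, FreeGroup.inv_mk]
    have h2 : h' = FreeGroup.mk M := by rw [hM, FreeGroup.mk_toWord]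
    rw [h1, h2, hv, FreeGroup.mul_mk, FreeGroup.mul_mk, List.append_assoc]
    exact toWord_mk_of_isRed hbig_red
  have : Good x := by
    have hxmem : x ∈ (k⁻¹ * (gm 0) ^ n * k).toWord := by
      rw [hword]
      exact List.mem_append_right _ (List.mem_append_right _ List.mem_cons_self)
    exact good_of_mem_H h x hxmem
  exact hx this

theorem lemL {n m : ℤ} {k : K} (hn : n ≠ 0) (h : k⁻¹ * (gm m) ^ n * k ∈ H) :
    m = 0 ∧ k ∈ H := by
  have hm : m = 0 := m_eq_zero hn h
  subst hm
  exact ⟨rfl, mem_H_of_conj hn h⟩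

end MVAux

namespace MVAux

abbrev X := ℤ × (K ⧸ H)

noncomputable def e₁ : Equiv.Perm X where
  toFun p := (p.1, (FreeGroup.of (-p.1) : K) • p.2)
  invFun p := (p.1, ((FreeGroup.of (-p.1))⁻¹ : K) • p.2)
  left_inv p := by simp
  right_inv p := by simp

noncomputable def e₂ : Equiv.Perm X where
  toFun p := (p.1 + 1, p.2)
  invFun p := (p.1 - 1, p.2)
  left_inv p := by simp
  right_inv p := by simp

noncomputable def ρ : FreeGroup (Fin 2) →* Equiv.Perm X :=
  FreeGroup.lift (fun i => if i = 0 then e₁ else e₂)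

theorem ρ_x₁ : ρ x₁ = e₁ := by rw [x₁, ρ, FreeGroup.lift_apply_of, if_pos rfl]
theorem ρ_x₂ : ρ x₂ = e₂ := by rw [x₂, ρ, FreeGroup.lift_apply_of, if_neg (by decide)]

noncomputable def bpt : X := ((0 : ℤ), ((1 : K) : K ⧸ H))

theorem e₁_apply (m : ℤ) (k : K) :
    e₁ (m, (k : K ⧸ H)) = (m, ((FreeGroup.of (-m) * k : K) : K ⧸ H)) := by
  show (m, (FreeGroup.of (-m) : K) • (k : K ⧸ H)) = _
  rw [MulAction.Quotient.smul_mk, smul_eq_mul]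

theorem e₁_symm_apply (m : ℤ) (k : K) :
    e₁⁻¹ (m, (k : K ⧸ H)) = (m, (((FreeGroup.of (-m))⁻¹ * k : K) : K ⧸ H)) := by
  show (m, ((FreeGroup.of (-m))⁻¹ : K) • (k : K ⧸ H)) = _
  rw [MulAction.Quotient.smul_mk, smul_eq_mul]

theorem e₂_apply (m : ℤ) (q : K ⧸ H) : e₂ (m, q) = (m + 1, q) := rfl
theorem e₂_symm_apply (m : ℤ) (q : K ⧸ H) : e₂⁻¹ (m, q) = (m - 1, q) := rfl


theorem stab_fwd {a : FreeGroup (Fin 2)} (ha : a ∈ Uα) : ρ a bpt = bpt := by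
  induction ha using Subgroup.closure_induction with
  | mem x hx =>
    rcases hx with h | h <;> subst h
    · rw [ρ_x₁]
      show e₁ ((0 : ℤ), ((1 : K) : K ⧸ H)) = ((0 : ℤ), ((1 : K) : K ⧸ H))
      rw [e₁_apply]
      have h3 : ((FreeGroup.of (-(0:ℤ)) * 1 : K) : K ⧸ H) = ((1 : K) : K ⧸ H) := by
        rw [QuotientGroup.eq]
        simp only [mul_one, neg_zero, one_mul]
        exact inv_mem (Subgroup.subset_closure (Set.mem_insert _ _))
      rw [h3]
    · rw [_root_.map_mul, _root_.map_mul, _root_.map_inv, _root_.map_inv, ρ_x₁, ρ_x₂]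
      show e₂ (e₁⁻¹ (e₂⁻¹ bpt)) = bpt
      rw [show e₂⁻¹ bpt = ((-1 : ℤ), ((1 : K) : K ⧸ H)) from rfl, e₁_symm_apply, e₂_apply]
      have h2 : ((-1 : ℤ) + 1) = (0 : ℤ) := by norm_num
      have h3 : (((FreeGroup.of (- -1 : ℤ))⁻¹ * 1 : K) : K ⧸ H) = ((1 : K) : K ⧸ H) := by
        rw [QuotientGroup.eq]
        simp only [mul_one, inv_inv, neg_neg]
        exact Subgroup.subset_closure (Set.mem_insert_of_mem _ rfl)
      rw [h2, h3]
      rfl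
  | one => rw [_root_.map_one]; rfl
  | mul x y hx hy ihx ihy =>
    rw [_root_.map_mul]
    show ρ x (ρ y bpt) = bpt
    rw [ihy, ihx]
  | inv x hx ihx =>
    rw [_root_.map_inv]
    conv_lhs => rw [← ihx]
    exact Equiv.symm_apply_apply _ _

noncomputable def ψ : K →* FreeGroup (Fin 2) :=
  FreeGroup.lift (fun j : ℤ => x₂ ^ j * x₁ * x₂ ^ (-j))

theorem ψ_of (j : ℤ) : ψ (FreeGroup.of j) = x₂ ^ j * x₁ * x₂ ^ (-j) := FreeGroup.lift_apply_of

theorem ψ_H {h : K} (hh : h ∈ H) : ψ h ∈ Uα := by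
  induction hh using Subgroup.closure_induction with
  | mem x hx =>
    rcases hx with h | h <;> subst h <;> rw [ψ_of]
    · simpa [Uα] using Subgroup.subset_closure (Set.mem_insert _ _)
    · have : x₂ ^ (1:ℤ) * x₁ * x₂ ^ (-1:ℤ) = (x₂ * x₁⁻¹ * x₂⁻¹)⁻¹ := by group
      rw [this]
      exact inv_mem (Subgroup.subset_closure (by simp))
  | one => rw [_root_.map_one]; exact one_mem _
  | mul x y hx hy ihx ihy => rw [_root_.map_mul]; exact mul_mem ihx ihy
  | inv x hx ihx => rw [_root_.map_inv]; exact inv_mem ihx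

noncomputable def τ : X → FreeGroup (Fin 2) ⧸ Uα := fun p =>
  Quotient.liftOn' p.2
    (fun k => ((x₂ ^ p.1 * ψ k : FreeGroup (Fin 2)) : FreeGroup (Fin 2) ⧸ Uα))
    (by
      intro k k' hkk'
      have h : k⁻¹ * k' ∈ H := QuotientGroup.leftRel_apply.mp hkk'
      apply Quotient.sound'
      rw [QuotientGroup.leftRel_apply]
      have : (x₂ ^ p.1 * ψ k)⁻¹ * (x₂ ^ p.1 * ψ k') = ψ (k⁻¹ * k') := by
        rw [_root_.map_mul, _root_.map_inv]; group
      rw [this]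
      exact ψ_H h)

theorem τ_mk (m : ℤ) (k : K) :
    τ (m, (k : K ⧸ H)) = ((x₂ ^ m * ψ k : FreeGroup (Fin 2)) : FreeGroup (Fin 2) ⧸ Uα) := rfl

theorem τ_equivar (a : FreeGroup (Fin 2)) : ∀ p : X, τ (ρ a p) = a • τ p := by
  induction a with
  | C1 => intro p; rw [_root_.map_one, one_smul]; rfl
  | of i =>
    have hcase : ∀ (g : FreeGroup (Fin 2)), ρ g = e₁ →
        (∀ m (k : K), e₁ (m, (k : K ⧸ H)) = ρ g (m, (k : K ⧸ H))) := by
      intro g hg m k; rw [hg]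
    intro p
    obtain ⟨m, q⟩ := p
    induction q using Quotient.inductionOn' with
    | h k =>
      have hk : (Quotient.mk'' k : K ⧸ H) = (k : K ⧸ H) := rfl
      rw [hk]
      fin_cases i
      · show τ (ρ x₁ (m, (k : K ⧸ H))) = x₁ • τ (m, (k : K ⧸ H))
        rw [ρ_x₁, e₁_apply, τ_mk, τ_mk]
        rw [MulAction.Quotient.smul_mk, smul_eq_mul]
        congr 1
        rw [_root_.map_mul, ψ_of]
        group
      · show τ (ρ x₂ (m, (k : K ⧸ H))) = x₂ • τ (m, (k : K ⧸ H))
        rw [ρ_x₂, e₂_apply, τ_mk, τ_mk]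
        rw [MulAction.Quotient.smul_mk, smul_eq_mul]
        congr 1
        rw [← mul_assoc]
        congr 1
        rw [← zpow_one_add]
        congr 1
        omega
  | inv_of i ih =>
    have ih' : ∀ p : X, τ (ρ (FreeGroup.of i) p) = FreeGroup.of i • τ p := ih
    show ∀ p : X, τ (ρ (FreeGroup.of i)⁻¹ p) = (FreeGroup.of i)⁻¹ • τ p
    intro p
    have h1 : ρ (FreeGroup.of i) ((ρ (FreeGroup.of i))⁻¹ p) = p :=
      Equiv.apply_symm_apply _ _
    have h2 := ih' ((ρ (FreeGroup.of i))⁻¹ p)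
    rw [h1] at h2
    rw [_root_.map_inv, eq_comm, inv_smul_eq_iff]
    exact h2
  | mul g₁ g₂ ih₁ ih₂ =>
    intro p
    rw [_root_.map_mul]
    show τ (ρ g₁ (ρ g₂ p)) = (g₁ * g₂) • τ p
    rw [ih₁, ih₂, mul_smul]

theorem stab_bwd {a : FreeGroup (Fin 2)} (h : ρ a bpt = bpt) : a ∈ Uα := by
  have := τ_equivar a bpt
  rw [h] at this
  have hτ : τ bpt = ((1 : FreeGroup (Fin 2)) : FreeGroup (Fin 2) ⧸ Uα) := by
    rw [bpt, τ_mk, _root_.map_one, mul_one, zpow_zero]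
  rw [hτ] at this
  rw [MulAction.Quotient.smul_mk, smul_eq_mul, mul_one] at this
  have := QuotientGroup.eq.mp this
  simpa using this


theorem ρ_mV (m : ℤ) (k : K) :
    ρ mV (m, (k : K ⧸ H)) = (m, ((gm m * k : K) : K ⧸ H)) := by
  rw [mV, _root_.map_mul, _root_.map_mul, _root_.map_mul, _root_.map_inv, _root_.map_inv,
    ρ_x₁, ρ_x₂]
  show e₂ (e₁⁻¹ (e₂⁻¹ (e₁ (m, (k : K ⧸ H))))) = _
  rw [e₁_apply]
  rw [show e₂⁻¹ (m, ((FreeGroup.of (-m) * k : K) : K ⧸ H))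
      = (m - 1, ((FreeGroup.of (-m) * k : K) : K ⧸ H)) from rfl]
  rw [e₁_symm_apply, e₂_apply]
  have h1 : m - 1 + 1 = m := by ring
  have h2 : (FreeGroup.of (-(m - 1)) : K)⁻¹ * (FreeGroup.of (-m) * k) = gm m * k := by
    rw [gm, show -(m - 1) = 1 - m by ring, mul_assoc]
  rw [h1, h2]

theorem ρ_mV_inv (m : ℤ) (k : K) :
    ρ mV⁻¹ (m, (k : K ⧸ H)) = (m, (((gm m)⁻¹ * k : K) : K ⧸ H)) := by
  rw [_root_.map_inv]
  have := ρ_mV m ((gm m)⁻¹ * k)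
  rw [← mul_assoc, mul_inv_cancel, one_mul] at this
  rw [← this, Equiv.Perm.inv_def, Equiv.symm_apply_apply]

theorem ρ_mV_zpow (n : ℤ) (m : ℤ) : ∀ k : K,
    ρ (mV ^ n) (m, (k : K ⧸ H)) = (m, ((gm m ^ n * k : K) : K ⧸ H)) := by
  induction n using Int.induction_on with
  | zero => intro k; rw [zpow_zero, zpow_zero, one_mul, _root_.map_one]; rfl
  | succ i ih =>
    intro k
    rw [zpow_add_one, _root_.map_mul]
    show ρ (mV ^ (i:ℤ)) (ρ mV (m, (k : K ⧸ H))) = _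
    rw [ρ_mV, ih (gm m * k), zpow_add_one]
    congr 2
    group
  | pred i ih =>
    intro k
    rw [zpow_sub_one, _root_.map_mul]
    show ρ (mV ^ (-i:ℤ)) (ρ mV⁻¹ (m, (k : K ⧸ H))) = _
    rw [ρ_mV_inv, ih ((gm m)⁻¹ * k), zpow_sub_one]
    congr 2
    group

end MVAux

theorem mV_mem_Uα : mV ∈ Uα := by
  rw [mV]
  exact mul_mem (Subgroup.subset_closure (Set.mem_insert_of_mem _ rfl))
    (Subgroup.subset_closure (Set.mem_insert _ _))

theorem mV_ne_one : mV ≠ 1 := by decide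

/-- `a⟨m_V⟩a⁻¹ ∩ U_α` is nontrivial iff `a ∈ U_α`. -/
theorem conj_zpowers_mV_inter_Ualpha_nontrivial_iff (a : FreeGroup (Fin 2)) :
    Subgroup.map ((MulAut.conj a).toMonoidHom) (Subgroup.zpowers mV) ⊓ Uα ≠ ⊥ ↔ a ∈ Uα := by
  constructor
  · intro hne
    obtain ⟨w, hwmem, hwne⟩ : ∃ w ∈ Subgroup.map ((MulAut.conj a).toMonoidHom)
        (Subgroup.zpowers mV) ⊓ Uα, w ≠ 1 := by
      by_contra hc
      push_neg at hc
      exact hne ((Subgroup.eq_bot_iff_forall _).mpr hc)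
    obtain ⟨hw1, hw2⟩ := Subgroup.mem_inf.mp hwmem
    obtain ⟨z, hz, rfl⟩ := Subgroup.mem_map.mp hw1
    obtain ⟨n, rfl⟩ := Subgroup.mem_zpowers_iff.mp hz
    have hn : n ≠ 0 := by
      rintro rfl
      exact hwne (by simp)
    have hfix : MVAux.ρ (a * mV ^ n * a⁻¹) MVAux.bpt = MVAux.bpt := by
      apply MVAux.stab_fwd
      simpa using hw2
    have hfix2 : MVAux.ρ (mV ^ n) ((MVAux.ρ a)⁻¹ MVAux.bpt) = (MVAux.ρ a)⁻¹ MVAux.bpt := by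
      have h1 : MVAux.ρ (a * mV ^ n * a⁻¹) MVAux.bpt
          = MVAux.ρ a (MVAux.ρ (mV ^ n) ((MVAux.ρ a)⁻¹ MVAux.bpt)) := by
        rw [_root_.map_mul, _root_.map_mul, _root_.map_inv]
        rfl
      rw [h1] at hfix
      have := congrArg ((MVAux.ρ a)⁻¹ : Equiv.Perm MVAux.X) hfix
      rwa [Equiv.Perm.inv_def, Equiv.symm_apply_apply] at this
    have key : ∀ (m : ℤ) (q : MVAux.K ⧸ MVAux.H),
        MVAux.ρ (mV ^ n) (m, q) = (m, q) → (m, q) = MVAux.bpt := by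
      intro m q hfixq
      obtain ⟨k, rfl⟩ := QuotientGroup.mk_surjective q
      rw [MVAux.ρ_mV_zpow] at hfixq
      have h2 : ((MVAux.gm m ^ n * k : MVAux.K) : MVAux.K ⧸ MVAux.H)
          = ((k : MVAux.K) : MVAux.K ⧸ MVAux.H) := congrArg Prod.snd hfixq
      have h3 : k⁻¹ * MVAux.gm m ^ (-n) * k ∈ MVAux.H := by
        have h4 := QuotientGroup.eq.mp h2
        rw [mul_inv_rev] at h4
        rwa [zpow_neg]
      obtain ⟨hm0, hkH⟩ := MVAux.lemL (neg_ne_zero.mpr hn) h3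
      rw [hm0]
      show ((0 : ℤ), ((k : MVAux.K) : MVAux.K ⧸ MVAux.H))
          = ((0 : ℤ), ((1 : MVAux.K) : MVAux.K ⧸ MVAux.H))
      congr 1
      rw [QuotientGroup.eq]
      simpa using inv_mem hkH
    have hpbpt := key ((MVAux.ρ a)⁻¹ MVAux.bpt).1 ((MVAux.ρ a)⁻¹ MVAux.bpt).2
      (by rw [Prod.mk.eta]; exact hfix2)
    rw [Prod.mk.eta] at hpbpt
    apply MVAux.stab_bwd
    conv_lhs => rw [← hpbpt]
    exact Equiv.apply_symm_apply _ _
  · intro ha hbot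
    have hmem : a * mV * a⁻¹ ∈ Subgroup.map ((MulAut.conj a).toMonoidHom)
        (Subgroup.zpowers mV) ⊓ Uα := by
      refine Subgroup.mem_inf.mpr ⟨?_, ?_⟩
      · exact Subgroup.mem_map.mpr ⟨mV, Subgroup.mem_zpowers mV, by simp⟩
      · exact mul_mem (mul_mem ha mV_mem_Uα) (inv_mem ha)
    rw [hbot, Subgroup.mem_bot] at hmem
    apply mV_ne_one
    have := congrArg (fun z => a⁻¹ * z * a) hmem
    simpa [mul_assoc] using this
end

section
/- In the free group F(x₁, x₂), let U_α = ⟨x₁, x₂x₁⁻¹x₂⁻¹⟩. For any a ∈ F(x₁,x₂), the intersection a⟨x₁⟩a⁻¹ ∩ U_α is nontrivial if and only if a = u·x₂^ε·x₁^k for some u ∈ U_α, ε ∈ {0,1}, and k ∈ ℤ. -/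
open FreeGroup

namespace UaAux

abbrev Ltr := Fin 2 × Bool

def inv' (ℓ : Ltr) : Ltr := (ℓ.1, !ℓ.2)

@[simp] lemma inv'_inv' (ℓ : Ltr) : inv' (inv' ℓ) = ℓ := by simp [inv']

/-- no cancellation between adjacent letters -/
def Rdc (p q : Ltr) : Prop := p.1 = q.1 → p.2 = q.2

/-- conditions at the *end* of the word: canonical left-coset representatives do not end in
`x₁^±` and do not end in `x₁^± x₂⁻¹`. -/
def Back : List Ltr → Prop
  | [] => True
  | [a] => a.1 = 1
  | [a, b] => b.1 = 1 ∧ (a.1 = 0 → b.2 = true)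
  | _ :: b :: c :: l => Back (b :: c :: l)

def Canon (L : List Ltr) : Prop := L.Chain' Rdc ∧ Back L

def S := {L : List Ltr // Canon L}

lemma back_tail {a : Ltr} {l : List Ltr} (h : Back (a :: l)) : Back l := by
  match l with
  | [] => trivial
  | [b] => exact h.1
  | b :: c :: l' => exact h

/-- prepend a letter to a canonical representative, with cancellation/normalization -/
def pushL (ℓ : Ltr) : List Ltr → List Ltr
  | [] => if ℓ.1 = 0 then [] else [ℓ]
  | a :: l =>
      if a = inv' ℓ then l
      else if ℓ.1 = 0 ∧ a = (1, false) ∧ l = [] then a :: l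
      else ℓ :: a :: l

lemma fin2 (i : Fin 2) : i = 0 ∨ i = 1 := by omega

lemma canon_pushL (ℓ : Ltr) {L : List Ltr} (h : Canon L) : Canon (pushL ℓ L) := by
  obtain ⟨hc, hb⟩ := h
  match L with
  | [] =>
    by_cases h0 : ℓ.1 = 0
    · simp only [pushL, if_pos h0]; exact ⟨List.isChain_nil, trivial⟩
    · simp only [pushL, if_neg h0]
      refine ⟨List.isChain_singleton _, ?_⟩
      rcases fin2 ℓ.1 with h | h
      · exact absurd h h0
      · exact h
  | a :: l =>
    by_cases h1 : a = inv' ℓ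
    · simp only [pushL, if_pos h1]
      exact ⟨hc.tail, back_tail hb⟩
    · by_cases h2 : ℓ.1 = 0 ∧ a = (1, false) ∧ l = []
      · simp only [pushL, if_neg h1, if_pos h2]; exact ⟨hc, hb⟩
      · simp only [pushL, if_neg h1, if_neg h2]
        constructor
        · rw [List.Chain', List.isChain_cons_cons]
          refine ⟨?_, hc⟩
          intro he
          by_contra hne
          apply h1
          have h2' : a.2 = !ℓ.2 := by
            cases hℓ2 : ℓ.2 <;> cases ha2 : a.2 <;> simp_all
          exact Prod.ext_iff.mpr ⟨he.symm, h2'⟩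
        · match l with
          | [] =>
            refine ⟨hb, ?_⟩
            intro hℓ0
            by_contra hab
            have ha2 : a.2 = false := by cases h' : a.2 <;> simp_all
            apply h2
            refine ⟨hℓ0, ?_, rfl⟩
            have ha1 : a.1 = 1 := hb
            have : a = (a.1, a.2) := rfl
            rw [this, ha1, ha2]
          | b :: l' => exact hb

lemma pushL_pushL (ℓ : Ltr) {L : List Ltr} (h : Canon L) :
    pushL (inv' ℓ) (pushL ℓ L) = L := by
  obtain ⟨hc, hb⟩ := h
  match L with
  | [] =>
    by_cases h0 : ℓ.1 = 0
    · simp only [pushL, if_pos h0]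
      have h0' : (inv' ℓ).1 = 0 := h0
      simp only [pushL, if_pos h0']
    · simp only [pushL, if_neg h0]
      simp [pushL]
  | a :: l =>
    by_cases h1 : a = inv' ℓ
    · simp only [pushL, if_pos h1]
      match l, hc, hb with
      | [], _, hb =>
        have ha1 : a.1 = 1 := hb
        have hℓ1 : ¬ (inv' ℓ).1 = 0 := by
          have h' : (inv' ℓ).1 = a.1 := by rw [h1]
          rw [h', ha1]; decide
        simp only [pushL, if_neg hℓ1]
        rw [← h1]
      | b :: l', hc, hb =>
        have hrdc : Rdc a b := (List.isChain_cons_cons.mp hc).1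
        have hb1 : b ≠ inv' (inv' ℓ) := by
          rw [inv'_inv']
          intro hbe
          have h11 : a.1 = b.1 := by rw [h1, hbe]; rfl
          have := hrdc h11
          rw [h1, hbe] at this
          simp [inv'] at this
        have hstuck : ¬ ((inv' ℓ).1 = 0 ∧ b = (1, false) ∧ l' = []) := by
          rintro ⟨hz, hbf, hl'⟩
          subst hl' hbf
          have ha1 : a.1 = 0 := by rw [h1]; exact hz
          have hcon : (((1 : Fin 2), false) : Ltr).2 = true := hb.2 ha1
          simp at hcon
        simp only [pushL, if_neg hb1, if_neg hstuck]
        rw [← h1]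
    · by_cases h2 : ℓ.1 = 0 ∧ a = (1, false) ∧ l = []
      · simp only [pushL, if_neg h1, if_pos h2]
        obtain ⟨hz, haf, hl⟩ := h2
        have hne : ¬ a = inv' (inv' ℓ) := by rw [inv'_inv']; intro he; rw [haf] at he
                                             rw [← he] at hz; simp at hz
        have hst : (inv' ℓ).1 = 0 ∧ a = (1, false) ∧ l = [] := ⟨hz, haf, hl⟩
        simp only [pushL, if_neg hne, if_pos hst]
      · simp only [pushL, if_neg h1, if_neg h2]
        have : ℓ = inv' (inv' ℓ) := (inv'_inv' ℓ).symm
        simp only [pushL, if_pos this]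

def pushS (ℓ : Ltr) (s : S) : S := ⟨pushL ℓ s.1, canon_pushL ℓ s.2⟩

def pushE (ℓ : Ltr) : Equiv.Perm S where
  toFun := pushS ℓ
  invFun := pushS (inv' ℓ)
  left_inv s := Subtype.ext (pushL_pushL ℓ s.2)
  right_inv s := Subtype.ext (by
    have := pushL_pushL (inv' ℓ) s.2
    rwa [inv'_inv'] at this)

noncomputable def φ : FreeGroup (Fin 2) →* Equiv.Perm S :=
  FreeGroup.lift fun i => pushE (i, true)

@[simp] lemma φ_of (i : Fin 2) : φ (FreeGroup.of i) = pushE (i, true) :=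
  FreeGroup.lift_apply_of

def s₀ : S := ⟨[], List.isChain_nil, trivial⟩
def s₁ : S := ⟨[((1 : Fin 2), false)], List.isChain_singleton _, rfl⟩

/-- word of a list of letters as a free group element -/
def gen (ℓ : Ltr) : FreeGroup (Fin 2) := cond ℓ.2 (FreeGroup.of ℓ.1) (FreeGroup.of ℓ.1)⁻¹

def wd (L : List Ltr) : FreeGroup (Fin 2) := (L.map gen).prod

@[simp] lemma wd_nil : wd [] = 1 := rfl

@[simp] lemma wd_cons (a : Ltr) (l : List Ltr) : wd (a :: l) = gen a * wd l := by
  simp [wd]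


lemma mem_gen1 : x₁ ∈ Uα := Subgroup.subset_closure (Set.mem_insert _ _)

lemma mem_gen2 : x₂ * x₁⁻¹ * x₂⁻¹ ∈ Uα :=
  Subgroup.subset_closure (Set.mem_insert_of_mem _ rfl)

lemma mem_gen2' : x₂ * x₁ * x₂⁻¹ ∈ Uα := by
  have h := Uα.inv_mem mem_gen2
  have : (x₂ * x₁⁻¹ * x₂⁻¹)⁻¹ = x₂ * x₁ * x₂⁻¹ := by group
  rwa [this] at h

/-- Schreier-type lemma: every element moves transversal words within `Uα`. -/
lemma schreier (g : FreeGroup (Fin 2)) :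
    ∀ s : S, (wd (φ g s).1)⁻¹ * g * wd s.1 ∈ Uα := by
  induction g with
  | C1 => intro s; simpa using Uα.one_mem
  | of i =>
    intro s
    obtain ⟨L, hL⟩ := s
    have hpure : (pure i : FreeGroup (Fin 2)) = FreeGroup.of i := rfl
    have happ : (φ (FreeGroup.of i) ⟨L, hL⟩).1 = pushL ((i, true) : Ltr) L := by
      rw [φ_of]; rfl
    rw [happ]
    match L, hL with
    | [], hL =>
      by_cases h0 : i = 0
      · subst h0
        have : pushL (((0 : Fin 2), true) : Ltr) [] = [] := rfl
        rw [this]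
        simpa [x₁] using mem_gen1
      · have h1 : i = 1 := (fin2 i).resolve_left h0
        subst h1
        have : pushL (((1 : Fin 2), true) : Ltr) [] = [(((1 : Fin 2), true) : Ltr)] := rfl
        rw [this]
        have : (wd [(((1 : Fin 2), true) : Ltr)])⁻¹ * FreeGroup.of 1 * wd [] = 1 := by
          simp [wd, gen]
        rw [this]; exact Uα.one_mem
    | a :: l, hL =>
      by_cases h1 : a = inv' ((i, true) : Ltr)
      · have : pushL ((i, true) : Ltr) (a :: l) = l := by
          simp only [pushL, if_pos h1]
        rw [this]
        have ha : a = ((i, false) : Ltr) := h1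
        subst ha
        have : (wd l)⁻¹ * FreeGroup.of i * wd (((i, false) : Ltr) :: l) = 1 := by
          simp [wd_cons, gen]
        rw [this]; exact Uα.one_mem
      · by_cases h2 : ((i, true) : Ltr).1 = 0 ∧ a = (1, false) ∧ l = []
        · obtain ⟨hz, haf, hl⟩ := h2
          have hi : i = 0 := hz
          subst hi hl haf
          have : pushL (((0 : Fin 2), true) : Ltr) [(((1 : Fin 2), false) : Ltr)]
              = [(((1 : Fin 2), false) : Ltr)] := rfl
          rw [this]
          have : (wd [(((1 : Fin 2), false) : Ltr)])⁻¹ * FreeGroup.of 0 *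
              wd [(((1 : Fin 2), false) : Ltr)] = x₂ * x₁ * x₂⁻¹ := by
            simp [wd, gen, x₁, x₂]
          rw [this]; exact mem_gen2'
        · have : pushL ((i, true) : Ltr) (a :: l) = ((i, true) : Ltr) :: a :: l := by
            simp only [pushL, if_neg h1, if_neg h2]
          rw [this]
          have : (wd (((i, true) : Ltr) :: a :: l))⁻¹ * FreeGroup.of i * wd (a :: l) = 1 := by
            simp [wd_cons, gen]
          rw [this]; exact Uα.one_mem
  | inv_of i ih =>
    intro s
    set t := φ (FreeGroup.of i)⁻¹ s with ht
    have hts : φ (FreeGroup.of i) t = s := by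
      rw [ht, _root_.map_inv]
      exact Equiv.apply_symm_apply _ _
    have := ih t
    rw [hts] at this
    have h' := Uα.inv_mem this
    have : ((wd s.1)⁻¹ * FreeGroup.of i * wd t.1)⁻¹ = (wd t.1)⁻¹ * (FreeGroup.of i)⁻¹ * wd s.1 := by group
    rw [this] at h'
    exact h'
  | mul x y ihx ihy =>
    intro s
    have hxy : φ (x * y) s = φ x (φ y s) := by rw [_root_.map_mul]; rfl
    have h := Uα.mul_mem (ihx (φ y s)) (ihy s)
    have : ((wd (φ x (φ y s)).1)⁻¹ * x * wd (φ y s).1) * ((wd (φ y s).1)⁻¹ * y * wd s.1)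
        = (wd (φ x (φ y s)).1)⁻¹ * (x * y) * wd s.1 := by group
    rw [this] at h
    rw [hxy]
    exact h

def Stab : Subgroup (FreeGroup (Fin 2)) where
  carrier := {g | φ g s₀ = s₀}
  one_mem' := by simp [Set.mem_setOf_eq]
  mul_mem' := by
    intro a b ha hb
    simp only [Set.mem_setOf_eq] at *
    rw [_root_.map_mul, Equiv.Perm.mul_apply, hb, ha]
  inv_mem' := by
    intro a ha
    simp only [Set.mem_setOf_eq] at *
    rw [_root_.map_inv]
    exact Equiv.Perm.inv_eq_iff_eq.mpr ha.symm

lemma push_s₀_x₁ (b : Bool) : pushS ((0, b) : Ltr) s₀ = s₀ := Subtype.ext rfl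

lemma push_s₁_x₁ (b : Bool) : pushS ((0, b) : Ltr) s₁ = s₁ := Subtype.ext (by
  cases b <;> rfl)

lemma φ_x₁_s₀ : φ x₁ s₀ = s₀ := by
  rw [x₁, φ_of]; exact push_s₀_x₁ true

lemma φ_x₁_s₁ : φ x₁ s₁ = s₁ := by
  rw [x₁, φ_of]; exact push_s₁_x₁ true

lemma φ_x₂inv_s₀ : φ x₂⁻¹ s₀ = s₁ := by
  rw [x₂, _root_.map_inv, φ_of]
  exact Subtype.ext rfl

lemma φ_x₂_s₁ : φ x₂ s₁ = s₀ := by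
  rw [x₂, φ_of]
  exact Subtype.ext rfl

lemma mem_U_iff (g : FreeGroup (Fin 2)) : g ∈ Uα ↔ φ g s₀ = s₀ := by
  constructor
  · intro hg
    have hle : Uα ≤ Stab := by
      rw [Uα, Subgroup.closure_le]
      rintro x (rfl | rfl)
      · exact φ_x₁_s₀
      · show φ (x₂ * x₁⁻¹ * x₂⁻¹) s₀ = s₀
        rw [_root_.map_mul, _root_.map_mul, _root_.map_inv, _root_.map_inv]
        rw [x₁, x₂, φ_of, φ_of]
        show pushE ((1 : Fin 2), true) ((pushE ((0 : Fin 2), true))⁻¹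
          ((pushE ((1 : Fin 2), true))⁻¹ s₀)) = s₀
        have e1 : (pushE ((1 : Fin 2), true))⁻¹ s₀ = s₁ := Subtype.ext rfl
        have e2 : (pushE ((0 : Fin 2), true))⁻¹ s₁ = s₁ := Subtype.ext rfl
        have e3 : pushE ((1 : Fin 2), true) s₁ = s₀ := Subtype.ext rfl
        rw [e1, e2, e3]
      -- closure set is {x₁, x₂ * x₁⁻¹ * x₂⁻¹}
    exact hle hg
  · intro hfix
    have := schreier g s₀
    rw [hfix] at this
    simpa [s₀] using this


/-- signed length of the leading run of `x₁^±` letters -/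
def e : List Ltr → ℤ
  | [] => 0
  | a :: l =>
      if a = (((0 : Fin 2), true) : Ltr) then max (e l) 0 + 1
      else if a = (((0 : Fin 2), false) : Ltr) then min (e l) 0 - 1 else 0

/-- states which are not fixed points of `x₁` -/
def Mov (L : List Ltr) : Prop := L ≠ [] ∧ L ≠ [(((1 : Fin 2), false) : Ltr)]

lemma step {L : List Ltr} (h : Canon L) (hm : Mov L) :
    Mov (pushL (((0 : Fin 2), true) : Ltr) L) ∧
      e (pushL (((0 : Fin 2), true) : Ltr) L) = e L + 1 := by
  obtain ⟨h0, h1⟩ := hm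
  match L, h with
  | [], _ => exact absurd rfl h0
  | a :: l, ⟨hc, hb⟩ =>
    by_cases hcan : a = inv' (((0 : Fin 2), true) : Ltr)
    · have ha : a = (((0 : Fin 2), false) : Ltr) := hcan
      subst ha
      have hres : pushL (((0 : Fin 2), true) : Ltr) ((((0 : Fin 2), false) : Ltr) :: l) = l := by
        simp only [pushL, if_pos hcan]
      rw [hres]
      have hel : e l ≤ 0 := by
        match l, hc with
        | [], _ => simp [e]
        | b :: l', hc =>
          have hrdc : Rdc (((0 : Fin 2), false) : Ltr) b := (List.isChain_cons_cons.mp hc).1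
          have hbne : b ≠ (((0 : Fin 2), true) : Ltr) := by
            intro hbe
            have := hrdc (by rw [hbe])
            rw [hbe] at this
            simp at this
          simp only [e, if_neg hbne]
          split
          · omega
          · omega
      refine ⟨⟨?_, ?_⟩, ?_⟩
      · intro hl
        subst hl
        exact absurd hb (by simp [Back])
      · intro hl
        subst hl
        have : (((1 : Fin 2), false) : Ltr).2 = true := hb.2 rfl
        simp at this
      · have : e ((((0 : Fin 2), false) : Ltr) :: l) = min (e l) 0 - 1 := by
          simp [e]
        rw [this]
        omega
    · by_cases hstuck : (((0 : Fin 2), true) : Ltr).1 = 0 ∧ a = (1, false) ∧ l = []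
      · exfalso
        obtain ⟨_, haf, hl⟩ := hstuck
        subst hl
        exact h1 (by rw [haf])
      · have hres : pushL (((0 : Fin 2), true) : Ltr) (a :: l)
            = (((0 : Fin 2), true) : Ltr) :: a :: l := by
          simp only [pushL, if_neg hcan]
          split
          · rename_i hcond
            exact absurd ⟨rfl, hcond.2⟩ hstuck
          · rfl
        rw [hres]
        have hge : 0 ≤ e (a :: l) := by
          have hne : a ≠ (((0 : Fin 2), false) : Ltr) := fun he => hcan he
          simp only [e, if_neg hne]
          split <;> omega
        refine ⟨⟨by simp, by simp⟩, ?_⟩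
        have : e ((((0 : Fin 2), true) : Ltr) :: a :: l) = max (e (a :: l)) 0 + 1 := by
          simp [e]
        rw [this]
        omega

def σ : Equiv.Perm S := pushE (((0 : Fin 2), true) : Ltr)

lemma iter_step (n : ℕ) (s : S) (hm : Mov s.1) :
    Mov ((σ ^ (n + 1)) s).1 ∧ e ((σ ^ (n + 1)) s).1 = e s.1 + (n + 1) := by
  induction n with
  | zero =>
    rw [pow_one]
    have := step s.2 hm
    exact this
  | succ m ih =>
    have hpow : (σ ^ (m + 2)) s = σ ((σ ^ (m + 1)) s) := by
      rw [pow_succ']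
      rfl
    rw [hpow]
    have hstep := step ((σ ^ (m + 1)) s).2 ih.1
    have h1 : (σ ((σ ^ (m + 1)) s)).1 = pushL (((0 : Fin 2), true) : Ltr) ((σ ^ (m + 1)) s).1 :=
      rfl
    rw [h1]
    refine ⟨hstep.1, ?_⟩
    rw [hstep.2, ih.2]
    push_cast
    ring

lemma fix_zpow {G : Type*} (f : Equiv.Perm G) (t : G) (h : f t = t) (n : ℤ) : (f ^ n) t = t := by
  have hn : ∀ m : ℕ, (f ^ m) t = t := by
    intro m
    induction m with
    | zero => rfl
    | succ k ih => rw [pow_succ, Equiv.Perm.mul_apply, h, ih]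
  match n with
  | (m : ℕ) => rw [zpow_natCast]; exact hn m
  | .negSucc m =>
    rw [zpow_negSucc]
    have := hn (m + 1)
    exact Equiv.Perm.inv_eq_iff_eq.mpr this.symm

lemma fixed_of_zpow {n : ℤ} (hn : n ≠ 0) {t : S} (h : (σ ^ n) t = t) :
    t = s₀ ∨ t = s₁ := by
  by_contra hcon
  push_neg at hcon
  have hm : Mov t.1 := by
    constructor
    · intro he; exact hcon.1 (Subtype.ext he)
    · intro he; exact hcon.2 (Subtype.ext he)
  rcases lt_trichotomy n 0 with hlt | rfl | hgt
  · have h' : (σ ^ (-n)) t = t := by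
      have := congrArg (fun u => (σ ^ (-n)) u) h
      rw [← Equiv.Perm.mul_apply, ← zpow_add, neg_add_cancel, zpow_zero] at this
      rw [← this]
      rfl
    obtain ⟨m, hm'⟩ : ∃ m : ℕ, -n = (m : ℤ) + 1 := by
      refine ⟨(-n - 1).toNat, ?_⟩
      omega
    rw [hm'] at h'
    have : (σ ^ ((m : ℤ) + 1)) t = (σ ^ (m + 1)) t := by
      norm_cast
    rw [this] at h'
    have := (iter_step m t hm).2
    rw [h'] at this
    omega
  · exact hn rfl
  · obtain ⟨m, hm'⟩ : ∃ m : ℕ, n = (m : ℤ) + 1 := ⟨(n - 1).toNat, by omega⟩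
    rw [hm'] at h
    have h' : (σ ^ (m + 1)) t = t := by
      have : (σ ^ ((m : ℤ) + 1)) t = (σ ^ (m + 1)) t := by norm_cast
      rw [← this, h]
    have := (iter_step m t hm).2
    rw [h'] at this
    omega

lemma σ_s₀ : σ s₀ = s₀ := Subtype.ext rfl
lemma σ_s₁ : σ s₁ = s₁ := Subtype.ext rfl

lemma φ_x₁_eq : φ x₁ = σ := by rw [x₁, φ_of]; rfl

end UaAux

namespace UaAux

noncomputable def χ : FreeGroup (Fin 2) →* Multiplicative ℤ :=
  FreeGroup.lift fun i => Multiplicative.ofAdd (if i = 0 then 1 else 0)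

lemma x₁_zpow_ne_one {n : ℤ} (hn : n ≠ 0) : x₁ ^ n ≠ 1 := by
  intro h
  have h2 := congrArg χ h
  rw [map_zpow, _root_.map_one, x₁, χ, FreeGroup.lift_apply_of] at h2
  simp only [if_pos rfl] at h2
  apply hn
  have := congrArg Multiplicative.toAdd h2
  simpa using this

lemma x₁_ne_one : x₁ ≠ 1 := by
  have := x₁_zpow_ne_one (n := 1) one_ne_zero
  simpa using this

lemma t_eq (g : FreeGroup (Fin 2)) (n : ℤ) (s : S) :
    φ (g * x₁ ^ n * g⁻¹) s = φ g ((σ ^ n) (φ g⁻¹ s)) := by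
  rw [_root_.map_mul, _root_.map_mul, map_zpow, φ_x₁_eq]
  rfl

end UaAux

open UaAux in
/-- `a⟨x₁⟩a⁻¹ ∩ U_α` is nontrivial iff `a = u·x₂^ε·x₁^k` with `u ∈ U_α`, `ε ∈ {0,1}`, `k ∈ ℤ`. -/
theorem conj_zpowers_x1_inter_Ualpha_nontrivial_iff (a : FreeGroup (Fin 2)) :
    Subgroup.map ((MulAut.conj a).toMonoidHom) (Subgroup.zpowers x₁) ⊓ Uα ≠ ⊥ ↔
      ∃ u ∈ Uα, ∃ ε ∈ ({0, 1} : Set ℤ), ∃ k : ℤ, a = u * x₂ ^ ε * x₁ ^ k := by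
  rw [Subgroup.ne_bot_iff_exists_ne_one]
  constructor
  · rintro ⟨⟨g, hg⟩, hne⟩
    rw [Subgroup.mem_inf] at hg
    have hgU : g ∈ Uα := hg.2
    obtain ⟨x, hx, hxg⟩ := Subgroup.mem_map.mp hg.1
    obtain ⟨n, rfl⟩ := Subgroup.mem_zpowers_iff.mp hx
    have hxg' : a * x₁ ^ n * a⁻¹ = g := by simpa using hxg
    have hgne : g ≠ 1 := fun h => hne (Subtype.ext h)
    have hn : n ≠ 0 := by
      rintro rfl
      apply hgne
      rw [← hxg']
      simp
    have hfix : φ g s₀ = s₀ := (mem_U_iff g).mp hgU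
    rw [← hxg', t_eq] at hfix
    have hfat : φ a (φ a⁻¹ s₀) = s₀ := by
      rw [_root_.map_inv]; exact Equiv.apply_symm_apply _ _
    have hσfix : (σ ^ n) (φ a⁻¹ s₀) = φ a⁻¹ s₀ := by
      have := hfix.trans hfat.symm
      exact (φ a).injective this
    rcases fixed_of_zpow hn hσfix with ht | ht
    · -- a⁻¹ ∈ Uα
      have haU : a ∈ Uα := by
        have : a⁻¹ ∈ Uα := (mem_U_iff a⁻¹).mpr ht
        simpa using Uα.inv_mem this
      exact ⟨a, haU, 0, Set.mem_insert _ _, 0, by simp⟩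
    · -- φ a⁻¹ s₀ = s₁, so x₂ * a⁻¹ ∈ Uα
      have h2 : x₂ * a⁻¹ ∈ Uα := by
        rw [mem_U_iff, _root_.map_mul, Equiv.Perm.mul_apply, ht, φ_x₂_s₁]
      have huU : a * x₂⁻¹ ∈ Uα := by
        have := Uα.inv_mem h2
        simpa [mul_inv_rev] using this
      refine ⟨a * x₂⁻¹, huU, 1, Set.mem_insert_of_mem _ rfl, 0, ?_⟩
      simp
  · rintro ⟨u, hu, ε, hε, k, rfl⟩
    set a := u * x₂ ^ ε * x₁ ^ k with ha
    have htfix : σ (φ a⁻¹ s₀) = φ a⁻¹ s₀ := by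
      have hainv : a⁻¹ = x₁ ^ (-k) * (x₂ ^ (-ε) * u⁻¹) := by
        rw [ha]; group
      have hu' : φ u⁻¹ s₀ = s₀ := (mem_U_iff u⁻¹).mp (Uα.inv_mem hu)
      rcases hε with hε | hε
      · subst hε
        have : φ a⁻¹ s₀ = s₀ := by
          rw [hainv, _root_.map_mul, Equiv.Perm.mul_apply, _root_.map_mul,
            Equiv.Perm.mul_apply, hu']
          simp only [neg_zero, zpow_zero, _root_.map_one, Equiv.Perm.one_apply]
          rw [map_zpow, φ_x₁_eq]
          exact fix_zpow σ s₀ σ_s₀ (-k)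
        rw [this, σ_s₀]
      · rw [Set.mem_singleton_iff] at hε
        subst hε
        have : φ a⁻¹ s₀ = s₁ := by
          rw [hainv, _root_.map_mul, Equiv.Perm.mul_apply, _root_.map_mul,
            Equiv.Perm.mul_apply, hu']
          have : φ (x₂ ^ (-1 : ℤ)) s₀ = s₁ := by
            rw [zpow_neg, zpow_one]
            exact φ_x₂inv_s₀
          rw [this, map_zpow, φ_x₁_eq]
          exact fix_zpow σ s₁ σ_s₁ (-k)
        rw [this, σ_s₁]
    have hmem : a * x₁ * a⁻¹ ∈
        Subgroup.map ((MulAut.conj a).toMonoidHom) (Subgroup.zpowers x₁) ⊓ Uα := by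
      rw [Subgroup.mem_inf]
      constructor
      · exact Subgroup.mem_map.mpr ⟨x₁, Subgroup.mem_zpowers x₁, by simp⟩
      · rw [mem_U_iff]
        have : a * x₁ * a⁻¹ = a * x₁ ^ (1 : ℤ) * a⁻¹ := by simp
        rw [this, t_eq]
        rw [zpow_one]
        show φ a (σ (φ a⁻¹ s₀)) = s₀
        rw [htfix, _root_.map_inv]; exact Equiv.apply_symm_apply _ _
    refine ⟨⟨a * x₁ * a⁻¹, hmem⟩, ?_⟩
    intro hone
    have : a * x₁ * a⁻¹ = 1 := congrArg Subtype.val hone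
    have hx1 : x₁ = 1 := by
      have := congrArg (fun z => a⁻¹ * z * a) this
      simpa [mul_assoc] using this
    exact x₁_ne_one hx1
end

section
/- In the free group F(x₁, x₂), let U_α = ⟨x₁, x₂x₁⁻¹x₂⁻¹⟩. For any a ∈ F(x₁,x₂), the intersection aU_αa⁻¹ ∩ U_α is nontrivial if and only if a = u₁·x₂^ε·u₂ for some u₁, u₂ ∈ U_α and ε ∈ {-1, 0, 1}. -/
open FreeGroup

namespace UaProof
open List

abbrev Lw := List (Fin 2 × Bool)

def wt (l : Fin 2 × Bool) : ℤ := if l.1 = 1 then (if l.2 then 1 else -1) else 0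
def ht (L : Lw) : ℤ := (L.map wt).sum
def Good (L : Lw) : Prop := (∀ n, ht (L.take n) ∈ ({0, 1} : Set ℤ)) ∧ ht L = 0

@[simp] lemma ht_nil : ht ([] : Lw) = 0 := rfl
@[simp] lemma ht_cons (x : Fin 2 × Bool) (L : Lw) : ht (x :: L) = wt x + ht L := by simp [ht]
@[simp] lemma ht_append (A B : Lw) : ht (A ++ B) = ht A + ht B := by simp [ht]
@[simp] lemma ht_singleton (x : Fin 2 × Bool) : ht [x] = wt x := by simp [ht]
@[simp] lemma wt_zero (b : Bool) : wt ((0 : Fin 2), b) = 0 := rfl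
@[simp] lemma wt_one_true : wt ((1 : Fin 2), true) = 1 := rfl
@[simp] lemma wt_one_false : wt ((1 : Fin 2), false) = -1 := rfl

lemma wt_not (x : Fin 2 × Bool) : wt (x.1, !x.2) = -wt x := by
  rcases x with ⟨i, b⟩; fin_cases i <;> cases b <;> simp [wt]

lemma step_ht {L₁ L₂ : Lw} (h : Red.Step L₁ L₂) : ht L₂ = ht L₁ := by
  rcases h with @⟨A, B, x, b⟩
  have := wt_not (x, b)
  simp at this
  simp [this]

lemma step_take {L₁ L₂ : Lw} (h : Red.Step L₁ L₂) :
    ∀ n, ∃ m, ht (L₂.take n) = ht (L₁.take m) := by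
  rcases h with @⟨A, B, x, b⟩
  intro n
  rcases le_or_gt n A.length with hn | hn
  · exact ⟨n, by rw [List.take_append_of_le_length hn,
      List.take_append_of_le_length hn]⟩
  · refine ⟨n + 2, ?_⟩
    rw [List.take_append, List.take_append]
    have hA : A.take n = A := List.take_of_length_le hn.le
    have hA2 : A.take (n + 2) = A := List.take_of_length_le (by omega)
    rw [hA, hA2]
    have h2 : n + 2 - A.length = (n - A.length) + 2 := by omega
    rw [h2]
    have := wt_not (x, b)
    simp at this
    simp [List.take_cons, this]

lemma red_take {L₁ L₂ : Lw} (h : Red L₁ L₂) :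
    ∀ n, ∃ m, ht (L₂.take n) = ht (L₁.take m) := by
  induction h with
  | refl => exact fun n => ⟨n, rfl⟩
  | tail _ hstep ih =>
    intro n
    obtain ⟨m, hm⟩ := step_take hstep n
    obtain ⟨k, hk⟩ := ih m
    exact ⟨k, hm.trans hk⟩

lemma red_ht {L₁ L₂ : Lw} (h : Red L₁ L₂) : ht L₂ = ht L₁ := by
  induction h with
  | refl => rfl
  | tail _ hstep ih => exact (step_ht hstep).trans ih

lemma Good.red {L₁ L₂ : Lw} (h : Red L₁ L₂) (hG : Good L₁) : Good L₂ := by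
  refine ⟨fun n => ?_, (red_ht h).trans hG.2⟩
  obtain ⟨m, hm⟩ := red_take h n
  rw [hm]; exact hG.1 m

lemma Good.append {A B : Lw} (hA : Good A) (hB : Good B) : Good (A ++ B) := by
  refine ⟨fun n => ?_, by simp [hA.2, hB.2]⟩
  rw [List.take_append]
  rcases le_or_gt n A.length with hn | hn
  · have : n - A.length = 0 := by omega
    simp [this, hA.1 n]
  · rw [List.take_of_length_le hn.le]
    simpa [hA.2] using hB.1 (n - A.length)

lemma invRev_cons (x : Fin 2 × Bool) (L : Lw) :
    invRev (x :: L) = invRev L ++ [(x.1, !x.2)] := by simp [invRev]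

@[simp] lemma invRev_singleton (x : Fin 2 × Bool) : invRev [x] = [(x.1, !x.2)] := by
  simp [invRev]

lemma invRev_append' (A B : Lw) : invRev (A ++ B) = invRev B ++ invRev A := by
  simp [invRev]

lemma ht_invRev (L : Lw) : ht (invRev L) = -ht L := by
  induction L with
  | nil => simp [invRev]
  | cons x L ih => rw [invRev_cons]; simp [ih, wt_not]

lemma Good.invRev {L : Lw} (hL : Good L) : Good (FreeGroup.invRev L) := by
  refine ⟨fun n => ?_, by rw [ht_invRev, hL.2]; ring⟩
  have h1 : (FreeGroup.invRev L).take n = FreeGroup.invRev (L.drop (L.length - n)) := by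
    simp only [FreeGroup.invRev]
    rw [List.take_reverse, List.length_map, List.map_drop]
  rw [h1, ht_invRev]
  have h2 : ht (L.drop (L.length - n)) = ht L - ht (L.take (L.length - n)) := by
    have := ht_append (L.take (L.length - n)) (L.drop (L.length - n))
    rw [List.take_append_drop] at this
    omega
  rw [h2, hL.2]
  have := hL.1 (L.length - n)
  simp only [Set.mem_insert_iff, Set.mem_singleton_iff] at this ⊢
  omega

/-- adjacent letters don't cancel -/
def Rnc (a b : Fin 2 × Bool) : Prop := ¬(a.1 = b.1 ∧ a.2 = !b.2)

lemma reduce_eq_self_iff (L : Lw) : reduce L = L ↔ List.Chain' Rnc L := by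
  induction L with
  | nil => simp; exact List.isChain_nil
  | cons x t ih =>
    constructor
    · intro h
      rw [reduce.cons] at h
      rcases hrt : reduce t with _ | ⟨hd, tl⟩ <;> rw [hrt] at h
      · have h' : ([x] : Lw) = x :: t := h
        have ht0 : t = [] := by injection h' with h1 h2; exact h2.symm
        subst ht0; exact List.isChain_singleton x
      · have h' : (if x.1 = hd.1 ∧ x.2 = !hd.2 then tl else x :: hd :: tl) = x :: t := h
        by_cases hc : x.1 = hd.1 ∧ x.2 = !hd.2
        · rw [if_pos hc] at h'
          exfalso
          have h1 : (hd :: tl).length ≤ t.length := by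
            have := (reduce.red (L := t)).length_le
            rw [hrt] at this; exact this
          rw [h'] at h1
          simp at h1
        · rw [if_neg hc] at h'
          have ht2 : t = hd :: tl := ((List.cons.inj h').2).symm
          have hcht : List.Chain' Rnc t := ih.1 (by rw [hrt, ht2])
          rw [ht2] at hcht ⊢
          exact List.isChain_cons_cons.2 ⟨hc, hcht⟩
    · intro h
      have hred : reduce t = t := ih.2 h.tail
      rcases ht : t with _ | ⟨y, t'⟩
      · subst ht; rfl
      · have hch := List.isChain_cons_cons.1 (ht ▸ h)
        rw [ht] at hred
        rw [reduce.cons, hred]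
        show (if x.1 = y.1 ∧ x.2 = !y.2 then t' else x :: y :: t') = x :: y :: t'
        rw [if_neg hch.1]

lemma chain'_invRev {L : Lw} (h : List.Chain' Rnc L) : List.Chain' Rnc (invRev L) := by
  rw [← reduce_eq_self_iff] at h ⊢
  rw [FreeGroup.reduce_invRev, h]

lemma toWord_mk_of_chain {L : Lw} (h : List.Chain' Rnc L) : (mk L).toWord = L := by
  rw [toWord_mk, (reduce_eq_self_iff L).2 h]

lemma chain'_toWord (g : FreeGroup (Fin 2)) : List.Chain' Rnc g.toWord :=
  (reduce_eq_self_iff _).1 (reduce_toWord g)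

lemma mk_pair (i : Fin 2) (b : Bool) : mk [(i, b)] * mk [(i, !b)] = (1 : FreeGroup (Fin 2)) := by
  have : (mk [(i, b)])⁻¹ = mk [(i, !b)] := by
    rw [inv_mk]; simp [invRev]
  rw [← this, mul_inv_cancel]

lemma mk_eq_of_step {L₁ L₂ : Lw} (h : Red.Step L₁ L₂) : mk L₁ = mk L₂ := by
  rw [← quot_mk_eq_mk, ← quot_mk_eq_mk]; exact Quot.sound h

-- explicit word facts
lemma x1_eq : x₁ = mk [((0 : Fin 2), true)] := rfl
lemma x2_eq : x₂ = mk [((1 : Fin 2), true)] := rfl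
lemma x1_inv_eq : x₁⁻¹ = mk [((0 : Fin 2), false)] := by
  rw [x1_eq, inv_mk]; simp [invRev]
lemma x2_inv_eq : x₂⁻¹ = mk [((1 : Fin 2), false)] := by
  rw [x2_eq, inv_mk]; simp [invRev]
lemma gen2_eq : x₂ * x₁⁻¹ * x₂⁻¹ =
    mk [((1 : Fin 2), true), ((0 : Fin 2), false), ((1 : Fin 2), false)] := by
  rw [x2_inv_eq, x2_eq, x1_inv_eq, mul_mk, mul_mk]
  rfl

lemma x1_mem : x₁ ∈ Uα := Subgroup.subset_closure (by simp)
lemma gen2_mem : x₂ * x₁⁻¹ * x₂⁻¹ ∈ Uα := Subgroup.subset_closure (by simp)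

lemma mk_single0_mem (b : Bool) : mk [((0 : Fin 2), b)] ∈ Uα := by
  cases b
  · rw [← x1_inv_eq]; exact inv_mem x1_mem
  · rw [← x1_eq]; exact x1_mem

lemma u_mem (b : Bool) :
    mk [((1 : Fin 2), true), ((0 : Fin 2), b), ((1 : Fin 2), false)] ∈ Uα := by
  cases b
  · rw [← gen2_eq]; exact gen2_mem
  · have : mk [((1 : Fin 2), true), ((0 : Fin 2), true), ((1 : Fin 2), false)]
        = (x₂ * x₁⁻¹ * x₂⁻¹)⁻¹ := by
      rw [gen2_eq, inv_mk]; simp [invRev]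
    rw [this]; exact inv_mem gen2_mem

lemma good_mk : ∀ (N : ℕ) (L : Lw), L.length ≤ N → Good L → mk L ∈ Uα := by
  intro N
  induction N with
  | zero =>
    intro L hl _
    have : L = [] := List.length_eq_zero_iff.1 (Nat.le_zero.1 hl)
    subst this
    rw [← one_eq_mk]; exact one_mem _
  | succ N ih =>
    intro L hl hG
    rcases L with _ | ⟨⟨i, b⟩, t⟩
    · rw [← one_eq_mk]; exact one_mem _
    · fin_cases i
      · -- first letter (0,b)
        have hGt : Good t := by
          constructor
          · intro n
            have := hG.1 (n + 1)
            simpa using this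
          · have := hG.2; simpa using this
        have key : mk (((0 : Fin 2), b) :: t) = mk [((0 : Fin 2), b)] * mk t := by
          rw [mul_mk]; rfl
        show mk (((0 : Fin 2), b) :: t) ∈ Uα
        rw [key]
        exact mul_mem (mk_single0_mem b) (ih t (by simp at hl; omega) hGt)
      · cases b
        · -- first letter (1,false) : impossible
          exfalso
          have := hG.1 1
          simp [Set.mem_insert_iff] at this
        · -- first letter (1,true)
          rcases t with _ | ⟨⟨j, c⟩, t'⟩
          · exfalso; have := hG.2; simp at this
          · fin_cases j
            · -- (1,true) :: (0,c) :: t'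
              have key : mk (((1:Fin 2), true) :: ((0:Fin 2), c) :: t')
                  = mk [((1:Fin 2), true), ((0:Fin 2), c), ((1:Fin 2), false)]
                    * mk (((1:Fin 2), true) :: t') := by
                rw [mul_mk]
                have hstep : Red.Step
                    ([((1:Fin 2), true), ((0:Fin 2), c)] ++ ((1:Fin 2), false) :: ((1:Fin 2), true) :: t')
                    ([((1:Fin 2), true), ((0:Fin 2), c)] ++ t') := by
                  have := @Red.Step.not (Fin 2) [((1:Fin 2), true), ((0:Fin 2), c)] t' 1 false
                  simpa using this
                have := mk_eq_of_step hstep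
                simpa using this.symm
              have hGt : Good (((1:Fin 2), true) :: t') := by
                constructor
                · intro n
                  rcases n with _ | n
                  · simp
                  · have := hG.1 (n + 2)
                    simpa using this
                · have := hG.2; simpa using this
              show mk (((1:Fin 2), true) :: ((0:Fin 2), c) :: t') ∈ Uα
              rw [key]
              refine mul_mem (u_mem c) (ih _ ?_ hGt)
              simp at hl ⊢; omega
            · cases c
              · -- (1,true) :: (1,false) :: t'
                have key : mk (((1:Fin 2), true) :: ((1:Fin 2), false) :: t') = mk t' := by
                  have hstep : Red.Step
                      ([] ++ ((1:Fin 2), true) :: ((1:Fin 2), false) :: t') ([] ++ t') := by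
                    have := @Red.Step.not (Fin 2) [] t' 1 true
                    simpa using this
                  have := mk_eq_of_step hstep
                  simpa using this
                have hGt : Good t' := by
                  constructor
                  · intro n
                    have := hG.1 (n + 2)
                    simpa using this
                  · have := hG.2; simpa using this
                show mk (((1:Fin 2), true) :: ((1:Fin 2), false) :: t') ∈ Uα
                rw [key]
                refine ih _ ?_ hGt
                simp at hl ⊢; omega
              · -- (1,true) :: (1,true) :: t' : impossible
                exfalso
                have := hG.1 2
                simp [Set.mem_insert_iff] at this

theorem mem_Ua_iff {g : FreeGroup (Fin 2)} : g ∈ Uα ↔ Good g.toWord := by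
  constructor
  · intro hg
    refine Subgroup.closure_induction (p := fun g _ => Good g.toWord) ?_ ?_ ?_ ?_ hg
    · intro x hx
      rcases hx with hx | hx
      · subst hx
        rw [x1_eq, toWord_mk]
        constructor
        · intro n; rcases n with _ | n <;> simp
        · simp
      · simp only [Set.mem_singleton_iff] at hx
        subst hx
        rw [gen2_eq, toWord_mk]
        have hred : reduce [((1:Fin 2), true), ((0:Fin 2), false), ((1:Fin 2), false)]
            = [((1:Fin 2), true), ((0:Fin 2), false), ((1:Fin 2), false)] := by decide
        rw [hred]
        constructor
        · intro n
          rcases n with _ | _ | _ | n <;> simp [List.take_succ_cons]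
        · simp
    · simp [toWord_one]
      exact ⟨fun n => by simp, rfl⟩
    · intro u v _ _ hu hv
      have key : u * v = mk (u.toWord ++ v.toWord) := by
        rw [← mul_mk, mk_toWord, mk_toWord]
      rw [key, toWord_mk]
      exact Good.red reduce.red (hu.append hv)
    · intro u _ hu
      rw [toWord_inv]
      exact hu.invRev
  · intro h
    have := good_mk g.toWord.length g.toWord le_rfl h
    rwa [mk_toWord] at this


-- endpoint lemmas for Good words
lemma good_head {v : Lw} (h : Good v) : v.head? ≠ some ((1:Fin 2), false) := by
  intro hh
  obtain ⟨t, rfl⟩ := List.head?_eq_some_iff.1 hh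
  have := h.1 1
  simp [Set.mem_insert_iff] at this

lemma good_getLast {v : Lw} (h : Good v) : v.getLast? ≠ some ((1:Fin 2), true) := by
  intro hh
  obtain ⟨l', rfl⟩ := List.getLast?_eq_some_iff.1 hh
  have h1 : ht l' = -1 := by have := h.2; simp at this; omega
  have h2 := h.1 l'.length
  rw [List.take_left, h1] at h2
  simp [Set.mem_insert_iff] at h2

lemma good_second {v t : Lw} (h : Good v) (hv : v = ((1:Fin 2), true) :: t) :
    t.head? ≠ some ((1:Fin 2), true) := by
  intro hh
  obtain ⟨t', rfl⟩ := List.head?_eq_some_iff.1 hh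
  have := h.1 2
  rw [hv] at this
  simp [Set.mem_insert_iff] at this

lemma good_penult {v d : Lw} (h : Good v) (hv : v = d ++ [((1:Fin 2), false)]) :
    d.getLast? ≠ some ((1:Fin 2), false) := by
  intro hh
  obtain ⟨d', rfl⟩ := List.getLast?_eq_some_iff.1 hh
  have h1 : ht d' = 2 := by have := h.2; rw [hv] at this; simp at this; omega
  have h2 := h.1 d'.length
  rw [hv, List.append_assoc, List.take_left, h1] at h2
  simp [Set.mem_insert_iff] at h2

/-- the double coset condition -/
def DC (a : FreeGroup (Fin 2)) : Prop :=
  ∃ u₁ ∈ Uα, ∃ u₂ ∈ Uα, ∃ ε ∈ ({-1, 0, 1} : Set ℤ), a = u₁ * x₂ ^ ε * u₂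

lemma endsX2 {a c : FreeGroup (Fin 2)} (hc : c ∈ Uα) (hc1 : c ≠ 1)
    (hconj : a * c * a⁻¹ ∈ Uα)
    (hlast : a.toWord.getLast? = some ((1:Fin 2), true)) : DC a := by
  have hGv : Good c.toWord := mem_Ua_iff.1 hc
  have hvne : c.toWord ≠ [] := fun h => hc1 (toWord_eq_nil_iff.1 h)
  set w := a.toWord with hw
  set v := c.toWord with hv
  obtain ⟨w₀, hw₀⟩ : ∃ w₀, w = w₀ ++ [((1:Fin 2), true)] :=
    List.getLast?_eq_some_iff.1 hlast
  have hchw : List.Chain' Rnc w := chain'_toWord a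
  have hchv : List.Chain' Rnc v := chain'_toWord c
  have hchiw : List.Chain' Rnc (invRev w) := chain'_invRev hchw
  have hacw : a * c * a⁻¹ = mk ((w ++ v) ++ invRev w) := by
    conv_lhs => rw [← mk_toWord (x := a), ← mk_toWord (x := c)]
    rw [inv_mk, mul_mk, mul_mk]
  have hchW : List.Chain' Rnc ((w ++ v) ++ invRev w) := by
    refine List.IsChain.append (List.IsChain.append hchw hchv ?_) hchiw ?_
    · intro x hx y hy
      rw [Option.mem_def, hlast, Option.some_inj] at hx
      subst hx
      rintro ⟨h1, h2⟩
      obtain ⟨y1, y2⟩ := y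
      simp at h1 h2
      subst h1; subst h2
      exact good_head hGv (Option.mem_def.1 hy)
    · intro x hx y hy
      rw [Option.mem_def, List.getLast?_append_of_ne_nil _ hvne] at hx
      have hy' : y = ((1:Fin 2), false) := by
        rw [Option.mem_def] at hy
        rw [hw₀, invRev_append'] at hy
        simp at hy
        exact hy.symm
      subst hy'
      rintro ⟨h1, h2⟩
      obtain ⟨z1, z2⟩ := x
      simp at h1 h2
      subst h1; subst h2
      exact good_getLast hGv hx
  have htoW : (a * c * a⁻¹).toWord = (w ++ v) ++ invRev w := by
    rw [hacw]; exact toWord_mk_of_chain hchW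
  have hGW : Good ((w ++ v) ++ invRev w) := by
    have := mem_Ua_iff.1 hconj
    rwa [htoW] at this
  have hpw : ∀ n, n ≤ w.length → ht (w.take n) ∈ ({0, 1} : Set ℤ) := by
    intro n hn
    have := hGW.1 n
    rwa [List.take_append_of_le_length (by simp; omega),
         List.take_append_of_le_length hn] at this
  have hhtw : ht w = 0 ∨ ht w = 1 := by
    have := hpw w.length le_rfl
    rw [List.take_length] at this
    simpa [Set.mem_insert_iff] using this
  rcases hhtw with hm | hm
  · have haU : a ∈ Uα := by
      rw [mem_Ua_iff]
      refine ⟨fun n => ?_, hm⟩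
      rcases le_or_gt n w.length with hn | hn
      · exact hpw n hn
      · rw [List.take_of_length_le hn.le, hm]; exact Set.mem_insert _ _
    exact ⟨a, haU, 1, one_mem _, 0, by simp, by simp⟩
  · have hhtw₀ : ht w₀ = 0 := by
      have h3 : ht w = ht w₀ + 1 := by rw [hw₀]; simp
      omega
    have hU₀ : mk w₀ ∈ Uα := by
      rw [mem_Ua_iff, toWord_mk_of_chain (hchw.prefix ⟨[((1:Fin 2), true)], hw₀.symm⟩)]
      refine ⟨fun n => ?_, hhtw₀⟩
      rcases le_or_gt n w₀.length with hn | hn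
      · have := hpw n (by rw [hw₀]; simp; omega)
        rwa [hw₀, List.take_append_of_le_length hn] at this
      · rw [List.take_of_length_le hn.le, hhtw₀]; exact Set.mem_insert _ _
    refine ⟨mk w₀, hU₀, 1, one_mem _, 1, by simp, ?_⟩
    rw [zpow_one, mul_one, x2_eq, mul_mk, ← hw₀, hw, mk_toWord]

lemma Rnc_F_right {y : Fin 2 × Bool} (h : y ≠ ((1:Fin 2), true)) :
    Rnc ((1:Fin 2), false) y := by
  rintro ⟨h1, h2⟩
  apply h
  obtain ⟨y1, y2⟩ := y
  cases y2 <;> simp_all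

lemma Rnc_T_left {x : Fin 2 × Bool} (h : x ≠ ((1:Fin 2), false)) :
    Rnc x ((1:Fin 2), true) := by
  rintro ⟨h1, h2⟩
  apply h
  obtain ⟨x1, x2⟩ := x
  cases x2 <;> simp_all

lemma mainC {a c : FreeGroup (Fin 2)} (hc : c ∈ Uα) (hc1 : c ≠ 1)
    (hconj : a * c * a⁻¹ ∈ Uα) {r : Lw}
    (hwdec : a.toWord = ((1:Fin 2), true) :: ((1:Fin 2), true) :: r
        ++ [((1:Fin 2), false), ((1:Fin 2), false)]) : False := by
  have hGv : Good c.toWord := mem_Ua_iff.1 hc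
  have hvne : c.toWord ≠ [] := fun h => hc1 (toWord_eq_nil_iff.1 h)
  set w := a.toWord with hw
  set v := c.toWord with hv
  have hchw : List.Chain' Rnc w := chain'_toWord a
  have hchv : List.Chain' Rnc v := chain'_toWord c
  set wA : Lw := ((1:Fin 2), true) :: ((1:Fin 2), true) :: r with hwA
  set w₀ : Lw := wA ++ [((1:Fin 2), false)] with hw₀
  have hww0 : w = w₀ ++ [((1:Fin 2), false)] := by rw [hwdec, hw₀, hwA]; simp
  have hchw₀ : List.Chain' Rnc w₀ := hchw.prefix ⟨[((1:Fin 2), false)], hww0.symm⟩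
  have hchiw : List.Chain' Rnc (invRev w) := chain'_invRev hchw
  have hchiw₀ : List.Chain' Rnc (invRev w₀) := chain'_invRev hchw₀
  have hlastw : w.getLast? = some ((1:Fin 2), false) :=
    List.getLast?_eq_some_iff.2 ⟨w₀, hww0⟩
  have hlastw₀ : w₀.getLast? = some ((1:Fin 2), false) :=
    List.getLast?_eq_some_iff.2 ⟨wA, hw₀⟩
  have hiw : invRev w = ((1:Fin 2), true) :: invRev w₀ := by
    rw [hww0, invRev_append']; simp
  have hiw₀ : invRev w₀ = ((1:Fin 2), true) :: invRev wA := by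
    rw [hw₀, invRev_append']; simp
  have hheadiw : (invRev w).head? = some ((1:Fin 2), true) := by rw [hiw]; rfl
  have hheadiw₀ : (invRev w₀).head? = some ((1:Fin 2), true) := by rw [hiw₀]; rfl
  have ha : a = mk w := mk_toWord.symm
  have hai : a⁻¹ = mk (invRev w) := by rw [ha, inv_mk]
  have hai' : a⁻¹ = mk [((1:Fin 2), true)] * mk (invRev w₀) := by
    rw [hai, hiw, mul_mk]; rfl
  have ha' : a = mk w₀ * mk [((1:Fin 2), false)] := by rw [ha, hww0, mul_mk]
  have hcv : c = mk v := mk_toWord.symm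
  have hQP : mk [((1:Fin 2), false)] * mk [((1:Fin 2), true)] = (1 : FreeGroup (Fin 2)) := by
    simpa using mk_pair 1 false
  have key : ∀ W : Lw, a * c * a⁻¹ = mk W → List.Chain' Rnc W →
      W.take 2 = [((1:Fin 2), true), ((1:Fin 2), true)] → False := by
    intro W hmk hch htk
    have hGW : Good W := by
      have h' := mem_Ua_iff.1 hconj
      rwa [hmk, toWord_mk_of_chain hch] at h'
    have h2 := hGW.1 2
    rw [htk] at h2
    simp [Set.mem_insert_iff] at h2
  obtain ⟨y, t, hvc⟩ := List.exists_cons_of_ne_nil hvne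
  have hheadv : v.head? = some y := by rw [hvc]; rfl
  obtain ⟨d, z, hvd⟩ : ∃ d z, v = d ++ [z] := by
    rcases List.eq_nil_or_concat v with h | ⟨d, z, h⟩
    · exact absurd h hvne
    · exact ⟨d, z, by simpa [List.concat_eq_append] using h⟩
  have hlastv : v.getLast? = some z := List.getLast?_eq_some_iff.2 ⟨d, hvd⟩
  by_cases hy : y = ((1:Fin 2), true)
  · subst hy
    have htne : t ≠ [] := by
      rintro rfl
      have h0 := hGv.2
      rw [hvc] at h0; simp at h0
    by_cases hz : z = ((1:Fin 2), false)
    · subst hz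
      -- v = T :: m ++ [F] with m ≠ []
      have hdne : d ≠ [] := by
        rintro rfl
        have : ((1:Fin 2), true) :: t = [((1:Fin 2), false)] := hvc.symm.trans hvd
        simp at this
      obtain ⟨y', m, rfl⟩ := List.exists_cons_of_ne_nil hdne
      have hveq : ((1:Fin 2), true) :: t = y' :: (m ++ [((1:Fin 2), false)]) := by
        rw [← hvc, hvd]; simp
      have hy' : y' = ((1:Fin 2), true) := ((List.cons.inj hveq).1).symm
      subst hy'
      have ht'' : t = m ++ [((1:Fin 2), false)] := (List.cons.inj hveq).2
      have hmne : m ≠ [] := by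
        rintro rfl
        have hch2 : List.Chain' Rnc [((1:Fin 2), true), ((1:Fin 2), false)] := by
          have h' := hchv; rw [hvd] at h'; simpa using h'
        exact (List.isChain_pair.1 hch2) ⟨rfl, rfl⟩
      obtain ⟨m₁, mz, rfl⟩ : ∃ m₁ mz, m = m₁ ++ [mz] := by
        rcases List.eq_nil_or_concat m with h | ⟨m₁, mz, h⟩
        · exact absurd h hmne
        · exact ⟨m₁, mz, by simpa [List.concat_eq_append] using h⟩
      have hmlast : (m₁ ++ [mz]).getLast? = some mz :=
        List.getLast?_eq_some_iff.2 ⟨m₁, rfl⟩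
      have hmzF : mz ≠ ((1:Fin 2), false) := by
        intro hmz
        apply good_penult hGv
          (show v = (((1:Fin 2), true) :: (m₁ ++ [mz])) ++ [((1:Fin 2), false)] from hvd)
        rw [← hmz]
        exact List.getLast?_eq_some_iff.2 ⟨((1:Fin 2), true) :: m₁, by simp⟩
      have hmheadT : (m₁ ++ [mz]).head? ≠ some ((1:Fin 2), true) := by
        intro hmh
        apply good_second hGv hvc
        rw [ht'', List.head?_append_of_ne_nil _ hmne, hmh]
      have hchm : List.Chain' Rnc (m₁ ++ [mz]) := by
        have h1 : List.Chain' Rnc t := by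
          have h' := hchv; rw [hvc] at h'; exact h'.tail
        exact h1.prefix ⟨[((1:Fin 2), false)], by rw [ht'']⟩
      -- c as product
      have hc' : c = mk [((1:Fin 2), true)] * (mk (m₁ ++ [mz]) * mk [((1:Fin 2), false)]) := by
        rw [hcv, hvd, mul_mk, mul_mk]
        exact congrArg mk (by simp)
      have hmkW : a * c * a⁻¹ = mk (w₀ ++ ((m₁ ++ [mz]) ++ invRev w₀)) := by
        rw [hai', hc', ha']
        have step1 : mk w₀ * mk [((1:Fin 2), false)] *
            (mk [((1:Fin 2), true)] * (mk (m₁ ++ [mz]) * mk [((1:Fin 2), false)])) *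
            (mk [((1:Fin 2), true)] * mk (invRev w₀))
            = mk w₀ * ((mk [((1:Fin 2), false)] * mk [((1:Fin 2), true)]) *
              (mk (m₁ ++ [mz]) * ((mk [((1:Fin 2), false)] * mk [((1:Fin 2), true)]) *
                mk (invRev w₀)))) := by
          simp only [mul_assoc]
        rw [step1, hQP, one_mul, one_mul, mul_mk, mul_mk]
      refine key _ hmkW ?_ ?_
      · refine List.IsChain.append hchw₀ (List.IsChain.append hchm hchiw₀ ?_) ?_
        · intro p hp q hq
          rw [Option.mem_def, hmlast, Option.some_inj] at hp
          rw [Option.mem_def, hheadiw₀, Option.some_inj] at hq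
          subst hp; subst hq
          exact Rnc_T_left hmzF
        · intro p hp q hq
          rw [Option.mem_def, hlastw₀, Option.some_inj] at hp
          subst hp
          rw [Option.mem_def, List.head?_append_of_ne_nil _ hmne] at hq
          refine Rnc_F_right ?_
          intro hqT
          rw [hqT] at hq
          exact hmheadT hq
      · rw [hw₀, hwA]; rfl
    · -- head T, last not F : W = (w₀ ++ t) ++ invRev w
      have hc' : c = mk [((1:Fin 2), true)] * mk t := by
        rw [hcv, hvc, mul_mk]; rfl
      have hmkW : a * c * a⁻¹ = mk (w₀ ++ (t ++ invRev w)) := by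
        rw [hai, hc', ha']
        have step1 : mk w₀ * mk [((1:Fin 2), false)] *
            (mk [((1:Fin 2), true)] * mk t) * mk (invRev w)
            = mk w₀ * ((mk [((1:Fin 2), false)] * mk [((1:Fin 2), true)]) *
              (mk t * mk (invRev w))) := by
          simp only [mul_assoc]
        rw [step1, hQP, one_mul, mul_mk, mul_mk]
      have hdne : d ≠ [] := by
        rintro rfl
        have h0 : ((1:Fin 2), true) :: t = [z] := hvc.symm.trans hvd
        exact htne (List.cons.inj h0).2
      obtain ⟨y', d', rfl⟩ := List.exists_cons_of_ne_nil hdne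
      have hveq2 : ((1:Fin 2), true) :: t = y' :: (d' ++ [z]) := by
        rw [← hvc, hvd]; simp
      have ht2 : t = d' ++ [z] := (List.cons.inj hveq2).2
      have hlastt : t.getLast? = some z := List.getLast?_eq_some_iff.2 ⟨d', ht2⟩
      have hcht : List.Chain' Rnc t := by
        have h' := hchv; rw [hvc] at h'; exact h'.tail
      refine key _ hmkW ?_ ?_
      · refine List.IsChain.append hchw₀ (List.IsChain.append hcht hchiw ?_) ?_
        · intro p hp q hq
          rw [Option.mem_def, hlastt, Option.some_inj] at hp
          rw [Option.mem_def, hheadiw, Option.some_inj] at hq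
          subst hp; subst hq
          exact Rnc_T_left hz
        · intro p hp q hq
          rw [Option.mem_def, hlastw₀, Option.some_inj] at hp
          subst hp
          rw [Option.mem_def, List.head?_append_of_ne_nil _ htne] at hq
          refine Rnc_F_right ?_
          intro hqT
          rw [hqT] at hq
          exact good_second hGv hvc hq
      · rw [hw₀, hwA]; rfl
  · -- head y ≠ T
    by_cases hz : z = ((1:Fin 2), false)
    · subst hz
      -- W = w ++ (d ++ invRev w₀)
      have hdne : d ≠ [] := by
        rintro rfl
        apply good_head hGv
        rw [hvd]; rfl
      have hc' : c = mk d * mk [((1:Fin 2), false)] := by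
        rw [hcv, hvd, mul_mk]
      have hmkW : a * c * a⁻¹ = mk (w ++ (d ++ invRev w₀)) := by
        rw [hai', hc', ha]
        have step1 : mk w * (mk d * mk [((1:Fin 2), false)]) *
            (mk [((1:Fin 2), true)] * mk (invRev w₀))
            = mk w * (mk d * ((mk [((1:Fin 2), false)] * mk [((1:Fin 2), true)]) *
              mk (invRev w₀))) := by
          simp only [mul_assoc]
        rw [step1, hQP, one_mul, mul_mk, mul_mk]
      have hchd : List.Chain' Rnc d := hchv.prefix ⟨[((1:Fin 2), false)], hvd.symm⟩
      have hheadd : d.head? = some y := by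
        rw [hvd, List.head?_append_of_ne_nil _ hdne] at hheadv
        exact hheadv
      refine key _ hmkW ?_ ?_
      · refine List.IsChain.append hchw (List.IsChain.append hchd hchiw₀ ?_) ?_
        · intro p hp q hq
          rw [Option.mem_def] at hp
          rw [Option.mem_def, hheadiw₀, Option.some_inj] at hq
          subst hq
          refine Rnc_T_left ?_
          intro hpF
          exact good_penult hGv hvd (by rw [← hpF]; exact hp)
        · intro p hp q hq
          rw [Option.mem_def, hlastw, Option.some_inj] at hp
          subst hp
          rw [Option.mem_def, List.head?_append_of_ne_nil _ hdne, hheadd,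
            Option.some_inj] at hq
          subst hq
          exact Rnc_F_right hy
      · rw [hwdec]; rfl
    · -- no cancellation : W = w ++ (v ++ invRev w)
      have hmkW : a * c * a⁻¹ = mk (w ++ (v ++ invRev w)) := by
        rw [hai, hcv, ha, mul_mk, mul_mk, List.append_assoc]
      refine key _ hmkW ?_ ?_
      · refine List.IsChain.append hchw (List.IsChain.append hchv hchiw ?_) ?_
        · intro p hp q hq
          rw [Option.mem_def, hlastv, Option.some_inj] at hp
          rw [Option.mem_def, hheadiw, Option.some_inj] at hq
          subst hp; subst hq
          exact Rnc_T_left hz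
        · intro p hp q hq
          rw [Option.mem_def, hlastw, Option.some_inj] at hp
          subst hp
          rw [Option.mem_def, List.head?_append_of_ne_nil _ hvne, hheadv,
            Option.some_inj] at hq
          subst hq
          exact Rnc_F_right hy
      · rw [hwdec]; rfl

lemma mk_strip (e : Bool) (t' : Lw) :
    mk (((1:Fin 2), true) :: ((0:Fin 2), e) :: t')
      = mk [((1:Fin 2), true), ((0:Fin 2), e), ((1:Fin 2), false)]
        * mk (((1:Fin 2), true) :: t') := by
  rw [mul_mk]
  have hstep : Red.Step
      ([((1:Fin 2), true), ((0:Fin 2), e)] ++ ((1:Fin 2), false) :: ((1:Fin 2), true) :: t')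
      ([((1:Fin 2), true), ((0:Fin 2), e)] ++ t') := by
    have := @Red.Step.not (Fin 2) [((1:Fin 2), true), ((0:Fin 2), e)] t' 1 false
    simpa using this
  have := mk_eq_of_step hstep
  simpa using this.symm

lemma mk_strip_end (e : Bool) (t' : Lw) :
    mk (t' ++ [((0:Fin 2), e), ((1:Fin 2), false)])
      * mk [((1:Fin 2), true), ((0:Fin 2), !e), ((1:Fin 2), false)]
      = mk (t' ++ [((1:Fin 2), false)]) := by
  rw [mul_mk]
  have hstep1 : Red.Step
      ((t' ++ [((0:Fin 2), e)]) ++ ((1:Fin 2), false) :: ((1:Fin 2), true)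
        :: [((0:Fin 2), !e), ((1:Fin 2), false)])
      ((t' ++ [((0:Fin 2), e)]) ++ [((0:Fin 2), !e), ((1:Fin 2), false)]) := by
    have := @Red.Step.not (Fin 2) (t' ++ [((0:Fin 2), e)])
      [((0:Fin 2), !e), ((1:Fin 2), false)] 1 false
    simpa using this
  have hstep2 : Red.Step
      (t' ++ ((0:Fin 2), e) :: ((0:Fin 2), !e) :: [((1:Fin 2), false)])
      (t' ++ [((1:Fin 2), false)]) :=
    @Red.Step.not (Fin 2) t' [((1:Fin 2), false)] 0 e
  have h1 := mk_eq_of_step hstep1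
  have h2 := mk_eq_of_step hstep2
  have e1 : t' ++ [((0:Fin 2), e), ((1:Fin 2), false)]
      ++ [((1:Fin 2), true), ((0:Fin 2), !e), ((1:Fin 2), false)]
      = (t' ++ [((0:Fin 2), e)]) ++ ((1:Fin 2), false) :: ((1:Fin 2), true)
        :: [((0:Fin 2), !e), ((1:Fin 2), false)] := by simp
  have e2 : (t' ++ [((0:Fin 2), e)]) ++ [((0:Fin 2), !e), ((1:Fin 2), false)]
      = t' ++ ((0:Fin 2), e) :: ((0:Fin 2), !e) :: [((1:Fin 2), false)] := by simp
  rw [e1, h1, e2, h2]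

lemma x1_ne_one : x₁ ≠ 1 := by
  intro h
  have := congrArg FreeGroup.toWord h
  rw [x1_eq, toWord_mk, toWord_one] at this
  simp at this

lemma gen2_ne_one : x₂ * x₁⁻¹ * x₂⁻¹ ≠ 1 := by
  intro h
  apply x1_ne_one
  have h2 := congrArg (fun g => x₂⁻¹ * g * x₂) h
  rw [show x₂⁻¹ * (x₂ * x₁⁻¹ * x₂⁻¹) * x₂ = x₁⁻¹ by group] at h2
  simp only [mul_one, inv_mul_cancel, inv_eq_one] at h2
  exact h2

lemma forward : ∀ (N : ℕ) (a : FreeGroup (Fin 2)), a.toWord.length ≤ N →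
    (∃ c ∈ Uα, c ≠ 1 ∧ a * c * a⁻¹ ∈ Uα) → DC a := by
  intro N
  induction N with
  | zero =>
    intro a hl _
    have ha : a = 1 := toWord_eq_nil_iff.1 (List.length_eq_zero_iff.1 (Nat.le_zero.1 hl))
    exact ⟨1, one_mem _, 1, one_mem _, 0, by simp, by simp [ha]⟩
  | succ N ih =>
    intro a hl hex
    obtain ⟨c, hc, hc1, hconj⟩ := hex
    by_cases hL : a.toWord.getLast? = some ((1:Fin 2), true)
    · exact endsX2 hc hc1 hconj hL
    by_cases hH : a.toWord.head? = some ((1:Fin 2), false)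
    · -- pass to a⁻¹
      have hconj' : a⁻¹ * (a * c * a⁻¹) * a⁻¹⁻¹ ∈ Uα := by
        have : a⁻¹ * (a * c * a⁻¹) * a⁻¹⁻¹ = c := by group
        rwa [this]
      have hne' : a * c * a⁻¹ ≠ 1 := by
        intro h
        apply hc1
        have h2 := congrArg (fun g => a⁻¹ * g * a) h
        rw [show a⁻¹ * (a * c * a⁻¹) * a = c by group,
          show a⁻¹ * 1 * a = 1 by group] at h2
        exact h2
      have hlast' : (a⁻¹).toWord.getLast? = some ((1:Fin 2), true) := by
        obtain ⟨t, htd⟩ := List.head?_eq_some_iff.1 hH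
        rw [toWord_inv, htd, invRev_cons]
        exact List.getLast?_eq_some_iff.2 ⟨invRev t, by simp⟩
      obtain ⟨u₁, hu₁, u₂, hu₂, ε, hε, heq⟩ := endsX2 hconj hne' hconj' hlast'
      refine ⟨u₂⁻¹, inv_mem hu₂, u₁⁻¹, inv_mem hu₁, -ε, ?_, ?_⟩
      · simp only [Set.mem_insert_iff, Set.mem_singleton_iff] at hε ⊢; omega
      · rw [← inv_inv a, heq]
        rw [show (u₁ * x₂ ^ ε * u₂)⁻¹ = u₂⁻¹ * (x₂ ^ ε)⁻¹ * u₁⁻¹ by group, ← zpow_neg]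
    rcases hLs : a.toWord with _ | ⟨⟨i, b⟩, t⟩
    · exact ⟨1, one_mem _, 1, one_mem _, 0, by simp, by
        simp [toWord_eq_nil_iff.1 hLs]⟩
    · have hchL : List.Chain' Rnc (((i : Fin 2), b) :: t) := by
        rw [← hLs]; exact chain'_toWord a
      fin_cases i
      · -- strip leading x₁^±
        have hat : a = mk [((0:Fin 2), b)] * mk t := by
          conv_lhs => rw [← mk_toWord (x := a)]
          rw [hLs, mul_mk]
          rfl
        have htW : (mk t).toWord = t := toWord_mk_of_chain hchL.tail
        have hg : mk [((0:Fin 2), b)] ∈ Uα := mk_single0_mem b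
        have hconj2 : mk t * c * (mk t)⁻¹ ∈ Uα := by
          have h2 : mk t * c * (mk t)⁻¹
              = (mk [((0:Fin 2), b)])⁻¹ * (a * c * a⁻¹) * mk [((0:Fin 2), b)] := by
            rw [hat]; group
          rw [h2]
          exact mul_mem (mul_mem (inv_mem hg) hconj) hg
        have hlen : (mk t).toWord.length ≤ N := by
          rw [htW]
          rw [hLs] at hl
          simpa using hl
        obtain ⟨u₁, hu₁, u₂, hu₂, ε, hε, heq⟩ := ih (mk t) hlen ⟨c, hc, hc1, hconj2⟩
        exact ⟨mk [((0:Fin 2), b)] * u₁, mul_mem hg hu₁, u₂, hu₂, ε, hε, by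
          rw [hat, heq]; group⟩
      · cases b with
        | false => exact absurd (by rw [hLs]; rfl) hH
        | true =>
          have hLs' : a.toWord = ((1:Fin 2), true) :: t := hLs
          have hane : a.toWord ≠ [] := by rw [hLs']; simp
          obtain ⟨w', z, hwz⟩ : ∃ w' z, a.toWord = w' ++ [z] := by
            rcases List.eq_nil_or_concat a.toWord with h | ⟨w', z, h⟩
            · exact absurd h hane
            · exact ⟨w', z, by simpa [List.concat_eq_append] using h⟩
          obtain ⟨zi, zb⟩ := z
          fin_cases zi
          · -- strip trailing x₁^±
            have hat : a = mk w' * mk [((0:Fin 2), zb)] := by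
              conv_lhs => rw [← mk_toWord (x := a)]
              rw [hwz, mul_mk]
              rfl
            have hchw' : List.Chain' Rnc w' :=
              (chain'_toWord a).prefix ⟨[((0:Fin 2), zb)], hwz.symm⟩
            have htW : (mk w').toWord = w' := toWord_mk_of_chain hchw'
            have hg : mk [((0:Fin 2), zb)] ∈ Uα := mk_single0_mem zb
            have hc1' : mk [((0:Fin 2), zb)] * c * (mk [((0:Fin 2), zb)])⁻¹ ≠ 1 := by
              intro h
              apply hc1
              have h2 := congrArg
                (fun g => (mk [((0:Fin 2), zb)])⁻¹ * g * mk [((0:Fin 2), zb)]) h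
              rw [show (mk [((0:Fin 2), zb)])⁻¹ * (mk [((0:Fin 2), zb)] * c
                * (mk [((0:Fin 2), zb)])⁻¹) * mk [((0:Fin 2), zb)] = c by group,
                show (mk [((0:Fin 2), zb)])⁻¹ * 1 * mk [((0:Fin 2), zb)] = 1 by group] at h2
              exact h2
            have hcU' : mk [((0:Fin 2), zb)] * c * (mk [((0:Fin 2), zb)])⁻¹ ∈ Uα :=
              mul_mem (mul_mem hg hc) (inv_mem hg)
            have hconj2 : mk w' * (mk [((0:Fin 2), zb)] * c * (mk [((0:Fin 2), zb)])⁻¹)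
                * (mk w')⁻¹ ∈ Uα := by
              have h2 : mk w' * (mk [((0:Fin 2), zb)] * c * (mk [((0:Fin 2), zb)])⁻¹)
                  * (mk w')⁻¹ = a * c * a⁻¹ := by rw [hat]; group
              rw [h2]; exact hconj
            have hlen : (mk w').toWord.length ≤ N := by
              rw [htW]
              rw [hwz] at hl
              simpa using hl
            obtain ⟨u₁, hu₁, u₂, hu₂, ε, hε, heq⟩ :=
              ih (mk w') hlen ⟨_, hcU', hc1', hconj2⟩
            exact ⟨u₁, hu₁, u₂ * mk [((0:Fin 2), zb)], mul_mem hu₂ hg, ε, hε, by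
              rw [hat, heq]; group⟩
          · cases zb with
            | true => exact absurd (List.getLast?_eq_some_iff.2 ⟨w', hwz⟩) hL
            | false =>
              rcases t with _ | ⟨⟨j, e⟩, t'⟩
              · exact absurd (by rw [hLs']; rfl) hL
              · fin_cases j
                · -- second letter (0,e) : strip x₂ x₁^∓ x₂⁻¹ in front
                  have hLs'' : a.toWord = ((1:Fin 2), true) :: ((0:Fin 2), e) :: t' := hLs
                  have hat : a = mk [((1:Fin 2), true), ((0:Fin 2), e), ((1:Fin 2), false)]
                      * mk (((1:Fin 2), true) :: t') := by
                    conv_lhs => rw [← mk_toWord (x := a)]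
                    rw [hLs'']
                    exact mk_strip e t'
                  have hg : mk [((1:Fin 2), true), ((0:Fin 2), e), ((1:Fin 2), false)] ∈ Uα :=
                    u_mem e
                  have hconj2 : mk (((1:Fin 2), true) :: t') * c
                      * (mk (((1:Fin 2), true) :: t'))⁻¹ ∈ Uα := by
                    have h2 : mk (((1:Fin 2), true) :: t') * c
                        * (mk (((1:Fin 2), true) :: t'))⁻¹
                        = (mk [((1:Fin 2), true), ((0:Fin 2), e), ((1:Fin 2), false)])⁻¹
                          * (a * c * a⁻¹)
                          * mk [((1:Fin 2), true), ((0:Fin 2), e), ((1:Fin 2), false)] := by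
                      rw [hat]; group
                    rw [h2]
                    exact mul_mem (mul_mem (inv_mem hg) hconj) hg
                  have hlen : (mk (((1:Fin 2), true) :: t')).toWord.length ≤ N := by
                    rw [toWord_mk]
                    have h3 : (reduce (((1:Fin 2), true) :: t')).length
                        ≤ (((1:Fin 2), true) :: t').length :=
                      (reduce.red).length_le
                    rw [hLs] at hl
                    simp at hl h3 ⊢
                    omega
                  obtain ⟨u₁, hu₁, u₂, hu₂, ε, hε, heq⟩ :=
                    ih (mk (((1:Fin 2), true) :: t')) hlen ⟨c, hc, hc1, hconj2⟩
                  exact ⟨mk [((1:Fin 2), true), ((0:Fin 2), e), ((1:Fin 2), false)] * u₁,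
                    mul_mem hg hu₁, u₂, hu₂, ε, hε, by rw [hat, heq]; group⟩
                · cases e with
                  | false =>
                    exfalso
                    have := (List.isChain_cons_cons.1 hchL).1
                    exact this ⟨rfl, rfl⟩
                  | true =>
                    -- a.toWord = T :: T :: t' and ends with (1,false)
                    have hLs₂ : a.toWord
                        = ((1:Fin 2), true) :: ((1:Fin 2), true) :: t' := hLs
                    have hw'ne : w' ≠ [] := by
                      rintro rfl
                      rw [hLs₂] at hwz
                      simp at hwz
                    obtain ⟨w'', k, hwk⟩ : ∃ w'' k, w' = w'' ++ [k] := by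
                      rcases List.eq_nil_or_concat w' with h | ⟨w'', k, h⟩
                      · exact absurd h hw'ne
                      · exact ⟨w'', k, by simpa [List.concat_eq_append] using h⟩
                    obtain ⟨ki, kb⟩ := k
                    have hwz₂ : a.toWord = w'' ++ [((ki : Fin 2), kb), ((1:Fin 2), false)] := by
                      rw [hwz, hwk]; simp
                    fin_cases ki
                    · -- strip trailing x₂ x₁^± x₂⁻¹
                      have hat : a * mk [((1:Fin 2), true), ((0:Fin 2), !kb), ((1:Fin 2), false)]
                          = mk (w'' ++ [((1:Fin 2), false)]) := by
                        conv_lhs => rw [← mk_toWord (x := a)]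
                        rw [hwz₂]
                        exact mk_strip_end kb w''
                      set u := mk [((1:Fin 2), true), ((0:Fin 2), !kb), ((1:Fin 2), false)]
                        with hu
                      have hg : u ∈ Uα := u_mem (!kb)
                      have hat' : a = mk (w'' ++ [((1:Fin 2), false)]) * u⁻¹ := by
                        rw [← hat]; group
                      have hc1' : u⁻¹ * c * u ≠ 1 := by
                        intro h
                        apply hc1
                        have h2 := congrArg (fun g => u * g * u⁻¹) h
                        rw [show u * (u⁻¹ * c * u) * u⁻¹ = c by group,
                          show u * 1 * u⁻¹ = 1 by group] at h2
                        exact h2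
                      have hcU' : u⁻¹ * c * u ∈ Uα :=
                        mul_mem (mul_mem (inv_mem hg) hc) hg
                      have hconj2 : mk (w'' ++ [((1:Fin 2), false)]) * (u⁻¹ * c * u)
                          * (mk (w'' ++ [((1:Fin 2), false)]))⁻¹ ∈ Uα := by
                        have h2 : mk (w'' ++ [((1:Fin 2), false)]) * (u⁻¹ * c * u)
                            * (mk (w'' ++ [((1:Fin 2), false)]))⁻¹ = a * c * a⁻¹ := by
                          rw [hat']; group
                        rw [h2]; exact hconj
                      have hlen : (mk (w'' ++ [((1:Fin 2), false)])).toWord.length ≤ N := by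
                        rw [toWord_mk]
                        have h3 : (reduce (w'' ++ [((1:Fin 2), false)])).length
                            ≤ (w'' ++ [((1:Fin 2), false)]).length :=
                          (reduce.red).length_le
                        rw [hwz₂] at hl
                        simp at hl h3 ⊢
                        omega
                      obtain ⟨u₁, hu₁, u₂, hu₂, ε, hε, heq⟩ :=
                        ih (mk (w'' ++ [((1:Fin 2), false)])) hlen ⟨_, hcU', hc1', hconj2⟩
                      exact ⟨u₁, hu₁, u₂ * u⁻¹, mul_mem hu₂ (inv_mem hg), ε, hε, by
                        rw [hat', heq]; group⟩
                    · cases kb with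
                      | true =>
                        exfalso
                        have hsuf : List.Chain' Rnc
                            [((1:Fin 2), true), ((1:Fin 2), false)] :=
                          (chain'_toWord a).suffix ⟨w'', by rw [hwz₂]; simp⟩
                        exact (List.isChain_pair.1 hsuf) ⟨rfl, rfl⟩
                      | false =>
                        exfalso
                        rcases w'' with _ | ⟨p, w₃⟩
                        · rw [hwz₂] at hLs₂
                          simp at hLs₂
                        · rcases w₃ with _ | ⟨q, r⟩
                          · rw [hwz₂] at hLs₂
                            simp at hLs₂
                          · have hpq : a.toWord
                                = p :: q :: (r ++ [((1:Fin 2), false), ((1:Fin 2), false)]) := by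
                              rw [hwz₂]; simp
                            have hcmp := hLs₂.symm.trans hpq
                            have hp : p = ((1:Fin 2), true) := (List.cons.inj hcmp).1.symm
                            have hq : q = ((1:Fin 2), true) :=
                              (List.cons.inj (List.cons.inj hcmp).2).1.symm
                            apply mainC hc hc1 hconj (r := r)
                            rw [hpq, hp, hq]
                            simp

end UaProof

open UaProof in
/-- `aU_αa⁻¹ ∩ U_α` is nontrivial iff `a = u₁·x₂^ε·u₂` with `u₁, u₂ ∈ U_α`, `ε ∈ {-1,0,1}`. -/
theorem conj_Ualpha_inter_Ualpha_nontrivial_iff (a : FreeGroup (Fin 2)) :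
    Subgroup.map ((MulAut.conj a).toMonoidHom) Uα ⊓ Uα ≠ ⊥ ↔
      ∃ u₁ ∈ Uα, ∃ u₂ ∈ Uα, ∃ ε ∈ ({-1, 0, 1} : Set ℤ), a = u₁ * x₂ ^ ε * u₂ := by
  constructor
  · intro hne
    obtain ⟨⟨g, hg⟩, hgne⟩ := Subgroup.ne_bot_iff_exists_ne_one.1 hne
    have hg1 : g ≠ 1 := fun h => hgne (Subtype.ext h)
    obtain ⟨hgmap, hgU⟩ := Subgroup.mem_inf.1 hg
    obtain ⟨c, hcU, hce⟩ := Subgroup.mem_map.1 hgmap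
    have hce' : a * c * a⁻¹ = g := by rw [← hce]; simp [MulAut.conj_apply]
    have hc1 : c ≠ 1 := by
      rintro rfl
      apply hg1
      rw [← hce']; group
    exact forward a.toWord.length a le_rfl ⟨c, hcU, hc1, by rw [hce']; exact hgU⟩
  · rintro ⟨u₁, hu₁, u₂, hu₂, ε, hε, rfl⟩
    set aa := u₁ * x₂ ^ ε * u₂ with haa
    have hex : ∃ q, q ∈ Uα ∧ q ≠ 1 ∧ aa * (u₂⁻¹ * q * u₂) * aa⁻¹ ∈ Uα := by
      simp only [Set.mem_insert_iff, Set.mem_singleton_iff] at hε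
      rcases hε with rfl | rfl | rfl
      · refine ⟨(x₂ * x₁⁻¹ * x₂⁻¹)⁻¹, inv_mem gen2_mem, inv_ne_one.2 gen2_ne_one, ?_⟩
        have h2 : aa * (u₂⁻¹ * (x₂ * x₁⁻¹ * x₂⁻¹)⁻¹ * u₂) * aa⁻¹ = u₁ * x₁ * u₁⁻¹ := by
          rw [haa]; group
        rw [h2]; exact mul_mem (mul_mem hu₁ x1_mem) (inv_mem hu₁)
      · refine ⟨x₁, x1_mem, x1_ne_one, ?_⟩
        have h2 : aa * (u₂⁻¹ * x₁ * u₂) * aa⁻¹ = u₁ * x₁ * u₁⁻¹ := by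
          rw [haa]; group
        rw [h2]; exact mul_mem (mul_mem hu₁ x1_mem) (inv_mem hu₁)
      · refine ⟨x₁, x1_mem, x1_ne_one, ?_⟩
        have h2 : aa * (u₂⁻¹ * x₁ * u₂) * aa⁻¹ = u₁ * (x₂ * x₁⁻¹ * x₂⁻¹)⁻¹ * u₁⁻¹ := by
          rw [haa]; group
        rw [h2]; exact mul_mem (mul_mem hu₁ (inv_mem gen2_mem)) (inv_mem hu₁)
    obtain ⟨q, hqU, hq1, hconj⟩ := hex
    set cc := u₂⁻¹ * q * u₂ with hcc
    have hccU : cc ∈ Uα := mul_mem (mul_mem (inv_mem hu₂) hqU) hu₂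
    have hcc1 : cc ≠ 1 := by
      intro h
      apply hq1
      have h2 := congrArg (fun g => u₂ * g * u₂⁻¹) h
      rw [hcc, show u₂ * (u₂⁻¹ * q * u₂) * u₂⁻¹ = q by group,
        show u₂ * 1 * u₂⁻¹ = 1 by group] at h2
      exact h2
    intro hbot
    have hmem : aa * cc * aa⁻¹ ∈ Subgroup.map ((MulAut.conj aa).toMonoidHom) Uα ⊓ Uα := by
      refine Subgroup.mem_inf.2 ⟨?_, hconj⟩
      exact Subgroup.mem_map.2 ⟨cc, hccU, by simp [MulAut.conj_apply]⟩
    rw [hbot] at hmem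
    have hone := Subgroup.mem_bot.1 hmem
    apply hcc1
    have h2 := congrArg (fun g => aa⁻¹ * g * aa) hone
    rw [show aa⁻¹ * (aa * cc * aa⁻¹) * aa = cc by group,
      show aa⁻¹ * 1 * aa = 1 by group] at h2
    exact h2
end

section
/- In the free group F(x₁, x₂), the subgroup U_α = ⟨x₁, x₂x₁⁻¹x₂⁻¹⟩ is self-normalizing: its normalizer in F(x₁,x₂) equals U_α itself. -/
open FreeGroup

namespace SelfNorm

abbrev L := ℤ × Bool

def inv' (a : L) : L := (a.1, !a.2)

@[simp] lemma inv'_inv' (a : L) : inv' (inv' a) = a := by simp [inv']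

def Red (l : List L) : Prop := l.Chain' (fun x y => y ≠ inv' x)

def lastOK : List L → Prop
  | [] => True
  | [a] => ¬(a.1 = 0 ∨ a.1 = 1)
  | _ :: b :: t => lastOK (b :: t)

lemma lastOK_tail {b : L} {t : List L} (h : lastOK (b :: t)) : lastOK t := by
  cases t with
  | nil => trivial
  | cons c t' => exact h

def push (a : L) : List L → List L
  | [] => if a.1 = 0 ∨ a.1 = 1 then [] else [a]
  | b :: t => if b = inv' a then t else a :: b :: t

lemma push_ok (a : L) (l : List L) (h1 : Red l) (h2 : lastOK l) :
    Red (push a l) ∧ lastOK (push a l) := by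
  match l with
  | [] =>
    by_cases h : a.1 = 0 ∨ a.1 = 1
    · simp [push, h, Red, lastOK, List.Chain']
    · simpa [push, h, Red, lastOK, List.Chain'] using h
  | b :: t =>
    by_cases h : b = inv' a
    · simp only [push, if_pos h]
      exact ⟨h1.tail, lastOK_tail h2⟩
    · simp only [push, if_neg h]
      refine ⟨List.isChain_cons_cons.mpr ⟨h, h1⟩, ?_⟩
      exact h2

lemma push_push (a : L) (l : List L) (h1 : Red l) (h2 : lastOK l) :
    push a (push (inv' a) l) = l := by
  match l with
  | [] =>
    by_cases h : a.1 = 0 ∨ a.1 = 1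
    · have h' : (inv' a).1 = 0 ∨ (inv' a).1 = 1 := h
      simp [push, h, h']
    · have h' : ¬((inv' a).1 = 0 ∨ (inv' a).1 = 1) := h
      simp [push, h, h']
  | b :: t =>
    by_cases h : b = a
    · subst h
      have : b = inv' (inv' b) := by simp
      simp only [push, if_pos this]
      match t with
      | [] =>
        have hb : ¬(b.1 = 0 ∨ b.1 = 1) := h2
        simp [push, hb]
      | c :: t' =>
        have hc : c ≠ inv' b := (List.isChain_cons_cons.mp h1).1
        simp [push, hc]
    · simp [push, h]

lemma push_fix {a : L} {l : List L} (h : push a l = l) :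
    l = [] ∧ (a.1 = 0 ∨ a.1 = 1) := by
  match l with
  | [] =>
    by_cases hc : a.1 = 0 ∨ a.1 = 1
    · exact ⟨rfl, hc⟩
    · simp [push, hc] at h
  | b :: t =>
    by_cases hc : b = inv' a
    · simp only [push, if_pos hc] at h
      exact absurd h.symm (List.cons_ne_self b t)
    · simp only [push, if_neg hc] at h
      have := congrArg List.length h
      simp at this

def Y := {l : List L // Red l ∧ lastOK l}

abbrev X := ℤ × Y

def pushY (a : L) (y : Y) : Y := ⟨push a y.1, push_ok a y.1 y.2.1 y.2.2⟩

lemma pushY_pushY (a : L) (y : Y) : pushY a (pushY (inv' a) y) = y :=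
  Subtype.ext (push_push a y.1 y.2.1 y.2.2)

def π₁ : Equiv.Perm X where
  toFun v := (v.1, pushY (-v.1, true) v.2)
  invFun v := (v.1, pushY (-v.1, false) v.2)
  left_inv v := by
    have h : inv' (-v.1, false) = (-v.1, true) := by simp [inv']
    have := pushY_pushY (-v.1, false) v.2
    rw [h] at this
    exact Prod.ext rfl this
  right_inv v := by
    have h : inv' (-v.1, true) = (-v.1, false) := by simp [inv']
    have := pushY_pushY (-v.1, true) v.2
    rw [h] at this
    exact Prod.ext rfl this

def π₂ : Equiv.Perm X where
  toFun v := (v.1 + 1, v.2)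
  invFun v := (v.1 - 1, v.2)
  left_inv v := by simp
  right_inv v := by simp

@[simp] lemma π₁_apply (v : X) : π₁ v = (v.1, pushY (-v.1, true) v.2) := rfl
@[simp] lemma π₁_inv_apply (v : X) : π₁⁻¹ v = (v.1, pushY (-v.1, false) v.2) := rfl
@[simp] lemma π₂_apply (v : X) : π₂ v = (v.1 + 1, v.2) := rfl
@[simp] lemma π₂_inv_apply (v : X) : π₂⁻¹ v = (v.1 - 1, v.2) := rfl

noncomputable def φ : FreeGroup (Fin 2) →* Equiv.Perm X := FreeGroup.lift ![π₁, π₂]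

@[simp] lemma φ_x₁ : φ x₁ = π₁ := by
  simp [φ, x₁, FreeGroup.lift_apply_of]

@[simp] lemma φ_x₂ : φ x₂ = π₂ := by
  simp [φ, x₂, FreeGroup.lift_apply_of]

noncomputable def letterF (a : L) : FreeGroup (Fin 2) :=
  x₂ ^ a.1 * (if a.2 then x₁ else x₁⁻¹) * x₂ ^ (-a.1)

noncomputable def word (l : List L) : FreeGroup (Fin 2) := (l.map letterF).prod

@[simp] lemma word_nil : word [] = 1 := rfl

@[simp] lemma word_cons (a : L) (l : List L) : word (a :: l) = letterF a * word l := by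
  simp [word]

lemma letterF_inv (a : L) : letterF (inv' a) = (letterF a)⁻¹ := by
  obtain ⟨n, b⟩ := a
  cases b <;> simp [letterF, inv'] <;> group

lemma x1_mem : x₁ ∈ Uα := Subgroup.subset_closure (by simp)

lemma w_mem : x₂ * x₁⁻¹ * x₂⁻¹ ∈ Uα := Subgroup.subset_closure (by simp)

lemma letter_mem (a : L) (h : a.1 = 0 ∨ a.1 = 1) : letterF a ∈ Uα := by
  obtain ⟨n, b⟩ := a
  rcases h with h | h <;> subst h <;> cases b
  · have : letterF ((0 : ℤ), false) = x₁⁻¹ := by simp [letterF]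
    rw [this]; exact inv_mem x1_mem
  · have : letterF ((0 : ℤ), true) = x₁ := by simp [letterF]
    rw [this]; exact x1_mem
  · have : letterF ((1 : ℤ), false) = x₂ * x₁⁻¹ * x₂⁻¹ := by
      simp [letterF]
    rw [this]; exact w_mem
  · have : letterF ((1 : ℤ), true) = (x₂ * x₁⁻¹ * x₂⁻¹)⁻¹ := by
      simp [letterF]; group
    rw [this]; exact inv_mem w_mem

lemma step (a : L) (l : List L) (h1 : Red l) (h2 : lastOK l) :
    (word (push a l))⁻¹ * letterF a * word l ∈ Uα := by
  match l with
  | [] =>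
    by_cases h : a.1 = 0 ∨ a.1 = 1
    · simp only [push, if_pos h, word_nil, inv_one, one_mul, mul_one]
      exact letter_mem a h
    · simp only [push, if_neg h, word_nil, mul_one]
      have : (word [a])⁻¹ * letterF a = 1 := by simp [word]
      rw [this]; exact one_mem _
  | b :: t =>
    by_cases h : b = inv' a
    · subst h
      have hp : push a (inv' a :: t) = t := by simp [push]
      rw [hp, word_cons, letterF_inv]
      have : (word t)⁻¹ * letterF a * ((letterF a)⁻¹ * word t) = 1 := by group
      rw [this]; exact one_mem _
    · have hp : push a (b :: t) = a :: b :: t := by simp [push, h]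
      rw [hp, word_cons, word_cons]
      have : (letterF a * (letterF b * word t))⁻¹ * letterF a * (letterF b * word t) = 1 := by
        group
      rw [this]; exact one_mem _

noncomputable def f (v : X) : FreeGroup (Fin 2) := x₂ ^ v.1 * word v.2.1

lemma key (g : FreeGroup (Fin 2)) : ∀ v : X, (f (φ g v))⁻¹ * g * f v ∈ Uα := by
  induction g using FreeGroup.induction_on with
  | C1 =>
    intro v
    simp only [_root_.map_one, Equiv.Perm.one_apply, mul_one]
    rw [inv_mul_cancel]; exact one_mem _
  | of i =>
    intro v
    fin_cases i
    · -- generator 0, i.e. x₁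
      obtain ⟨k, l, hl⟩ := v
      show (f (φ x₁ (k, ⟨l, hl⟩)))⁻¹ * x₁ * f (k, ⟨l, hl⟩) ∈ Uα
      rw [φ_x₁]
      have heq : (f (π₁ (k, ⟨l, hl⟩)))⁻¹ * x₁ * f (k, ⟨l, hl⟩)
          = (word (push (-k, true) l))⁻¹ * letterF (-k, true) * word l := by
        show (x₂ ^ k * word (push (-k, true) l))⁻¹ * x₁ * (x₂ ^ k * word l)
            = (word (push (-k, true) l))⁻¹ * letterF (-k, true) * word l
        have : letterF (-k, true) = x₂ ^ (-k) * x₁ * x₂ ^ k := by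
          simp [letterF]
        rw [this]
        group
      rw [heq]
      exact step (-k, true) l hl.1 hl.2
    · -- generator 1, i.e. x₂
      obtain ⟨k, l, hl⟩ := v
      show (f (φ x₂ (k, ⟨l, hl⟩)))⁻¹ * x₂ * f (k, ⟨l, hl⟩) ∈ Uα
      rw [φ_x₂]
      have heq : (f (π₂ (k, ⟨l, hl⟩)))⁻¹ * x₂ * f (k, ⟨l, hl⟩) = 1 := by
        show (x₂ ^ (k + 1) * word l)⁻¹ * x₂ * (x₂ ^ k * word l) = 1
        group
      rw [heq]; exact one_mem _
  | inv_of i h =>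
    intro v
    show (f (φ (FreeGroup.of i)⁻¹ v))⁻¹ * (FreeGroup.of i)⁻¹ * f v ∈ Uα
    rw [_root_.map_inv]
    have hv : (f (φ (FreeGroup.of i) ((φ (FreeGroup.of i))⁻¹ v)))⁻¹ * FreeGroup.of i *
        f ((φ (FreeGroup.of i))⁻¹ v) ∈ Uα := h ((φ (FreeGroup.of i))⁻¹ v)
    have hfix : φ (FreeGroup.of i) ((φ (FreeGroup.of i))⁻¹ v) = v := by
      rw [← Equiv.Perm.mul_apply, mul_inv_cancel, Equiv.Perm.one_apply]
    rw [hfix] at hv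
    have hm := inv_mem hv
    have heq : ((f v)⁻¹ * FreeGroup.of i * f ((φ (FreeGroup.of i))⁻¹ v))⁻¹
        = (f ((φ (FreeGroup.of i))⁻¹ v))⁻¹ * (FreeGroup.of i)⁻¹ * f v := by group
    rw [heq] at hm
    exact hm
  | mul g h hg hh =>
    intro v
    have h1 := hg (φ h v)
    have h2 := hh v
    have heq : (f (φ (g * h) v))⁻¹ * (g * h) * f v
        = ((f (φ g (φ h v)))⁻¹ * g * f (φ h v)) * ((f (φ h v))⁻¹ * h * f v) := by
      rw [_root_.map_mul]
      simp only [Equiv.Perm.mul_apply]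
      group
    rw [heq]
    exact mul_mem h1 h2

def ok_nil : Red ([] : List L) ∧ lastOK ([] : List L) := ⟨List.isChain_nil, trivial⟩

def p : X := (0, ⟨[], ok_nil⟩)

lemma π₁_fixes_p : π₁ p = p := by
  apply Prod.ext rfl
  apply Subtype.ext
  show push (-(0:ℤ), true) [] = []
  simp [push]

lemma w_fixes_p : φ (x₂ * x₁⁻¹ * x₂⁻¹) p = p := by
  rw [_root_.map_mul, _root_.map_mul, _root_.map_inv, _root_.map_inv, φ_x₁, φ_x₂]
  simp only [Equiv.Perm.mul_apply]
  have h1 : π₂⁻¹ p = ((-1 : ℤ), ⟨[], ok_nil⟩) := by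
    apply Prod.ext
    · show (0 : ℤ) - 1 = -1; ring
    · rfl
  rw [h1]
  have h2 : π₁⁻¹ ((-1 : ℤ), (⟨[], ok_nil⟩ : Y)) = ((-1 : ℤ), ⟨[], ok_nil⟩) := by
    apply Prod.ext rfl
    apply Subtype.ext
    show push (-(-1:ℤ), false) [] = []
    simp [push]
  rw [h2]
  apply Prod.ext
  · show (-1 : ℤ) + 1 = 0; ring
  · rfl

lemma fix_lemma (v : X) (h1 : π₁ v = v) (h2 : φ (x₂ * x₁⁻¹ * x₂⁻¹) v = v) : v = p := by
  have e1 : push (-v.1, true) v.2.1 = v.2.1 := by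
    have := congrArg Prod.snd h1
    exact congrArg Subtype.val this
  obtain ⟨hnil, hk⟩ := push_fix e1
  rw [_root_.map_mul, _root_.map_mul, _root_.map_inv, _root_.map_inv, φ_x₁, φ_x₂] at h2
  simp only [Equiv.Perm.mul_apply] at h2
  have e2 : π₁⁻¹ (π₂⁻¹ v) = π₂⁻¹ v := by
    have := congrArg (π₂⁻¹ : Equiv.Perm X) h2
    rwa [← Equiv.Perm.mul_apply, inv_mul_cancel, Equiv.Perm.one_apply] at this
  have e3 : π₁ (π₂⁻¹ v) = π₂⁻¹ v := by
    have := congrArg (π₁ : Equiv.Perm X) e2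
    rw [← Equiv.Perm.mul_apply, mul_inv_cancel, Equiv.Perm.one_apply] at this
    exact this.symm
  have e4 : push (-(v.1 - 1), true) v.2.1 = v.2.1 := by
    have := congrArg Prod.snd e3
    exact congrArg Subtype.val this
  obtain ⟨-, hk2⟩ := push_fix e4
  have hv1 : v.1 = 0 := by
    simp only at hk hk2
    omega
  obtain ⟨k, y⟩ := v
  simp only at hv1 hnil
  subst hv1
  show ((0 : ℤ), y) = ((0 : ℤ), (⟨[], ok_nil⟩ : Y))
  exact Prod.ext rfl (Subtype.ext hnil)

lemma stab_p : ∀ u ∈ Uα, φ u p = p := by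
  have hle : Uα ≤ Subgroup.comap φ (MulAction.stabilizer (Equiv.Perm X) p) := by
    rw [Uα, Subgroup.closure_le]
    intro s hs
    simp only [Set.mem_insert_iff, Set.mem_singleton_iff] at hs
    rcases hs with rfl | rfl
    · show φ x₁ • p = p
      simpa [φ_x₁] using π₁_fixes_p
    · show φ (x₂ * x₁⁻¹ * x₂⁻¹) • p = p
      simpa using w_fixes_p
  intro u hu
  exact hle hu

end SelfNorm

open SelfNorm in
/-- `U_α` is self-normalizing in the free group on two generators. -/
theorem Ualpha_self_normalizing : Subgroup.normalizer (Uα : Set (FreeGroup (Fin 2))) = Uα := by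
  apply le_antisymm _ Subgroup.le_normalizer
  intro g hg
  rw [Subgroup.mem_normalizer_iff] at hg
  have h1 : g⁻¹ * x₁ * g ∈ Uα := by
    apply (hg (g⁻¹ * x₁ * g)).mpr
    have : g * (g⁻¹ * x₁ * g) * g⁻¹ = x₁ := by group
    rw [this]; exact x1_mem
  have h2 : g⁻¹ * (x₂ * x₁⁻¹ * x₂⁻¹) * g ∈ Uα := by
    apply (hg _).mpr
    have : g * (g⁻¹ * (x₂ * x₁⁻¹ * x₂⁻¹) * g) * g⁻¹ = x₂ * x₁⁻¹ * x₂⁻¹ := by group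
    rw [this]; exact w_mem
  have hfix1 : π₁ (φ g p) = φ g p := by
    rw [← φ_x₁, ← Equiv.Perm.mul_apply, ← _root_.map_mul]
    have : x₁ * g = g * (g⁻¹ * x₁ * g) := by group
    rw [this, _root_.map_mul, Equiv.Perm.mul_apply, stab_p _ h1]
  have hfix2 : φ (x₂ * x₁⁻¹ * x₂⁻¹) (φ g p) = φ g p := by
    rw [← Equiv.Perm.mul_apply, ← _root_.map_mul]
    have : (x₂ * x₁⁻¹ * x₂⁻¹) * g = g * (g⁻¹ * (x₂ * x₁⁻¹ * x₂⁻¹) * g) := by group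
    rw [this, _root_.map_mul, Equiv.Perm.mul_apply, stab_p _ h2]
  have hp : φ g p = p := fix_lemma _ hfix1 hfix2
  have := key g p
  rw [hp] at this
  have hfp : f p = 1 := by
    show x₂ ^ (0 : ℤ) * word [] = 1
    simp
  rw [hfp] at this
  simpa using this
end

section
/- In the free group F(x₁, x₂), the subgroup U_ω = ⟨x₂, x₂x₁⁻¹x₂⁻¹x₁x₂⁻¹⟩ is self-normalizing: its normalizer in F(x₁,x₂) equals U_ω itself. -/
open FreeGroup

noncomputable def Uω : Subgroup (FreeGroup (Fin 2)) :=
  Subgroup.closure {x₂, x₂ * x₁⁻¹ * x₂⁻¹ * x₁ * x₂⁻¹}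

namespace Uomega

abbrev W := List (ℤ × Bool)

/-- Invariant: the word is reduced and does not end in letter `a₀` or `a₁`. -/
def Inv : W → Prop
  | [] => True
  | [(n, _)] => n ≠ 0 ∧ n ≠ 1
  | (n, b) :: x :: t => (n = x.1 → b = x.2) ∧ Inv (x :: t)

lemma inv_tail : ∀ {w : W} {x}, Inv (x :: w) → Inv w
  | [], _, _ => trivial
  | _ :: _, _, h => h.2

def fA (m : ℤ) : W → W
  | [] => if m = 0 ∨ m = 1 then [] else [(m, true)]
  | (n, b) :: t => if n = m ∧ b = false then t else (m, true) :: (n, b) :: t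

def gA (m : ℤ) : W → W
  | [] => if m = 0 ∨ m = 1 then [] else [(m, false)]
  | (n, b) :: t => if n = m ∧ b = true then t else (m, false) :: (n, b) :: t

lemma inv_fA (m : ℤ) : ∀ (w : W), Inv w → Inv (fA m w)
  | [], _ => by
    simp only [fA]
    split
    · trivial
    · next hc =>
      push_neg at hc
      exact hc
  | (n, b) :: t, h => by
    simp only [fA]
    split
    · exact inv_tail h
    · next hc =>
      refine ⟨?_, h⟩
      intro hmn
      rcases Bool.eq_false_or_eq_true b with hb | hb
      · exact hb.symm
      · exact absurd ⟨hmn.symm, hb⟩ hc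

lemma inv_gA (m : ℤ) : ∀ (w : W), Inv w → Inv (gA m w)
  | [], _ => by
    simp only [gA]
    split
    · trivial
    · next hc =>
      push_neg at hc
      exact hc
  | (n, b) :: t, h => by
    simp only [gA]
    split
    · exact inv_tail h
    · next hc =>
      refine ⟨?_, h⟩
      intro hmn
      rcases Bool.eq_false_or_eq_true b with hb | hb
      · exact absurd ⟨hmn.symm, hb⟩ hc
      · exact hb.symm

lemma gA_fA (m : ℤ) : ∀ (w : W), Inv w → gA m (fA m w) = w
  | [], _ => by
    simp only [fA]
    split
    · next hm => simp only [gA, if_pos hm]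
    · simp [gA]
  | (n, b) :: t, h => by
    simp only [fA]
    split
    · next hc =>
      obtain ⟨rfl, rfl⟩ := hc
      match t, h with
      | [], h =>
        simp only [gA]
        rw [if_neg]
        intro hm
        exact absurd hm (by push_neg; exact h)
      | (n', b') :: t', h =>
        simp only [gA]
        rw [if_neg]
        rintro ⟨rfl, rfl⟩
        have := h.1 rfl
        simp at this
    · simp [gA]

lemma fA_gA (m : ℤ) : ∀ (w : W), Inv w → fA m (gA m w) = w
  | [], _ => by
    simp only [gA]
    split
    · next hm => simp only [fA, if_pos hm]
    · simp [fA]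
  | (n, b) :: t, h => by
    simp only [gA]
    split
    · next hc =>
      obtain ⟨rfl, rfl⟩ := hc
      match t, h with
      | [], h =>
        simp only [fA]
        rw [if_neg]
        intro hm
        exact absurd hm (by push_neg; exact h)
      | (n', b') :: t', h =>
        simp only [fA]
        rw [if_neg]
        rintro ⟨rfl, rfl⟩
        have := h.1 rfl
        simp at this
    · simp [fA]

def X : Type := {p : ℤ × W // Inv p.2}

def p₀ : X := ⟨(0, []), trivial⟩

def σA : Equiv.Perm X where
  toFun p := ⟨(p.1.1 + 1, p.1.2), p.2⟩
  invFun p := ⟨(p.1.1 - 1, p.1.2), p.2⟩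
  left_inv := fun ⟨⟨m, w⟩, h⟩ => Subtype.ext (by simp)
  right_inv := fun ⟨⟨m, w⟩, h⟩ => Subtype.ext (by simp)

def σB : Equiv.Perm X where
  toFun p := ⟨(p.1.1, fA p.1.1 p.1.2), inv_fA _ _ p.2⟩
  invFun p := ⟨(p.1.1, gA p.1.1 p.1.2), inv_gA _ _ p.2⟩
  left_inv := fun ⟨⟨m, w⟩, h⟩ => Subtype.ext (by simp [gA_fA m w h])
  right_inv := fun ⟨⟨m, w⟩, h⟩ => Subtype.ext (by simp [fA_gA m w h])

noncomputable def Φ : FreeGroup (Fin 2) →* Equiv.Perm X :=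
  FreeGroup.lift (fun i => if i = 0 then σA else σB)

lemma Φx₁ : Φ x₁ = σA := by simp [Φ, x₁, FreeGroup.lift_apply_of]

lemma Φx₂ : Φ x₂ = σB := by
  simp only [Φ, x₂, FreeGroup.lift_apply_of]
  norm_num

noncomputable def a (n : ℤ) : FreeGroup (Fin 2) := x₁ ^ (-n) * x₂ * x₁ ^ n

noncomputable def ρ : W → FreeGroup (Fin 2)
  | [] => 1
  | (n, true) :: t => a n * ρ t
  | (n, false) :: t => (a n)⁻¹ * ρ t

noncomputable def rep (p : X) : FreeGroup (Fin 2) := x₁ ^ p.1.1 * ρ p.1.2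

lemma mem_x₂ : x₂ ∈ Uω := Subgroup.subset_closure (Set.mem_insert _ _)

lemma mem_t : x₂ * x₁⁻¹ * x₂⁻¹ * x₁ * x₂⁻¹ ∈ Uω :=
  Subgroup.subset_closure (Set.mem_insert_of_mem _ rfl)

lemma mem_b : x₁⁻¹ * x₂ * x₁ ∈ Uω := by
  have h : x₁⁻¹ * x₂ * x₁ = x₂⁻¹ * (x₂ * x₁⁻¹ * x₂⁻¹ * x₁ * x₂⁻¹)⁻¹ * x₂ := by group
  rw [h]
  exact mul_mem (mul_mem (inv_mem mem_x₂) (inv_mem mem_t)) mem_x₂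

lemma schreier (g : FreeGroup (Fin 2)) : ∀ p : X, (rep (Φ g p))⁻¹ * g * rep p ∈ Uω := by
  induction g using FreeGroup.induction_on with
  | C1 => intro p; simp [one_mem]
  | of i =>
    intro p
    obtain ⟨⟨m, w⟩, hw⟩ := p
    have hi : i = 0 ∨ i = 1 := by omega
    rcases hi with rfl | rfl
    · -- generator x₁
      have hΦ : Φ (FreeGroup.of 0) = σA := Φx₁
      rw [hΦ]
      have : (rep (σA ⟨(m, w), hw⟩))⁻¹ * (FreeGroup.of 0 : FreeGroup (Fin 2)) * rep ⟨(m, w), hw⟩ = 1 := by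
        show (x₁ ^ (m + 1) * ρ w)⁻¹ * x₁ * (x₁ ^ m * ρ w) = 1
        have hx : x₁ = x₁ ^ (1 : ℤ) := (zpow_one x₁).symm
        rw [hx]
        group
      rw [this]; exact one_mem _
    · -- generator x₂
      have hΦ : Φ (FreeGroup.of 1) = σB := Φx₂
      rw [hΦ]
      show (rep ⟨(m, fA m w), _⟩)⁻¹ * x₂ * rep ⟨(m, w), hw⟩ ∈ Uω
      match w with
      | [] =>
        simp only [fA]
        split
        · next hm =>
          show (x₁ ^ m * ρ [])⁻¹ * x₂ * (x₁ ^ m * ρ []) ∈ Uω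
          rcases hm with rfl | rfl
          · have : (x₁ ^ (0:ℤ) * ρ [])⁻¹ * x₂ * (x₁ ^ (0:ℤ) * ρ []) = x₂ := by
              simp [ρ]
            rw [this]; exact mem_x₂
          · have : (x₁ ^ (1:ℤ) * ρ [])⁻¹ * x₂ * (x₁ ^ (1:ℤ) * ρ []) = x₁⁻¹ * x₂ * x₁ := by
              simp [ρ]
            rw [this]; exact mem_b
        · show (x₁ ^ m * ρ [(m, true)])⁻¹ * x₂ * (x₁ ^ m * ρ []) ∈ Uω
          have : (x₁ ^ m * ρ [(m, true)])⁻¹ * x₂ * (x₁ ^ m * ρ []) = 1 := by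
            simp only [ρ, a]
            group
          rw [this]; exact one_mem _
      | (n, b) :: t =>
        simp only [fA]
        split
        · next hc =>
          obtain ⟨rfl, rfl⟩ := hc
          show (x₁ ^ n * ρ t)⁻¹ * x₂ * (x₁ ^ n * ρ ((n, false) :: t)) ∈ Uω
          have : (x₁ ^ n * ρ t)⁻¹ * x₂ * (x₁ ^ n * ρ ((n, false) :: t)) = 1 := by
            show (x₁ ^ n * ρ t)⁻¹ * x₂ * (x₁ ^ n * ((a n)⁻¹ * ρ t)) = 1
            generalize ρ t = y
            simp only [a]
            group
          rw [this]; exact one_mem _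
        · show (x₁ ^ m * ρ ((m, true) :: (n, b) :: t))⁻¹ * x₂ * (x₁ ^ m * ρ ((n, b) :: t)) ∈ Uω
          have : (x₁ ^ m * ρ ((m, true) :: (n, b) :: t))⁻¹ * x₂ * (x₁ ^ m * ρ ((n, b) :: t)) = 1 := by
            show (x₁ ^ m * (a m * ρ ((n, b) :: t)))⁻¹ * x₂ * (x₁ ^ m * ρ ((n, b) :: t)) = 1
            generalize ρ ((n, b) :: t) = y
            simp only [a]
            group
          rw [this]; exact one_mem _
  | inv_of i ih =>
    intro p
    have h2 := ih ((Φ (FreeGroup.of i))⁻¹ p)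
    rw [show ∀ (e : Equiv.Perm X) x, e (e⁻¹ x) = x from fun e x => Equiv.apply_symm_apply e x] at h2
    have e : (rep (Φ (FreeGroup.of i)⁻¹ p))⁻¹ * (FreeGroup.of i)⁻¹ * rep p
        = ((rep p)⁻¹ * FreeGroup.of i * rep ((Φ (FreeGroup.of i))⁻¹ p))⁻¹ := by
      rw [_root_.map_inv]
      group
    rw [e]
    exact inv_mem h2
  | mul u v ihu ihv =>
    intro p
    have h := mul_mem (ihu (Φ v p)) (ihv p)
    have e : (rep (Φ (u * v) p))⁻¹ * (u * v) * rep p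
        = ((rep (Φ u (Φ v p)))⁻¹ * u * rep (Φ v p)) * ((rep (Φ v p))⁻¹ * v * rep p) := by
      rw [_root_.map_mul, Equiv.Perm.mul_apply]
      group
    rw [e]
    exact h

lemma X_ext {p q : X} (h : p.1 = q.1) : p = q := Subtype.ext h

lemma σB_p₀ : σB p₀ = p₀ := X_ext rfl

lemma σB_inv_p₀ : σB⁻¹ p₀ = p₀ := by
  conv_lhs => rw [← σB_p₀]
  exact Equiv.symm_apply_apply _ _

def p1 : X := ⟨(1, []), trivial⟩

lemma σA_p₀ : σA p₀ = p1 := X_ext rfl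

lemma σB_p1 : σB p1 = p1 := X_ext rfl

lemma σB_inv_p1 : σB⁻¹ p1 = p1 := by
  conv_lhs => rw [← σB_p1]
  exact Equiv.symm_apply_apply _ _

lemma σA_inv_p1 : σA⁻¹ p1 = p₀ := by
  rw [← σA_p₀]
  exact Equiv.symm_apply_apply _ _

lemma fix_p₀ : ∀ u ∈ Uω, Φ u p₀ = p₀ := by
  intro u hu
  induction hu using Subgroup.closure_induction with
  | mem x hx =>
    rcases hx with rfl | hx
    · rw [Φx₂]; exact σB_p₀
    · rw [Set.mem_singleton_iff] at hx
      subst hx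
      have : Φ (x₂ * x₁⁻¹ * x₂⁻¹ * x₁ * x₂⁻¹) p₀
          = σB (σA⁻¹ (σB⁻¹ (σA (σB⁻¹ p₀)))) := by
        simp only [_root_.map_mul, _root_.map_inv, Φx₁, Φx₂, Equiv.Perm.mul_apply,
          Equiv.Perm.inv_def]
      rw [this, σB_inv_p₀, σA_p₀, σB_inv_p1, σA_inv_p1, σB_p₀]
  | one => simp
  | mul x y hx hy ihx ihy => rw [_root_.map_mul, Equiv.Perm.mul_apply, ihy, ihx]
  | inv x hx ih =>
    rw [_root_.map_inv]
    conv_lhs => rw [← ih]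
    exact Equiv.symm_apply_apply _ _

lemma fA_fixed (m : ℤ) (w : W) (h : fA m w = w) : (m = 0 ∨ m = 1) ∧ w = [] := by
  match w with
  | [] =>
    refine ⟨?_, rfl⟩
    by_contra hm
    rw [fA, if_neg hm] at h
    simp at h
  | (n, b) :: t =>
    exfalso
    rw [fA] at h
    split at h
    · exact List.cons_ne_self _ _ h.symm
    · exact List.cons_ne_self _ _ h

end Uomega

open Uomega in
/-- `U_ω` is self-normalizing in the free group on two generators. -/
theorem Uomega_self_normalizing : Subgroup.normalizer (Uω : Set (FreeGroup (Fin 2))) = Uω := by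
  refine le_antisymm ?_ Subgroup.le_normalizer
  intro g hg
  have h1 : g⁻¹ * x₂ * g ∈ Uω := (Subgroup.mem_normalizer_iff''.mp hg x₂).mp mem_x₂
  have h2 : g⁻¹ * (x₁⁻¹ * x₂ * x₁) * g ∈ Uω :=
    (Subgroup.mem_normalizer_iff''.mp hg _).mp mem_b
  have f1 : Φ x₂ (Φ g p₀) = Φ g p₀ := by
    have hf := fix_p₀ _ h1
    have : Φ g (Φ (g⁻¹ * x₂ * g) p₀) = Φ g p₀ := by rw [hf]
    rw [← Equiv.Perm.mul_apply, ← _root_.map_mul] at this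
    have e : g * (g⁻¹ * x₂ * g) = x₂ * g := by group
    rw [e, _root_.map_mul, Equiv.Perm.mul_apply] at this
    exact this
  have f2 : Φ (x₁⁻¹ * x₂ * x₁) (Φ g p₀) = Φ g p₀ := by
    have hf := fix_p₀ _ h2
    have : Φ g (Φ (g⁻¹ * (x₁⁻¹ * x₂ * x₁) * g) p₀) = Φ g p₀ := by rw [hf]
    rw [← Equiv.Perm.mul_apply, ← _root_.map_mul] at this
    have e : g * (g⁻¹ * (x₁⁻¹ * x₂ * x₁) * g) = (x₁⁻¹ * x₂ * x₁) * g := by group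
    rw [e, _root_.map_mul, Equiv.Perm.mul_apply] at this
    exact this
  have hfix : Φ g p₀ = p₀ := by
    rw [Φx₂] at f1
    have f2' : σA⁻¹ (σB (σA (Φ g p₀))) = Φ g p₀ := by
      have : Φ (x₁⁻¹ * x₂ * x₁) (Φ g p₀) = σA⁻¹ (σB (σA (Φ g p₀))) := by
        simp only [_root_.map_mul, _root_.map_inv, Φx₁, Φx₂, Equiv.Perm.mul_apply,
          Equiv.Perm.inv_def]
      rw [← this, f2]
    generalize hQ : Φ g p₀ = q at f1 f2'
    obtain ⟨⟨m, w⟩, hw⟩ := q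
    have hfa : fA m w = w := by
      have := congrArg (fun p : X => p.1.2) f1
      exact this
    obtain ⟨hm, rfl⟩ := fA_fixed m w hfa
    have hm1 : fA (m + 1) [] = [] ∧ m + 1 - 1 = m := by
      have := congrArg (fun p : X => p.1) f2'
      simp only [σA, σB, Equiv.Perm.inv_def] at this
      have h2' := congrArg Prod.snd this
      have h1' := congrArg Prod.fst this
      exact ⟨h2', h1'⟩
    have hm0 : m = 0 := by
      have := hm1.1
      rw [fA] at this
      by_contra hne
      rw [if_neg] at this
      · simp at this
      · rcases hm with rfl | rfl
        · exact absurd rfl hne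
        · rintro (h | h) <;> omega
    subst hm0
    exact X_ext rfl
  have hs := schreier g p₀
  rw [hfix] at hs
  have hrep : rep p₀ = 1 := by simp [rep, p₀, ρ]
  rw [hrep] at hs
  simpa using hs
end

section
/- Let G = F(x₁,…,x_n) ⋊ ⟨t⟩ where t acts on the free group by t x_i t⁻¹ = x_{τ(i)} for an n-cycle τ ∈ S_n (the cable space case). If g ∈ G satisfies g x₁ g⁻¹ = x₁, then g ∈ ⟨x₁, t^n⟩. -/
open FreeGroup SemidirectProduct

namespace CableAux

variable {α : Type*} [DecidableEq α]

lemma tail_reduced {x : α × Bool} {tl : List (α × Bool)}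
    (h : reduce (x :: tl) = x :: tl) : reduce tl = tl := by
  rw [reduce.cons] at h
  rcases htl : reduce tl with _ | ⟨hd, tl2⟩ <;> rw [htl] at h
  · have h' : [x] = x :: tl := h
    injection h' with _ h2
    all_goals simp_all
  · have h' : (if x.1 = hd.1 ∧ x.2 = !hd.2 then tl2 else x :: hd :: tl2) = x :: tl := h
    clear h; rename' h' => h
    split_ifs at h with hc
    · have h1 : tl2.length = tl.length + 1 := by rw [h]; simp
      have h2 : (reduce tl).length ≤ tl.length := Red.length_le reduce.red
      rw [htl] at h2; simp at h2; omega
    · injection h with _ h2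
      all_goals simp_all

lemma reduce_cons_eq {x hd : α × Bool} {tl : List (α × Bool)}
    (h : reduce (hd :: tl) = hd :: tl) (hx : ¬(x.1 = hd.1 ∧ x.2 = !hd.2)) :
    reduce (x :: hd :: tl) = x :: hd :: tl := by
  rw [reduce.cons, h]
  exact if_neg hx

lemma exists_strip (a : α) (s : Bool) (tl : List (α × Bool)) (w : FreeGroup α)
    (hL : w.toWord = (a, s) :: tl) :
    w = mk [(a, s)] * mk tl ∧ (mk tl).toWord = tl := by
  have hred : reduce ((a, s) :: tl) = (a, s) :: tl := by
    rw [← hL]; exact reduce_toWord w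
  have htl : reduce tl = tl := tail_reduced hred
  refine ⟨?_, by rw [toWord_mk, htl]⟩
  conv_lhs => rw [← mk_toWord (x := w), hL]
  rw [mul_mk]
  rfl

lemma mk_single_mem (a : α) (s : Bool) : mk [(a, s)] ∈ Subgroup.zpowers (of a) := by
  cases s
  · refine ⟨-1, ?_⟩
    show of a ^ (-1 : ℤ) = mk [(a, false)]
    rw [zpow_neg_one]
    show (mk [(a, true)])⁻¹ = _
    rw [inv_mk]
    rfl
  · refine ⟨1, ?_⟩
    show of a ^ (1 : ℤ) = mk [(a, true)]
    rw [zpow_one]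
    rfl

lemma invRev_cons (x : α × Bool) (L : List (α × Bool)) :
    invRev (x :: L) = invRev L ++ [(x.1, !x.2)] := by
  simp [invRev]

lemma commute_mem_zpowers_aux (a : α) :
    ∀ (N : ℕ) (w : FreeGroup α), w.toWord.length ≤ N →
      Commute w (of a) → w ∈ Subgroup.zpowers (of a) := by
  intro N
  induction N with
  | zero =>
    intro w hw _
    have : w.toWord = [] := List.length_eq_zero_iff.mp (Nat.le_zero.mp hw)
    rw [toWord_eq_nil_iff] at this
    exact this ▸ one_mem _
  | succ N ih =>
    intro w hw hcomm
    rcases hL : w.toWord with _ | ⟨⟨b, s⟩, tl⟩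
    · rw [toWord_eq_nil_iff] at hL; exact hL ▸ one_mem _
    by_cases hb : b = a
    · subst hb
      obtain ⟨hw1, hw2⟩ := exists_strip b s tl w hL
      have hmem := mk_single_mem b s
      obtain ⟨m, hm⟩ := hmem
      have hc1 : Commute (mk [(b, s)]) (of b) := hm ▸ (Commute.refl (of b)).zpow_left m
      have hcomm' : Commute (mk tl) (of b) := by
        have heq : mk tl = (mk [(b, s)])⁻¹ * w := by rw [hw1]; group
        rw [heq]
        exact hc1.inv_left.mul_left hcomm
      have hlen : (mk tl).toWord.length ≤ N := by
        rw [hw2]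
        have : w.toWord.length = tl.length + 1 := by rw [hL]; rfl
        omega
      have := ih (mk tl) hlen hcomm'
      rw [hw1]
      exact mul_mem ⟨m, hm⟩ this
    · rcases hM : (w⁻¹).toWord with _ | ⟨⟨c, u⟩, tlM⟩
      · rw [toWord_eq_nil_iff, inv_eq_one] at hM
        exact hM ▸ one_mem _
      by_cases hc : c = a
      · subst hc
        obtain ⟨hw1, hw2⟩ := exists_strip c u tlM w⁻¹ hM
        obtain ⟨m, hm⟩ := mk_single_mem c u
        have hc1 : Commute (mk [(c, u)]) (of c) := hm ▸ (Commute.refl (of c)).zpow_left m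
        have hcomm' : Commute (mk tlM) (of c) := by
          have heq : mk tlM = (mk [(c, u)])⁻¹ * w⁻¹ := by rw [hw1]; group
          rw [heq]
          exact hc1.inv_left.mul_left hcomm.inv_left
        have hlenM : (w⁻¹).toWord.length = w.toWord.length := by
          rw [toWord_inv, invRev_length]
        have hlen : (mk tlM).toWord.length ≤ N := by
          rw [hw2]
          have : (w⁻¹).toWord.length = tlM.length + 1 := by rw [hM]; rfl
          omega
        have hmemtl := ih (mk tlM) hlen hcomm'
        have : w⁻¹ ∈ Subgroup.zpowers (of c) := hw1 ▸ mul_mem ⟨m, hm⟩ hmemtl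
        exact (Subgroup.inv_mem_iff _).mp this
      · exfalso
        have hredw : reduce (((b, s)) :: tl) = (b, s) :: tl := by
          rw [← hL]; exact reduce_toWord w
        have hredwi : reduce (((c, u)) :: tlM) = (c, u) :: tlM := by
          rw [← hM]; exact reduce_toWord w⁻¹
        have h1 : (of a * w).toWord = (a, true) :: w.toWord := by
          have : of a * w = mk ((a, true) :: w.toWord) := by
            conv_lhs => rw [← mk_toWord (x := w)]
            rw [show of a = mk [(a, true)] from rfl, mul_mk]
            rfl
          rw [this, toWord_mk, hL]
          exact reduce_cons_eq hredw (fun hh => hb hh.1.symm)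
        have h2 : ((of a)⁻¹ * w⁻¹).toWord = (a, false) :: (w⁻¹).toWord := by
          have : (of a)⁻¹ * w⁻¹ = mk ((a, false) :: (w⁻¹).toWord) := by
            conv_lhs => rw [← mk_toWord (x := w⁻¹)]
            rw [show (of a)⁻¹ = mk [(a, false)] by rw [show of a = mk [(a,true)] from rfl, inv_mk]; rfl,
              mul_mk]
            rfl
          rw [this, toWord_mk, hM]
          exact reduce_cons_eq hredwi (fun hh => hc hh.1.symm)
        have hkey : (a, true) :: w.toWord = w.toWord ++ [(a, true)] := by
          have heq : of a * w = ((of a)⁻¹ * w⁻¹)⁻¹ := by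
            rw [mul_inv_rev, inv_inv, inv_inv]
            exact hcomm.eq.symm
          calc (a, true) :: w.toWord = (of a * w).toWord := h1.symm
            _ = invRev (((of a)⁻¹ * w⁻¹).toWord) := by
                rw [heq, toWord_inv]
            _ = invRev ((a, false) :: (w⁻¹).toWord) := by rw [h2]
            _ = w.toWord ++ [(a, true)] := by
                rw [invRev_cons, toWord_inv, invRev_invRev]
                rfl
        rw [hL] at hkey
        simp only [List.cons_append, List.cons.injEq, Prod.mk.injEq] at hkey
        exact hb hkey.1.1.symm

lemma commute_mem_zpowers (a : α) (w : FreeGroup α) (h : Commute w (of a)) :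
    w ∈ Subgroup.zpowers (of a) :=
  commute_mem_zpowers_aux a w.toWord.length w le_rfl h

end CableAux

namespace CableAux

lemma alpha_zpow {n : ℕ} (τ : Equiv.Perm (Fin n)) (α : MulAut (FreeGroup (Fin n)))
    (hα : ∀ i : Fin n, α (FreeGroup.of i) = FreeGroup.of (τ i)) :
    ∀ (k : ℤ) (i : Fin n), (α ^ k) (FreeGroup.of i) = FreeGroup.of ((τ ^ k) i) := by
  have hinv : ∀ i, α⁻¹ (FreeGroup.of i) = FreeGroup.of (τ⁻¹ i) := by
    intro i
    have h := hα (τ⁻¹ i)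
    rw [show τ (τ⁻¹ i) = i from τ.apply_symm_apply i] at h
    calc α⁻¹ (FreeGroup.of i) = α⁻¹ (α (FreeGroup.of (τ⁻¹ i))) := by rw [h]
      _ = FreeGroup.of (τ⁻¹ i) := by simp
  intro k
  induction k using Int.induction_on with
  | zero => simp
  | succ k ih =>
    intro i
    rw [zpow_add_one, zpow_add_one]
    simp only [MulAut.mul_apply, Equiv.Perm.mul_apply]
    rw [hα i, ih (τ i)]
  | pred k ih =>
    intro i
    rw [zpow_sub_one, zpow_sub_one]
    simp only [MulAut.mul_apply, Equiv.Perm.mul_apply]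
    rw [hinv i, ih (τ⁻¹ i)]

lemma cycle_dvd {n : ℕ} (τ : Equiv.Perm (Fin n))
    (hτ : τ.IsCycle ∧ τ.support = Finset.univ) (hn : 0 < n) (k : ℤ) (i0 : Fin n)
    (hfix : (τ ^ k) i0 = i0) : (n : ℤ) ∣ k := by
  have hord : orderOf τ = n := by
    rw [hτ.1.orderOf, hτ.2, Finset.card_univ, Fintype.card_fin]
  suffices h : (orderOf τ : ℤ) ∣ k by rwa [hord] at h
  have hNpos : 0 < orderOf τ := by rw [hord]; exact hn
  have hτk : τ ^ k = 1 := by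
    have hmod : τ ^ ((k % (orderOf τ : ℤ)).toNat) = τ ^ k := by
      rw [← zpow_natCast,
        Int.toNat_of_nonneg (Int.emod_nonneg _ (by exact_mod_cast hNpos.ne')),
        zpow_mod_orderOf]
    set m := (k % (orderOf τ : ℤ)).toNat with hm
    have hmlt : m < orderOf τ := by
      have h1 : k % (orderOf τ : ℤ) < orderOf τ :=
        Int.emod_lt_of_pos _ (by exact_mod_cast hNpos)
      have h2 : 0 ≤ k % (orderOf τ : ℤ) := Int.emod_nonneg _ (by exact_mod_cast hNpos.ne')
      omega
    rcases Nat.eq_zero_or_pos m with h0 | hpos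
    · rw [← hmod, h0, pow_zero]
    · exfalso
      have hsupp : (τ ^ m).support = τ.support :=
        hτ.1.support_pow_of_pos_of_lt_orderOf hpos hmlt
      have hmem : i0 ∈ (τ ^ m).support := by rw [hsupp, hτ.2]; exact Finset.mem_univ _
      rw [Equiv.Perm.mem_support, hmod, hfix] at hmem
      exact hmem rfl
  exact orderOf_dvd_iff_zpow_eq_one.mpr hτk

end CableAux

/-- In the cable space group `G = F(x₁,…,x_n) ⋊ ⟨t⟩`, where `t` acts by permuting the free
generators via an `n`-cycle `τ` (i.e. `t x_i t⁻¹ = x_{τ(i)}`), any element centralizing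
`x₁` lies in the peripheral subgroup `⟨x₁, t^n⟩`. -/
theorem cable_space_centralizer_of_meridian
    (n : ℕ) (hn : 0 < n)
    (τ : Equiv.Perm (Fin n)) (hτ : τ.IsCycle ∧ τ.support = Finset.univ)
    (α : MulAut (FreeGroup (Fin n)))
    (hα : ∀ i : Fin n, α (FreeGroup.of i) = FreeGroup.of (τ i))
    (g : FreeGroup (Fin n) ⋊[zpowersHom (MulAut (FreeGroup (Fin n))) α] Multiplicative ℤ)
    (hg : g * inl (FreeGroup.of (⟨0, hn⟩ : Fin n)) * g⁻¹
        = inl (FreeGroup.of (⟨0, hn⟩ : Fin n))) :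
    g ∈ Subgroup.closure
        {inl (FreeGroup.of (⟨0, hn⟩ : Fin n)), inr (Multiplicative.ofAdd (n : ℤ))} := by
  set i0 : Fin n := ⟨0, hn⟩ with hi0
  obtain ⟨w, z⟩ := g
  set φ := zpowersHom (MulAut (FreeGroup (Fin n))) α with hφ
  set k : ℤ := Multiplicative.toAdd z with hk
  -- extract the left-component equation
  have h1 := congrArg SemidirectProduct.left hg
  simp only [mul_left, mul_right, inv_left, inv_right, left_inl, right_inl, mul_one,
    map_one, MulAut.one_apply, _root_.map_inv, ← MulAut.mul_apply, mul_inv_cancel,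
    MulAut.one_apply] at h1
  have h1' : w * (α ^ k) (FreeGroup.of i0) * w⁻¹ = FreeGroup.of i0 := by
    have hz : φ z = α ^ k := by rw [hφ, zpowersHom_apply, hk]
    rw [← hz]
    exact h1
  set j : Fin n := (τ ^ k) i0 with hj
  rw [CableAux.alpha_zpow τ α hα k i0, ← hj] at h1'
  -- show j = i0
  have hji : j = i0 := by
    by_contra hne
    set ψ : FreeGroup (Fin n) →* Multiplicative ℤ :=
      FreeGroup.lift (fun i => if i = j then Multiplicative.ofAdd (1 : ℤ) else 1) with hψ
    have h2 := congrArg ψ h1'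
    rw [_root_.map_mul, _root_.map_mul, _root_.map_inv, mul_comm (ψ w), mul_assoc, mul_inv_cancel, mul_one,
      hψ, FreeGroup.lift_apply_of, FreeGroup.lift_apply_of, if_pos rfl, if_neg (fun h => hne h.symm)] at h2
    exact absurd h2 (by decide)
  -- w commutes with of i0
  have hcomm : Commute w (FreeGroup.of i0) := by
    rw [hji] at h1'
    rwa [mul_inv_eq_iff_eq_mul] at h1'
  obtain ⟨m, hm⟩ := CableAux.commute_mem_zpowers i0 w hcomm
  -- n divides k
  have hdvd : (n : ℤ) ∣ k := CableAux.cycle_dvd τ hτ hn k i0 (by rw [← hj, hji])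
  obtain ⟨q, hq⟩ := hdvd
  -- assemble
  have hzq : z = (Multiplicative.ofAdd (n : ℤ)) ^ q := by
    rw [← ofAdd_zsmul, smul_eq_mul, ← mul_comm (n : ℤ) q, ← hq]
    exact (ofAdd_toAdd z).symm
  have hgdecomp : (⟨w, z⟩ : FreeGroup (Fin n) ⋊[φ] Multiplicative ℤ)
      = (inl (FreeGroup.of i0)) ^ m * (inr (Multiplicative.ofAdd (n : ℤ))) ^ q := by
    have hm' : FreeGroup.of i0 ^ m = w := hm
    rw [mk_eq_inl_mul_inr, ← hm', hzq, map_zpow, map_zpow]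
  rw [hgdecomp]
  have hmem1 : (inl (FreeGroup.of i0) : FreeGroup (Fin n) ⋊[φ] Multiplicative ℤ)
      ∈ Subgroup.closure {inl (FreeGroup.of i0), inr (Multiplicative.ofAdd (n : ℤ))} :=
    Subgroup.subset_closure (Set.mem_insert _ _)
  have hmem2 : (inr (Multiplicative.ofAdd (n : ℤ)) : FreeGroup (Fin n) ⋊[φ] Multiplicative ℤ)
      ∈ Subgroup.closure {inl (FreeGroup.of i0), inr (Multiplicative.ofAdd (n : ℤ))} :=
    Subgroup.subset_closure (Set.mem_insert_of_mem _ rfl)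
  exact mul_mem (zpow_mem hmem1 m) (zpow_mem hmem2 q)
end

section
/- Let F = F(x₁, x₂) and U_α = ⟨x₁, x₂x₁⁻¹x₂⁻¹⟩. Then for any a ∈ F, the intersection a⟨x₁⟩a⁻¹ ∩ U_α is either trivial or equal to all of a⟨x₁⟩a⁻¹. -/
open FreeGroup

namespace UalphaAux

abbrev Letter := (Fin 2) × Bool

/-- Transition function of the Stallings automaton of `Uα`.
States: `false` = base vertex `v₀`, `true` = the other vertex `v₁`.
`x₁` loops at both vertices; `x₂` goes from `v₀` to `v₁`. -/
def δ (l : Letter) (s : Bool) : Option Bool :=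
  if l.1 = 0 then some s else if s = l.2 then none else some l.2

def step (o : Option Bool) (l : Letter) : Option Bool := o.bind (δ l)

def run (w : List Letter) (o : Option Bool) : Option Bool := w.foldl step o

@[simp] lemma run_nil (o : Option Bool) : run [] o = o := rfl

@[simp] lemma run_cons (l : Letter) (w : List Letter) (o : Option Bool) :
    run (l :: w) o = run w (step o l) := rfl

lemma run_append (w₁ w₂ : List Letter) (o : Option Bool) :
    run (w₁ ++ w₂) o = run w₂ (run w₁ o) := List.foldl_append ..

@[simp] lemma run_none (w : List Letter) : run w none = none := by
  induction w with
  | nil => rfl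
  | cons l t ih => simpa [step] using ih

lemma run_some_of_append {w₁ w₂ : List Letter} {o : Option Bool} {t : Bool}
    (h : run (w₁ ++ w₂) o = some t) : ∃ u, run w₁ o = some u := by
  rcases hu : run w₁ o with _ | u
  · rw [run_append, hu, run_none] at h; exact absurd h (by simp)
  · exact ⟨u, rfl⟩

lemma δ_symm : ∀ (i : Fin 2) (b s t : Bool),
    δ (i, !b) t = some s ↔ δ (i, b) s = some t := by decide

lemma run_invRev {w : List Letter} {s t : Bool}
    (h : run w (some s) = some t) : run (invRev w) (some t) = some s := by
  induction w generalizing s with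
  | nil =>
    simp only [run_nil, Option.some_inj] at h
    subst h
    simp [invRev]
  | cons l w ih =>
    rcases hu : δ l s with _ | u
    · rw [run_cons, step, Option.bind_some, hu, run_none] at h; exact absurd h (by simp)
    · rw [run_cons, step, Option.bind_some, hu] at h
      have h1 : invRev (l :: w) = invRev w ++ [(l.1, !l.2)] := by
        simp [invRev]
      rw [h1, run_append, ih h]
      simp only [run_cons, step, Option.bind_some, run_nil]
      exact (δ_symm l.1 l.2 s u).mpr (by rcases l with ⟨i, b⟩; exact hu)

lemma run_step_red {w w' : List Letter} {s t : Bool}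
    (hst : Red.Step w w') (h : run w (some s) = some t) :
    run w' (some s) = some t := by
  rcases hst with @⟨L₁, L₂, x, b⟩
  obtain ⟨u, hu⟩ := run_some_of_append h
  rw [run_append, hu] at h ⊢
  rcases hv : δ (x, b) u with _ | v
  · rw [run_cons, step, Option.bind_some, hv, run_none] at h; exact absurd h (by simp)
  · rw [run_cons, step, Option.bind_some, hv, run_cons, step, Option.bind_some] at h
    have : δ (x, !b) v = some u := (δ_symm x b u v).mpr hv
    rwa [this] at h

lemma run_red {w w' : List Letter} {s t : Bool}
    (hr : Red w w') (h : run w (some s) = some t) :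
    run w' (some s) = some t := by
  induction hr with
  | refl => exact h
  | tail _ hstep ih => exact run_step_red hstep ih

lemma run_of_fst_eq_zero {w : List Letter} (hw : ∀ l ∈ w, l.1 = 0) (s : Bool) :
    run w (some s) = some s := by
  induction w with
  | nil => rfl
  | cons l t ih =>
    have h0 : l.1 = 0 := hw l (by simp)
    rw [run_cons, step, Option.bind_some, δ, if_pos h0]
    exact ih fun x hx => hw x (by simp [hx])

/-- The set accepted by the automaton is a subgroup. -/
noncomputable def S : Subgroup (FreeGroup (Fin 2)) where
  carrier := {g | run g.toWord (some false) = some false}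
  one_mem' := by simp [toWord_one]
  mul_mem' := by
    intro g h hg hh
    have hmk : g * h = mk (g.toWord ++ h.toWord) := by
      rw [← mul_mk, mk_toWord, mk_toWord]
    have htw : (g * h).toWord = reduce (g.toWord ++ h.toWord) := by
      rw [hmk, toWord_mk]
    have hrun : run (g.toWord ++ h.toWord) (some false) = some false := by
      rw [run_append, hg]; exact hh
    show run (g * h).toWord (some false) = some false
    rw [htw]
    exact run_red reduce.red hrun
  inv_mem' := by
    intro g hg
    show run g⁻¹.toWord (some false) = some false
    rw [toWord_inv]
    exact run_invRev hg

/-- Coset representatives for the two states. -/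
noncomputable def rep : Bool → FreeGroup (Fin 2) := fun s => if s then x₂ else 1

lemma x₁_mem : x₁ ∈ Uα := Subgroup.subset_closure (by simp)

lemma gen₂_mem : x₂ * x₁⁻¹ * x₂⁻¹ ∈ Uα := Subgroup.subset_closure (by simp)

lemma mk_single (i : Fin 2) : mk [(i, true)] = FreeGroup.of i := rfl

lemma mk_single_false (i : Fin 2) : mk [(i, false)] = (FreeGroup.of i)⁻¹ := by
  rw [← mk_single, inv_mk]; rfl

lemma conj_mem : x₂ * x₁ * x₂⁻¹ ∈ Uα := by
  have h := Uα.inv_mem gen₂_mem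
  have he : (x₂ * x₁⁻¹ * x₂⁻¹)⁻¹ = x₂ * x₁ * x₂⁻¹ := by group
  rwa [he] at h

/-- Edge relations of the Stallings graph. -/
lemma trans_mem (l : Letter) (s s' : Bool) (h : δ l s = some s') :
    rep s * mk [l] * (rep s')⁻¹ ∈ Uα := by
  rcases l with ⟨i, b⟩
  fin_cases i <;> cases b <;> cases s <;> cases s' <;>
    simp_all [δ, rep, mk_single, mk_single_false] <;>
    first
    | exact Uα.one_mem
    | simpa [x₁] using x₁_mem
    | simpa [x₁] using Uα.inv_mem x₁_mem
    | simpa [x₁, x₂, mul_assoc] using gen₂_mem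
    | simpa [x₁, x₂, mul_assoc] using conj_mem
    | simpa [x₂] using Uα.one_mem

/-- Spanning tree argument: any accepted word lies in `Uα` (times the coset rep). -/
lemma mem_of_run : ∀ (w : List Letter) (s' : Bool),
    run w (some false) = some s' → mk w * (rep s')⁻¹ ∈ Uα := by
  intro w
  induction w using List.reverseRecOn with
  | nil =>
    intro s' h
    simp only [run_nil, Option.some_inj] at h
    subst h
    simpa [rep, ← one_eq_mk] using Uα.one_mem
  | append_singleton w l ih =>
    intro s' h
    obtain ⟨s, hs⟩ := run_some_of_append h
    rw [run_append, hs] at h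
    rw [run_cons, step, Option.bind_some, run_nil] at h
    have h1 : mk (w ++ [l]) * (rep s')⁻¹ =
        (mk w * (rep s)⁻¹) * (rep s * mk [l] * (rep s')⁻¹) := by
      rw [← mul_mk]; group
    rw [h1]
    exact Uα.mul_mem (ih s hs) (trans_mem l s s' h)

lemma S_le_U : S ≤ Uα := by
  intro g hg
  have := mem_of_run g.toWord false hg
  simpa [rep, mk_toWord] using this

lemma gen₂_eq : x₂ * x₁⁻¹ * x₂⁻¹ = mk [(1, true), (0, false), (1, false)] := by
  rw [show x₂ = mk [((1 : Fin 2), true)] from rfl, show x₁ = mk [((0 : Fin 2), true)] from rfl,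
    inv_mk, inv_mk, mul_mk, mul_mk]
  rfl

lemma U_le_S : Uα ≤ S := by
  rw [Uα, Subgroup.closure_le]
  rintro g (rfl | rfl)
  · show run x₁.toWord (some false) = some false
    rw [show x₁ = FreeGroup.of 0 from rfl, toWord_of]
    decide
  · show run (x₂ * x₁⁻¹ * x₂⁻¹).toWord (some false) = some false
    rw [gen₂_eq, toWord_mk]
    decide

lemma mem_U_iff (g : FreeGroup (Fin 2)) :
    g ∈ Uα ↔ run g.toWord (some false) = some false :=
  ⟨fun h => U_le_S h, fun h => S_le_U h⟩

/-! ### Reducedness machinery -/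

def R (l₁ l₂ : Letter) : Prop := ¬(l₁.1 = l₂.1 ∧ l₁.2 = !l₂.2)

lemma reduce_eq_self_of_chain : ∀ {L : List Letter}, List.Chain' R L → reduce L = L := by
  intro L
  induction L with
  | nil => simp
  | cons l t ih =>
    intro h
    have ht : reduce t = t := ih h.tail
    cases t with
    | nil => rfl
    | cons y ys =>
      have hR : R l y := (List.isChain_cons_cons.mp h).1
      have he : reduce (l :: y :: ys) =
          if l.1 = y.1 ∧ l.2 = !y.2 then ys else l :: y :: ys := by
        rw [reduce.cons, ht]
      rw [he, if_neg hR]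

lemma exists_cancel_of_not_chain : ∀ {L : List Letter}, ¬List.Chain' R L →
    ∃ (L₁ L₂ : List Letter) (x : Fin 2) (b : Bool), L = L₁ ++ (x, b) :: (x, !b) :: L₂ := by
  intro L
  induction L with
  | nil => intro h; exact absurd List.isChain_nil h
  | cons l t ih =>
    intro h
    cases t with
    | nil => exact absurd (List.isChain_singleton l) h
    | cons y ys =>
      rw [List.Chain', List.isChain_cons_cons] at h
      by_cases hR : R l y
      · have hc : ¬ List.Chain' R (y :: ys) := fun c => h ⟨hR, c⟩
        obtain ⟨L₁, L₂, x, b, hL⟩ := ih hc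
        exact ⟨l :: L₁, L₂, x, b, by rw [hL]; rfl⟩
      · have hcan := not_not.mp hR
        have hy : y = (l.1, !l.2) := by
          rcases y with ⟨y1, y2⟩
          rcases l with ⟨l1, l2⟩
          obtain ⟨h1, h2⟩ := hcan
          simp only at h1 h2
          subst h1
          have hy2 : y2 = !l2 := by revert h2; cases l2 <;> cases y2 <;> decide
          subst hy2
          rfl
        exact ⟨[], ys, l.1, l.2, by rw [hy]; rfl⟩

lemma chain_of_reduce_eq_self {L : List Letter} (h : reduce L = L) : List.Chain' R L := by
  by_contra hc
  obtain ⟨L₁, L₂, x, b, hL⟩ := exists_cancel_of_not_chain hc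
  exact reduce.not (by rw [h, hL])

lemma head_dropWhile {α : Type*} (f : α → Bool) (l : List α) {x : α}
    (h : (l.dropWhile f).head? = some x) : f x = false := by
  have := List.head?_dropWhile_not f l
  rw [h] at this
  exact this

lemma mk_replicate (k : ℕ) : mk (List.replicate k ((0 : Fin 2), true)) = x₁ ^ k := by
  induction k with
  | zero => simp [← one_eq_mk]
  | succ k ih =>
    rw [List.replicate_succ', ← mul_mk, ih, pow_succ, mk_single]
    rfl

lemma mk_replicate_false (k : ℕ) :
    mk (List.replicate k ((0 : Fin 2), false)) = x₁ ^ (-(k : ℤ)) := by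
  have h1 : invRev (List.replicate k ((0 : Fin 2), true))
      = List.replicate k ((0 : Fin 2), false) := by
    simp [invRev, List.map_replicate, List.reverse_replicate]
  rw [← h1, ← inv_mk, mk_replicate, zpow_neg, zpow_natCast]

lemma mk_mid (n : ℤ) (hn : n ≠ 0) :
    mk (List.replicate n.natAbs ((0 : Fin 2), decide (0 < n))) = x₁ ^ n := by
  rcases lt_or_gt_of_ne hn with hneg | hpos
  · rw [decide_eq_false (by omega : ¬ 0 < n), mk_replicate_false]
    congr 1
    omega
  · rw [decide_eq_true hpos, mk_replicate, ← zpow_natCast]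
    congr 1
    omega

lemma commute_mk_x₁ : ∀ (q : List Letter), (∀ l ∈ q, l.1 = 0) → Commute (mk q) x₁ := by
  intro q
  induction q with
  | nil =>
    intro _
    rw [← one_eq_mk]
    exact Commute.one_left x₁
  | cons l t ih =>
    intro hq
    have h0 : l.1 = 0 := hq l (by simp)
    have hsplit : mk (l :: t) = mk [l] * mk t := by rw [mul_mk]; rfl
    rw [hsplit]
    refine Commute.mul_left ?_ (ih fun x hx => hq x (by simp [hx]))
    rcases l with ⟨i, b⟩
    simp only at h0
    subst h0
    cases b
    · rw [mk_single_false]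
      exact (Commute.refl x₁).inv_left
    · rw [mk_single]
      exact Commute.refl x₁

end UalphaAux

open UalphaAux in
/-- For any `a`, the intersection `a⟨x₁⟩a⁻¹ ∩ U_α` is either trivial or all of `a⟨x₁⟩a⁻¹`. -/
theorem conj_zpowers_x1_inter_Ualpha_dichotomy (a : FreeGroup (Fin 2)) :
    Subgroup.map ((MulAut.conj a).toMonoidHom) (Subgroup.zpowers x₁) ⊓ Uα = ⊥ ∨
      Subgroup.map ((MulAut.conj a).toMonoidHom) (Subgroup.zpowers x₁) ≤ Uα := by
  classical
  rcases hrw : UalphaAux.run a.toWord (some false) with _ | s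
  · -- the run dies: trivial intersection
    left
    rw [eq_bot_iff]
    intro x hx
    rw [Subgroup.mem_inf] at hx
    obtain ⟨hx1, hx2⟩ := hx
    obtain ⟨y, hy, rfl⟩ := Subgroup.mem_map.mp hx1
    obtain ⟨n, rfl⟩ := Subgroup.mem_zpowers_iff.mp hy
    rw [Subgroup.mem_bot]
    rcases eq_or_ne n 0 with rfl | hn
    · simp
    · exfalso
      have hx2' := (UalphaAux.mem_U_iff _).mp hx2
      have hred_w : reduce a.toWord = a.toWord := reduce_toWord a
      have hchain_w : List.Chain' UalphaAux.R a.toWord :=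
        UalphaAux.chain_of_reduce_eq_self hred_w
      set p := (a.toWord.reverse.dropWhile (fun l => decide (l.1 = 0))).reverse with hpd
      set q := (a.toWord.reverse.takeWhile (fun l => decide (l.1 = 0))).reverse with hqd
      have hsplit : a.toWord = p ++ q := by
        rw [hpd, hqd, ← List.reverse_append, List.takeWhile_append_dropWhile,
          List.reverse_reverse]
      have hq0 : ∀ l ∈ q, l.1 = 0 := by
        intro l hl
        rw [hqd, List.mem_reverse] at hl
        have := List.mem_takeWhile_imp hl
        simpa using this
      have hchain_p : List.Chain' UalphaAux.R p :=
        hchain_w.prefix ⟨q, hsplit.symm⟩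
      have hred_p : reduce p = p := UalphaAux.reduce_eq_self_of_chain hchain_p
      have hchain_inv : List.Chain' UalphaAux.R (invRev p) :=
        UalphaAux.chain_of_reduce_eq_self (by rw [reduce_invRev, hred_p])
      have hplast : ∀ x : Letter, p.getLast? = some x → x.1 ≠ 0 := by
        intro x hx
        rw [hpd, List.getLast?_reverse] at hx
        have := UalphaAux.head_dropWhile _ _ hx
        simpa using this
      -- the run on `p` must already die
      have hrp_none : UalphaAux.run p (some false) = none := by
        rcases hp : UalphaAux.run p (some false) with _ | u
        · rfl
        · exfalso
          have hq : UalphaAux.run a.toWord (some false) = some u := by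
            rw [hsplit, UalphaAux.run_append, hp, UalphaAux.run_of_fst_eq_zero hq0]
          rw [hrw] at hq
          exact absurd hq (by simp)
      set mid := List.replicate n.natAbs ((0 : Fin 2), decide (0 < n)) with hmd
      have hmidlet : ∀ l ∈ mid, l.1 = (0 : Fin 2) := by
        intro l hl
        rw [List.eq_of_mem_replicate hl]
      have hk_ne : n.natAbs ≠ 0 := by omega
      have hchain_mid : List.Chain' UalphaAux.R mid :=
        UalphaAux.chain_of_reduce_eq_self (reduce_replicate _ _)
      have hinvhead : ∀ y : Letter, (invRev p).head? = some y → y.1 ≠ 0 := by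
        intro y hy
        rw [invRev, List.head?_reverse, List.getLast?_map] at hy
        rcases hx0 : p.getLast? with _ | x0
        · rw [hx0] at hy; exact absurd hy (by simp)
        · rw [hx0] at hy
          have : y = (x0.1, !x0.2) := by
            simpa using hy.symm
          rw [this]
          exact hplast x0 hx0
      have hchain_v : List.Chain' UalphaAux.R (p ++ (mid ++ invRev p)) := by
        rw [List.Chain', List.isChain_append]
        refine ⟨hchain_p, ?_, ?_⟩
        · rw [List.isChain_append]
          refine ⟨hchain_mid, hchain_inv, ?_⟩
          intro x hx y hy
          have hx0 : x.1 = 0 := by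
            have hxm : x ∈ mid := by
              have := List.mem_getLast?_eq_getLast (l := mid) (x := x) hx
              obtain ⟨h', h''⟩ := this
              rw [h'']
              exact List.getLast_mem h'
            exact hmidlet x hxm
          have hy1 : y.1 ≠ 0 := hinvhead y hy
          intro hc
          exact hy1 (by rw [← hc.1, hx0])
        · intro x hx y hy
          have hx1 : x.1 ≠ 0 := hplast x hx
          have hy0 : y.1 = 0 := by
            rw [List.head?_append] at hy
            have hmh : mid.head? = some ((0 : Fin 2), decide (0 < n)) := by
              rw [hmd, List.head?_replicate, if_neg hk_ne]
            rw [hmh, Option.some_or, Option.mem_some_iff] at hy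
            rw [← hy]
          intro hc
          exact hx1 (by rw [hc.1, hy0])
      have hred_v : reduce (p ++ (mid ++ invRev p)) = p ++ (mid ++ invRev p) :=
        UalphaAux.reduce_eq_self_of_chain hchain_v
      have helt : ((MulAut.conj a).toMonoidHom) (x₁ ^ n) = mk (p ++ (mid ++ invRev p)) := by
        have hmk_mid : mk mid = x₁ ^ n := UalphaAux.mk_mid n hn
        have ha : a = mk p * mk q := by rw [mul_mk, ← hsplit, mk_toWord]
        have hcq : Commute (mk q) (x₁ ^ n) := (UalphaAux.commute_mk_x₁ q hq0).zpow_right n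
        rw [← mul_mk, ← mul_mk, hmk_mid, ← inv_mk]
        simp only [MulEquiv.coe_toMonoidHom, MulAut.conj_apply]
        rw [ha, mul_inv_rev]
        calc mk p * mk q * x₁ ^ n * ((mk q)⁻¹ * (mk p)⁻¹)
            = mk p * (mk q * x₁ ^ n * (mk q)⁻¹) * (mk p)⁻¹ := by group
          _ = mk p * x₁ ^ n * (mk p)⁻¹ := by rw [hcq.eq, mul_inv_cancel_right]
          _ = mk p * (x₁ ^ n * (mk p)⁻¹) := by rw [mul_assoc]
      rw [helt, toWord_mk, hred_v, UalphaAux.run_append, hrp_none,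
        UalphaAux.run_none] at hx2'
      exact absurd hx2' (by simp)
  · -- the run survives: containment
    right
    have hkey : a * x₁ * a⁻¹ ∈ Uα := by
      have hrun : UalphaAux.run (a.toWord ++ ([((0 : Fin 2), true)] ++ invRev a.toWord))
          (some false) = some false := by
        rw [UalphaAux.run_append, hrw, UalphaAux.run_append]
        have h1 : UalphaAux.run [((0 : Fin 2), true)] (some s) = some s := by
          cases s <;> rfl
        rw [h1]
        exact UalphaAux.run_invRev hrw
      have hmem := UalphaAux.mem_of_run _ false hrun
      have hmk : mk (a.toWord ++ ([((0 : Fin 2), true)] ++ invRev a.toWord))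
          = a * x₁ * a⁻¹ := by
        rw [← mul_mk, ← mul_mk, ← inv_mk, mk_toWord, UalphaAux.mk_single]
        show a * (x₁ * a⁻¹) = a * x₁ * a⁻¹
        rw [mul_assoc]
      have hrep : (UalphaAux.rep false)⁻¹ = 1 := by simp [UalphaAux.rep]
      rw [hrep, mul_one, hmk] at hmem
      exact hmem
    intro x hx
    obtain ⟨y, hy, rfl⟩ := Subgroup.mem_map.mp hx
    obtain ⟨n, rfl⟩ := Subgroup.mem_zpowers_iff.mp hy
    have hc : ((MulAut.conj a).toMonoidHom) x₁ = a * x₁ * a⁻¹ := by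
      simp [MulAut.conj_apply]
    have hz : ((MulAut.conj a).toMonoidHom) (x₁ ^ n) = (a * x₁ * a⁻¹) ^ n := by
      rw [map_zpow, hc]
    rw [hz]
    exact Subgroup.zpow_mem _ hkey n
end

section
/- Let F = F(x₁, x₂), m_V = x₂x₁⁻¹x₂⁻¹x₁, and U_α = ⟨x₁, x₂x₁⁻¹x₂⁻¹⟩. Then for any a ∈ F, the intersection a⟨m_V⟩a⁻¹ ∩ U_α is either trivial or equal to all of a⟨m_V⟩a⁻¹. -/
open FreeGroup

namespace ConjAux


/-- Distinct generators of a free group do not commute. -/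
lemma of_mul_of_ne {β : Type*} {a b : β} (h : a ≠ b) :
    FreeGroup.of a * FreeGroup.of b ≠ FreeGroup.of b * FreeGroup.of a := by
  classical
  intro hc
  have hcongr := congrArg (FreeGroup.lift (fun x : β =>
    if x = a then (Equiv.swap (0 : Fin 3) 1) else if x = b then Equiv.swap 1 2 else 1)) hc
  simp only [_root_.map_mul, FreeGroup.lift_apply_of, eq_self_iff_true, if_true, h, Ne.symm h, if_neg, if_false] at hcongr
  have h2 : ((Equiv.swap (0 : Fin 3) 1) * (Equiv.swap (1 : Fin 3) 2)) 2
      = ((Equiv.swap (1 : Fin 3) 2) * (Equiv.swap (0 : Fin 3) 1)) 2 := by rw [hcongr]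
  exact absurd h2 (by decide)

lemma isEmpty_eq_one {β : Type*} [IsEmpty β] (x : FreeGroup β) : x = 1 := by
  rcases hw : x.toWord with _ | ⟨⟨b, _⟩, _⟩
  · exact FreeGroup.toWord_eq_nil_iff.mp hw
  · exact (IsEmpty.false b).elim

lemma pow_gen {β : Type*} [Subsingleton β] (b : β) (x : FreeGroup β) :
    ∃ p : ℤ, x = FreeGroup.of b ^ p := by
  let e' : β ≃ Unit := ⟨fun _ => (), fun _ => b, fun y => Subsingleton.elim _ _, fun _ => rfl⟩
  refine ⟨freeGroupUnitEquivInt (freeGroupCongr e' x), ?_⟩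
  have h := freeGroupUnitEquivInt.symm_apply_apply (freeGroupCongr e' x)
  apply (freeGroupCongr e').injective
  rw [_root_.map_zpow]
  rw [show (freeGroupCongr e') (FreeGroup.of b) = FreeGroup.of () from rfl]
  exact h.symm

lemma gen_zpow_eq_one {β : Type*} (b : β) {p : ℤ} (h : FreeGroup.of b ^ p = 1) : p = 0 := by
  have h1 := congrArg (FreeGroup.lift (fun _ : β => Multiplicative.ofAdd (1 : ℤ))) h
  simp only [_root_.map_zpow, _root_.map_one, FreeGroup.lift_apply_of] at h1
  have h2 := congrArg Multiplicative.toAdd h1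
  simpa using h2

/-- An abelian free group is "cyclic with a ℤ-basis element", or trivial. -/
lemma cyclic_struct (G : Type*) [Group G] [IsFreeGroup G]
    (hab : ∀ a b : G, a * b = b * a) :
    (∀ g : G, g = 1) ∨
      ∃ z : G, (∀ g : G, ∃ p : ℤ, g = z ^ p) ∧ ∀ p : ℤ, z ^ p = 1 → p = 0 := by
  let e := IsFreeGroup.toFreeGroup G
  by_cases hβ : Nonempty (IsFreeGroup.Generators G)
  · obtain ⟨b⟩ := hβ
    have hss : Subsingleton (IsFreeGroup.Generators G) := by
      constructor
      intro a a'
      by_contra hne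
      have h2 : e.symm (FreeGroup.of a * FreeGroup.of a')
          = e.symm (FreeGroup.of a' * FreeGroup.of a) := by
        rw [_root_.map_mul, _root_.map_mul, hab]
      exact of_mul_of_ne hne (e.symm.injective h2)
    right
    refine ⟨e.symm (FreeGroup.of b), ?_, ?_⟩
    · intro g
      obtain ⟨p, hp⟩ := pow_gen b (e g)
      refine ⟨p, ?_⟩
      have : e.symm (e g) = e.symm (FreeGroup.of b ^ p) := by rw [hp]
      rwa [e.symm_apply_apply, _root_.map_zpow] at this
    · intro p hp
      have h3 : FreeGroup.of b ^ p = 1 := by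
        apply e.symm.injective
        rw [_root_.map_zpow, _root_.map_one, hp]
      exact gen_zpow_eq_one b h3
  · left
    have : IsEmpty (IsFreeGroup.Generators G) := not_nonempty_iff.mp hβ
    intro g
    have h1 := isEmpty_eq_one (e g)
    have := congrArg e.symm h1
    rwa [e.symm_apply_apply, _root_.map_one] at this

/-- Free groups (here: over ℤ) have unique torsion behaviour: nontrivial elements
have infinite order. -/
lemma zpow_eq_one {w : FreeGroup ℤ} {p : ℤ} (h : w ^ p = 1) : w = 1 ∨ p = 0 := by
  by_cases hw : w = 1
  · exact Or.inl hw
  right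
  set H := Subgroup.zpowers w with hH
  have hab : ∀ x y : ↥H, x * y = y * x := by
    rintro ⟨x, hx⟩ ⟨y, hy⟩
    obtain ⟨i, rfl⟩ := Subgroup.mem_zpowers_iff.mp hx
    obtain ⟨j, rfl⟩ := Subgroup.mem_zpowers_iff.mp hy
    apply Subtype.ext
    show w ^ i * w ^ j = w ^ j * w ^ i
    rw [← zpow_add, ← zpow_add, add_comm]
  rcases cyclic_struct ↥H hab with htriv | ⟨z, hz1, hz2⟩
  · exact absurd (congrArg Subtype.val (htriv ⟨w, Subgroup.mem_zpowers w⟩)) hw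
  · obtain ⟨i, hi⟩ := hz1 ⟨w, Subgroup.mem_zpowers w⟩
    have hwp : (⟨w, Subgroup.mem_zpowers w⟩ : H) ^ p = 1 := by
      apply Subtype.ext
      show w ^ p = 1
      exact h
    rw [hi, ← zpow_mul] at hwp
    rcases mul_eq_zero.mp (hz2 (i * p) hwp) with hi0 | hp0
    · rw [hi0, zpow_zero] at hi
      exact absurd (congrArg Subtype.val hi) hw
    · exact hp0

/-- Closure of two commuting elements is commutative. -/
lemma closure_pair_comm {G : Type*} [Group G] {x y : G} (h : x * y = y * x)
    (a b : ↥(Subgroup.closure ({x, y} : Set G))) : a * b = b * a := by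
  have key : ∀ g ∈ Subgroup.closure ({x, y} : Set G), Commute x g ∧ Commute y g := by
    intro g hg
    induction hg using Subgroup.closure_induction with
    | mem w hw =>
      have hw' : w = x ∨ w = y := by simpa using hw
      rcases hw' with rfl | rfl
      · exact ⟨Commute.refl w, (show Commute w y from h).symm⟩
      · exact ⟨(show Commute x w from h), Commute.refl w⟩
    | one => exact ⟨Commute.one_right _, Commute.one_right _⟩
    | mul p q hp hq ihp ihq => exact ⟨ihp.1.mul_right ihq.1, ihp.2.mul_right ihq.2⟩
    | inv p hp ihp => exact ⟨ihp.1.inv_right, ihp.2.inv_right⟩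
  have key2 : ∀ g ∈ Subgroup.closure ({x, y} : Set G),
      ∀ g' ∈ Subgroup.closure ({x, y} : Set G), Commute g g' := by
    intro g hg
    induction hg using Subgroup.closure_induction with
    | mem w hw =>
      intro g' hg'
      have hw' : w = x ∨ w = y := by simpa using hw
      rcases hw' with rfl | rfl
      · exact (key g' hg').1
      · exact (key g' hg').2
    | one => exact fun g' hg' => Commute.one_left _
    | mul p q hp hq ihp ihq => exact fun g' hg' => (ihp g' hg').mul_left (ihq g' hg')
    | inv p hp ihp => exact fun g' hg' => (ihp g' hg').inv_left
  exact Subtype.ext ((key2 a a.2 b b.2).eq)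

/-- The shift action of ℤ on `FreeGroup ℤ`. -/
noncomputable def shiftHom : Multiplicative ℤ →* MulAut (FreeGroup ℤ) :=
  MonoidHom.mk' (fun r => freeGroupCongr (Equiv.addRight (Multiplicative.toAdd r))) (by
    intro a b
    apply MulEquiv.toMonoidHom_injective
    apply FreeGroup.ext_hom
    intro n
    simp only [MulEquiv.coe_toMonoidHom, MulAut.mul_apply, freeGroupCongr_apply,
      FreeGroup.map.of, Equiv.coe_addRight]
    congr 1
    simp only [toAdd_mul]
    ring)

@[simp] lemma shiftHom_of (r : Multiplicative ℤ) (n : ℤ) :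
    shiftHom r (FreeGroup.of n) = FreeGroup.of (n + Multiplicative.toAdd r) := by
  show freeGroupCongr _ (FreeGroup.of n) = _
  simp [shiftHom]

/-- The target semidirect product `FreeGroup ℤ ⋊ ℤ`. -/
noncomputable abbrev G2 := SemidirectProduct (FreeGroup ℤ) (Multiplicative ℤ) shiftHom

/-- The embedding of `FreeGroup (Fin 2)` into `G2`. -/
noncomputable def Φ : FreeGroup (Fin 2) →* G2 :=
  FreeGroup.lift (fun i => if i = 0 then SemidirectProduct.inl (FreeGroup.of (0 : ℤ))
    else SemidirectProduct.inr (Multiplicative.ofAdd 1))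

noncomputable def f₁ : FreeGroup ℤ →* FreeGroup (Fin 2) :=
  FreeGroup.lift (fun n : ℤ => FreeGroup.of (1 : Fin 2) ^ n * FreeGroup.of (0 : Fin 2)
    * FreeGroup.of (1 : Fin 2) ^ (-n))

noncomputable def f₂ : Multiplicative ℤ →* FreeGroup (Fin 2) :=
  zpowersHom _ (FreeGroup.of (1 : Fin 2))

noncomputable def Ψ : G2 →* FreeGroup (Fin 2) :=
  SemidirectProduct.lift f₁ f₂ (by
    intro r
    apply FreeGroup.ext_hom
    intro n
    simp only [MonoidHom.comp_apply, MulEquiv.coe_toMonoidHom, shiftHom_of]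
    simp only [f₁, f₂, FreeGroup.lift_apply_of, zpowersHom_apply, MulAut.conj_apply]
    rw [zpow_add]
    group)

lemma ΨΦ (w : FreeGroup (Fin 2)) : Ψ (Φ w) = w := by
  have h : Ψ.comp Φ = MonoidHom.id _ := by
    apply FreeGroup.ext_hom
    intro i
    fin_cases i
    · simp only [MonoidHom.comp_apply, MonoidHom.id_apply, Φ, FreeGroup.lift_apply_of, if_pos rfl]
      simp [Ψ, f₁]
    · have h1 : (1 : Fin 2) ≠ 0 := by decide
      simp only [MonoidHom.comp_apply, MonoidHom.id_apply, Φ, FreeGroup.lift_apply_of, if_neg h1]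
      simp [Ψ, f₂]
  calc Ψ (Φ w) = Ψ.comp Φ w := rfl
  _ = w := by rw [h]; rfl

lemma Φ_injective : Function.Injective Φ := by
  intro w w' hww'
  have := congrArg Ψ hww'
  rwa [ΨΦ, ΨΦ] at this

/-! ### Transfer of `Uα` through `Φ` -/

/-- The subgroup of `FreeGroup ℤ` generated by the letters `0` and `1`. -/
noncomputable def A : Subgroup (FreeGroup ℤ) :=
  Subgroup.closure {FreeGroup.of (0 : ℤ), FreeGroup.of (1 : ℤ)}

lemma Φ_x₁ : Φ x₁ = SemidirectProduct.inl (FreeGroup.of (0 : ℤ)) := by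
  simp [Φ, x₁, FreeGroup.lift_apply_of]

lemma Φ_x₂ : Φ x₂ = SemidirectProduct.inr (Multiplicative.ofAdd 1) := by
  have h1 : (1 : Fin 2) ≠ 0 := by decide
  simp [Φ, x₂, FreeGroup.lift_apply_of, h1]

lemma conj_inr_inl (r : Multiplicative ℤ) (n : FreeGroup ℤ) :
    (SemidirectProduct.inr r : G2) * SemidirectProduct.inl n * (SemidirectProduct.inr r)⁻¹
      = SemidirectProduct.inl (shiftHom r n) := by
  rw [← _root_.map_inv]
  exact (SemidirectProduct.inl_aut r n).symm

lemma mem_A_exists (k : FreeGroup ℤ) (hk : k ∈ A) :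
    ∃ v ∈ Uα, Φ v = SemidirectProduct.inl k := by
  induction hk using Subgroup.closure_induction with
  | mem w hw =>
    have hw' : w = FreeGroup.of (0 : ℤ) ∨ w = FreeGroup.of (1 : ℤ) := by simpa using hw
    rcases hw' with rfl | rfl
    · exact ⟨x₁, Subgroup.subset_closure (Set.mem_insert _ _), Φ_x₁⟩
    · refine ⟨x₂ * x₁ * x₂⁻¹, ?_, ?_⟩
      · have h1 : x₂ * x₁⁻¹ * x₂⁻¹ ∈ Uα := Subgroup.subset_closure (by simp)
        have h2 := inv_mem h1
        rw [show (x₂ * x₁⁻¹ * x₂⁻¹)⁻¹ = x₂ * x₁ * x₂⁻¹ by group] at h2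
        exact h2
      · rw [_root_.map_mul, _root_.map_mul, _root_.map_inv, Φ_x₁, Φ_x₂, conj_inr_inl]
        simp
  | one => exact ⟨1, one_mem _, by simp⟩
  | mul p q hp hq ihp ihq =>
    obtain ⟨v, hv, hv2⟩ := ihp
    obtain ⟨v', hv', hv'2⟩ := ihq
    exact ⟨v * v', mul_mem hv hv', by rw [_root_.map_mul, hv2, hv'2, ← _root_.map_mul]⟩
  | inv p hp ihp =>
    obtain ⟨v, hv, hv2⟩ := ihp
    exact ⟨v⁻¹, inv_mem hv, by rw [_root_.map_inv, hv2, ← _root_.map_inv]⟩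

lemma mem_Uα_iff (w : FreeGroup (Fin 2)) :
    w ∈ Uα ↔ ∃ k ∈ A, Φ w = SemidirectProduct.inl k := by
  constructor
  · intro hw
    induction hw using Subgroup.closure_induction with
    | mem v hv =>
      have hv' : v = x₁ ∨ v = x₂ * x₁⁻¹ * x₂⁻¹ := by simpa using hv
      rcases hv' with rfl | rfl
      · exact ⟨_, Subgroup.subset_closure (Set.mem_insert _ _), Φ_x₁⟩
      · refine ⟨(FreeGroup.of (1 : ℤ))⁻¹, inv_mem (Subgroup.subset_closure (by simp)), ?_⟩
        rw [_root_.map_mul, _root_.map_mul, _root_.map_inv, _root_.map_inv, Φ_x₁, Φ_x₂]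
        rw [show ((SemidirectProduct.inl (FreeGroup.of (0:ℤ)) : G2))⁻¹
            = SemidirectProduct.inl (FreeGroup.of (0:ℤ))⁻¹ from (_root_.map_inv _ _).symm]
        rw [conj_inr_inl]
        simp
    | one => exact ⟨1, one_mem _, by simp⟩
    | mul p q hp hq ihp ihq =>
      obtain ⟨k, hk, hk2⟩ := ihp
      obtain ⟨k', hk', hk'2⟩ := ihq
      exact ⟨k * k', mul_mem hk hk', by rw [_root_.map_mul, hk2, hk'2, ← _root_.map_mul]⟩
    | inv p hp ihp =>
      obtain ⟨k, hk, hk2⟩ := ihp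
      exact ⟨k⁻¹, inv_mem hk, by rw [_root_.map_inv, hk2, ← _root_.map_inv]⟩
  · rintro ⟨k, hk, hΦ⟩
    obtain ⟨v, hv, hv2⟩ := mem_A_exists k hk
    have hwv : w = v := Φ_injective (by rw [hΦ, hv2])
    rw [hwv]
    exact hv

/-! ### The element `u` and computation of `Φ mV` -/

noncomputable def u : FreeGroup ℤ := (FreeGroup.of (1 : ℤ))⁻¹ * FreeGroup.of 0

lemma ΦmV : Φ mV = SemidirectProduct.inl u := by
  show Φ (x₂ * x₁⁻¹ * x₂⁻¹ * x₁) = _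
  rw [_root_.map_mul, _root_.map_mul, _root_.map_mul, _root_.map_inv, _root_.map_inv, Φ_x₁, Φ_x₂]
  rw [show ((SemidirectProduct.inl (FreeGroup.of (0:ℤ)) : G2))⁻¹
      = SemidirectProduct.inl (FreeGroup.of (0:ℤ))⁻¹ from (_root_.map_inv _ _).symm]
  rw [conj_inr_inl, ← _root_.map_mul]
  simp [u]

lemma conj_inl (g : G2) (n : FreeGroup ℤ) (j : ℤ) :
    g * (SemidirectProduct.inl n) ^ j * g⁻¹
      = SemidirectProduct.inl (g.left * (shiftHom g.right n) ^ j * g.left⁻¹) := by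
  conv_lhs => rw [← SemidirectProduct.inl_left_mul_inr_right g]
  rw [show ((SemidirectProduct.inl n : G2)) ^ j = SemidirectProduct.inl (n ^ j) from
    (_root_.map_zpow _ _ _).symm]
  rw [show (shiftHom g.right n) ^ j = shiftHom g.right (n ^ j) from (_root_.map_zpow _ _ _).symm]
  calc SemidirectProduct.inl g.left * SemidirectProduct.inr g.right
        * SemidirectProduct.inl (n ^ j)
        * (SemidirectProduct.inl g.left * SemidirectProduct.inr g.right)⁻¹
      = SemidirectProduct.inl g.left * (SemidirectProduct.inr g.right
          * SemidirectProduct.inl (n ^ j) * (SemidirectProduct.inr g.right)⁻¹)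
          * (SemidirectProduct.inl g.left)⁻¹ := by group
    _ = SemidirectProduct.inl g.left * SemidirectProduct.inl (shiftHom g.right (n ^ j))
          * (SemidirectProduct.inl g.left)⁻¹ := by rw [conj_inr_inl]
    _ = _ := by rw [← _root_.map_inv, ← _root_.map_mul, ← _root_.map_mul]

/-! ### Exponent-counting homomorphisms -/

noncomputable def expAt (n₀ : ℤ) : FreeGroup ℤ →* Multiplicative ℤ :=
  FreeGroup.lift (fun n => Multiplicative.ofAdd (if n = n₀ then (1 : ℤ) else 0))

lemma expAt_A {n₀ : ℤ} (h0 : n₀ ≠ 0) (h1 : n₀ ≠ 1) {w : FreeGroup ℤ} (hw : w ∈ A) :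
    expAt n₀ w = 1 := by
  induction hw using Subgroup.closure_induction with
  | mem v hv =>
    have hv' : v = FreeGroup.of (0 : ℤ) ∨ v = FreeGroup.of (1 : ℤ) := by simpa using hv
    rcases hv' with rfl | rfl <;>
      simp [expAt, FreeGroup.lift_apply_of, if_neg (Ne.symm h0), if_neg (Ne.symm h1)]
  | one => exact _root_.map_one _
  | mul p q hp hq ihp ihq => rw [_root_.map_mul, ihp, ihq, mul_one]
  | inv p hp ihp => rw [_root_.map_inv, ihp, inv_one]

/-! ### The retraction `π` onto `A` -/

noncomputable def π : FreeGroup ℤ →* FreeGroup ℤ :=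
  FreeGroup.lift (fun n : ℤ => if n = 0 ∨ n = 1 then FreeGroup.of n else 1)

lemma π_mem (w : FreeGroup ℤ) : π w ∈ A := by
  induction w using FreeGroup.induction_on with
  | C1 => simp only [_root_.map_one]; exact one_mem _
  | of x =>
    show π (FreeGroup.of x) ∈ A
    rw [show π (FreeGroup.of x) = if x = 0 ∨ x = 1 then FreeGroup.of x else 1 from
      FreeGroup.lift_apply_of]
    split_ifs with h
    · rcases h with rfl | rfl
      · exact Subgroup.subset_closure (Set.mem_insert _ _)
      · exact Subgroup.subset_closure (by simp)
    · exact one_mem _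
  | inv_of x ih => rw [_root_.map_inv]; exact inv_mem ih
  | mul p q ihp ihq => rw [_root_.map_mul]; exact mul_mem ihp ihq

lemma π_fix {w : FreeGroup ℤ} (hw : w ∈ A) : π w = w := by
  induction hw using Subgroup.closure_induction with
  | mem v hv =>
    have hv' : v = FreeGroup.of (0 : ℤ) ∨ v = FreeGroup.of (1 : ℤ) := by simpa using hv
    rcases hv' with rfl | rfl <;> simp [π, FreeGroup.lift_apply_of]
  | one => exact _root_.map_one _
  | mul p q hp hq ihp ihq => rw [_root_.map_mul, ihp, ihq]
  | inv p hp ihp => rw [_root_.map_inv, ihp]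

lemma π_u : π u = u := by
  have h0 : π (FreeGroup.of (0 : ℤ)) = FreeGroup.of (0 : ℤ) := by simp [π, FreeGroup.lift_apply_of]
  have h1 : π (FreeGroup.of (1 : ℤ)) = FreeGroup.of (1 : ℤ) := by simp [π, FreeGroup.lift_apply_of]
  rw [u, _root_.map_mul, _root_.map_inv, h0, h1]

/-! ### The key lemma -/

lemma mV_mem : mV ∈ Uα := by
  have h1 : x₂ * x₁⁻¹ * x₂⁻¹ ∈ Uα := Subgroup.subset_closure (by simp)
  have h2 : x₁ ∈ Uα := Subgroup.subset_closure (Set.mem_insert _ _)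
  exact mul_mem h1 h2

lemma key (a : FreeGroup (Fin 2)) (j : ℤ) (hj : j ≠ 0)
    (h : a * mV ^ j * a⁻¹ ∈ Uα) : a ∈ Uα := by
  obtain ⟨k₀, hk₀A, hk₀⟩ := (mem_Uα_iff _).mp h
  set k : FreeGroup ℤ := (Φ a).left with hkdef
  set r : Multiplicative ℤ := (Φ a).right with hrdef
  set m : ℤ := Multiplicative.toAdd r with hmdef
  set v : FreeGroup ℤ := shiftHom r u with hvdef
  have hconj : Φ (a * mV ^ j * a⁻¹) = SemidirectProduct.inl (k * v ^ j * k⁻¹) := by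
    rw [_root_.map_mul, _root_.map_mul, _root_.map_inv, _root_.map_zpow, ΦmV]
    exact conj_inl (Φ a) u j
  have hkey : k * v ^ j * k⁻¹ = k₀ :=
    SemidirectProduct.inl_injective (hconj.symm.trans hk₀)
  have hv1 : v = (FreeGroup.of (1 + m))⁻¹ * FreeGroup.of m := by
    rw [hvdef, u, _root_.map_mul, _root_.map_inv, shiftHom_of, shiftHom_of]
    rw [add_comm 1 m, zero_add, add_comm m 1]
  have hEv : ∀ n₀ : ℤ, Multiplicative.toAdd (expAt n₀ v)
      = (if m = n₀ then (1 : ℤ) else 0) - (if 1 + m = n₀ then 1 else 0) := by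
    intro n₀
    rw [hv1, _root_.map_mul, _root_.map_inv]
    rw [show expAt n₀ (FreeGroup.of (1 + m))
        = Multiplicative.ofAdd (if 1 + m = n₀ then (1:ℤ) else 0) from FreeGroup.lift_apply_of]
    rw [show expAt n₀ (FreeGroup.of m)
        = Multiplicative.ofAdd (if m = n₀ then (1:ℤ) else 0) from FreeGroup.lift_apply_of]
    simp only [toAdd_mul, toAdd_inv, toAdd_ofAdd]
    ring
  have hval : ∀ n₀ : ℤ, Multiplicative.toAdd (expAt n₀ k₀)
      = j * Multiplicative.toAdd (expAt n₀ v) := by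
    intro n₀
    have e1 : expAt n₀ (k * v ^ j * k⁻¹) = expAt n₀ v ^ j := by
      rw [_root_.map_mul, _root_.map_mul, _root_.map_inv, _root_.map_zpow]
      rw [mul_comm (expAt n₀ k) (expAt n₀ v ^ j), mul_inv_cancel_right]
    rw [← hkey, e1, toAdd_zpow, smul_eq_mul]
  have h1m : 1 + m = 0 ∨ 1 + m = 1 := by
    by_contra hcon
    push_neg at hcon
    have ha := hval (1 + m)
    rw [expAt_A hcon.1 hcon.2 hk₀A, hEv] at ha
    rw [if_neg (by omega), if_pos rfl] at ha
    simp only [toAdd_one] at ha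
    omega
  have h2m : m = 0 ∨ m = 1 := by
    by_contra hcon
    push_neg at hcon
    have ha := hval m
    rw [expAt_A hcon.1 hcon.2 hk₀A, hEv] at ha
    rw [if_pos rfl, if_neg (by omega)] at ha
    simp only [toAdd_one] at ha
    omega
  have hm : m = 0 := by omega
  have hr1 : r = 1 := by
    have : Multiplicative.toAdd r = Multiplicative.toAdd (1 : Multiplicative ℤ) := by
      rw [← hmdef, hm, toAdd_one]
    exact Multiplicative.toAdd.injective this
  have hvu : v = u := by rw [hvdef, hr1, _root_.map_one]; rfl
  rw [hvu] at hkey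
  -- `u ^ j` is nontrivial
  have hEu0 : Multiplicative.toAdd (expAt 0 u) = 1 := by
    have := hEv 0
    rw [hvu, hm] at this
    rw [this]
    norm_num
  have hujne : u ^ j ≠ 1 := by
    intro hone
    have h2 := congrArg (fun w => Multiplicative.toAdd (expAt 0 w)) hone
    simp only [_root_.map_zpow, toAdd_zpow, _root_.map_one, toAdd_one, smul_eq_mul, hEu0] at h2
    omega
  -- the retraction argument
  have hπk₀ : π k₀ = k₀ := π_fix hk₀A
  have hπuj : π (u ^ j) = u ^ j := by rw [_root_.map_zpow, π_u]
  have hπ : π k * u ^ j * (π k)⁻¹ = k * u ^ j * k⁻¹ := by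
    have h3 := congrArg π hkey
    rw [_root_.map_mul, _root_.map_mul, _root_.map_inv, hπuj, hπk₀] at h3
    rw [h3, hkey]
  set c : FreeGroup ℤ := (π k)⁻¹ * k with hcdef
  have hcu : c * u ^ j = u ^ j * c := by
    have h4 : c * u ^ j * c⁻¹ = u ^ j := by
      calc c * u ^ j * c⁻¹ = (π k)⁻¹ * (k * u ^ j * k⁻¹) * π k := by rw [hcdef]; group
        _ = (π k)⁻¹ * (π k * u ^ j * (π k)⁻¹) * π k := by rw [hπ]
        _ = u ^ j := by group
    calc c * u ^ j = c * u ^ j * c⁻¹ * c := by group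
      _ = u ^ j * c := by rw [h4]
  have hπc : π c = 1 := by
    rw [hcdef, _root_.map_mul, _root_.map_inv, π_fix (π_mem k), inv_mul_cancel]
  -- the subgroup generated by `c` and `u ^ j` is free and abelian, hence `c = 1`
  have hc1 : c = 1 := by
    set H : Subgroup (FreeGroup ℤ) := Subgroup.closure {c, u ^ j} with hHdef
    have hmemc : c ∈ H := Subgroup.subset_closure (Set.mem_insert _ _)
    have hmemu : u ^ j ∈ H := Subgroup.subset_closure (by simp)
    have hab : ∀ x y : ↥H, x * y = y * x := closure_pair_comm hcu
    rcases cyclic_struct ↥H hab with htriv | ⟨z, hz1, hz2⟩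
    · exact congrArg Subtype.val (htriv ⟨c, hmemc⟩)
    · obtain ⟨p, hp⟩ := hz1 ⟨c, hmemc⟩
      obtain ⟨q, hq⟩ := hz1 ⟨u ^ j, hmemu⟩
      have hzc : c = (z : FreeGroup ℤ) ^ p := by
        have := congrArg Subtype.val hp
        rwa [SubgroupClass.coe_zpow] at this
      have hzq : u ^ j = (z : FreeGroup ℤ) ^ q := by
        have := congrArg Subtype.val hq
        rwa [SubgroupClass.coe_zpow] at this
      have hπz : (π (z : FreeGroup ℤ)) ^ p = 1 := by
        rw [← _root_.map_zpow, ← hzc, hπc]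
      rcases zpow_eq_one hπz with h1 | h0
      · exfalso
        apply hujne
        have h5 := congrArg π hzq
        rw [hπuj, _root_.map_zpow, h1, one_zpow] at h5
        exact h5
      · rw [hzc, h0, zpow_zero]
  have hk_eq : k = π k := by
    have : (π k)⁻¹ * k = 1 := by rw [← hcdef]; exact hc1
    calc k = π k * ((π k)⁻¹ * k) := by group
      _ = π k := by rw [this, mul_one]
  have hkA : k ∈ A := hk_eq ▸ π_mem k
  refine (mem_Uα_iff a).mpr ⟨k, hkA, ?_⟩
  rw [← SemidirectProduct.inl_left_mul_inr_right (Φ a), ← hkdef, ← hrdef, hr1]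
  simp

end ConjAux

/-- For any `a`, the intersection `a⟨m_V⟩a⁻¹ ∩ U_α` is either trivial or all of `a⟨m_V⟩a⁻¹`. -/
theorem conj_zpowers_mV_inter_Ualpha_dichotomy (a : FreeGroup (Fin 2)) :
    Subgroup.map ((MulAut.conj a).toMonoidHom) (Subgroup.zpowers mV) ⊓ Uα = ⊥ ∨
      Subgroup.map ((MulAut.conj a).toMonoidHom) (Subgroup.zpowers mV) ≤ Uα := by
  by_cases ha : a ∈ Uα
  · right
    rw [Subgroup.map_le_iff_le_comap, Subgroup.zpowers_le, Subgroup.mem_comap]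
    simp only [MulEquiv.coe_toMonoidHom, MulAut.conj_apply]
    exact mul_mem (mul_mem ha ConjAux.mV_mem) (inv_mem ha)
  · left
    rw [eq_bot_iff]
    intro x hx
    rw [Subgroup.mem_inf] at hx
    obtain ⟨hx1, hx2⟩ := hx
    obtain ⟨y, hy, rfl⟩ := hx1
    obtain ⟨j, rfl⟩ := Subgroup.mem_zpowers_iff.mp hy
    simp only [MulEquiv.coe_toMonoidHom, MulAut.conj_apply] at hx2 ⊢
    have hj : j = 0 := by
      by_contra hj
      exact ha (ConjAux.key a j hj hx2)
    rw [hj]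
    simp [Subgroup.mem_bot]
end
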